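/- arXiv:1201.4475 — 13 statements merged into one kernel-verified Lean document; each statement's English description precedes it below -/
import Mathlib

section
/- Let α ∈ [0,1). If f(z) = z + Σ_{n≥2} a_n z^n is holomorphic on the unit disk U ⊂ ℂ and Σ_{n≥2} n(n−α) |a_n| ≤ 1−α, then f is a convex function of order α on U, i.e., Re(1 + z f''(z)/f'(z)) > α for all z ∈ U. -/
open Metric


/-- If f(z) = z + Σ_{n≥2} a_n z^n is holomorphic on the unit disk and
Σ_{n≥2} n(n−α)|a_n| ≤ 1−α, then f is convex of order α: Re(1 + z f''(z)/f'(z)) > α. -/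
theorem stmt_1 (α : ℝ) (hα0 : 0 ≤ α) (hα1 : α < 1) (a : ℕ → ℂ) (f : ℂ → ℂ)
    (hf : ∀ z ∈ Metric.ball (0 : ℂ) 1,
      HasSum (fun n : ℕ => a n * z ^ (n + 2)) (f z - z))
    (hS : Summable (fun n : ℕ => ((n : ℝ) + 2) * (((n : ℝ) + 2) - α) * ‖a n‖))
    (hsum : ∑' n : ℕ, ((n : ℝ) + 2) * (((n : ℝ) + 2) - α) * ‖a n‖ ≤ 1 - α) :
    ∀ z ∈ Metric.ball (0 : ℂ) 1,
      α < (1 + z * deriv (deriv f) z / deriv f z).re := by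
  set c : ℕ → ℝ := fun n => ((n : ℝ) + 2) * (((n : ℝ) + 2) - α) * ‖a n‖ with hc
  set u1 : ℕ → ℝ := fun n => ((n : ℝ) + 2) * ‖a n‖ with hu1def
  set u2 : ℕ → ℝ := fun n => ((n : ℝ) + 2) * ((n : ℝ) + 1) * ‖a n‖ with hu2def
  have hn0 : ∀ n : ℕ, (0:ℝ) ≤ (n:ℝ) := fun n => Nat.cast_nonneg n
  have habs0 : ∀ n, (0:ℝ) ≤ ‖a n‖ := fun n => norm_nonneg _
  have hc0 : ∀ n, 0 ≤ c n := by
    intro n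
    have := hn0 n; have := habs0 n
    have h2 : (1:ℝ) ≤ ((n:ℝ)+2) - α := by linarith
    simp only [hc]
    exact mul_nonneg (mul_nonneg (by linarith) (by linarith)) (habs0 n)
  have h1c : ∀ n, u1 n ≤ c n := by
    intro n
    have := hn0 n; have := habs0 n
    have h2 : (1:ℝ) ≤ ((n:ℝ)+2) - α := by linarith
    show ((n:ℝ)+2) * ‖a n‖ ≤ ((n:ℝ)+2) * (((n:ℝ)+2) - α) * ‖a n‖
    have hd : (0:ℝ) ≤ (((n:ℝ)+2) * ‖a n‖) * ((((n:ℝ)+2) - α) - 1) :=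
      mul_nonneg (mul_nonneg (by linarith) (habs0 n)) (by linarith)
    nlinarith [hd]
  have h2c : ∀ n, u2 n ≤ c n := by
    intro n
    have := hn0 n; have := habs0 n
    have h2 : ((n:ℝ)+1) ≤ ((n:ℝ)+2) - α := by linarith
    show ((n:ℝ)+2) * ((n:ℝ)+1) * ‖a n‖ ≤ ((n:ℝ)+2) * (((n:ℝ)+2) - α) * ‖a n‖
    have hd : (0:ℝ) ≤ (((n:ℝ)+2) * ‖a n‖) * ((((n:ℝ)+2) - α) - ((n:ℝ)+1)) :=
      mul_nonneg (mul_nonneg (by linarith) (habs0 n)) (by linarith)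
    nlinarith [hd]
  have hu10 : ∀ n, 0 ≤ u1 n := fun n => by
    have := hn0 n; have := habs0 n; positivity
  have hu20 : ∀ n, 0 ≤ u2 n := fun n => by
    have := hn0 n; have := habs0 n; positivity
  have hu1 : Summable u1 := Summable.of_nonneg_of_le hu10 h1c hS
  have hu2 : Summable u2 := Summable.of_nonneg_of_le hu20 h2c hS
  set g : ℂ → ℂ := fun w => ∑' n : ℕ, a n * w ^ (n + 2) with hg
  set g1 : ℂ → ℂ := fun w => ∑' n : ℕ, (((n : ℂ) + 2) * a n) * w ^ (n + 1) with hg1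
  set g2 : ℂ → ℂ := fun w => ∑' n : ℕ, ((((n : ℂ) + 2) * ((n : ℂ) + 1)) * a n) * w ^ n with hg2
  have hterm1 : ∀ (n : ℕ) (w : ℂ),
      HasDerivAt (fun w => a n * w ^ (n + 2)) ((((n : ℂ) + 2) * a n) * w ^ (n + 1)) w := by
    intro n w
    have h := (hasDerivAt_pow (n + 2) w).const_mul (a n)
    refine h.congr_deriv ?_
    have : (n + 2) - 1 = n + 1 := rfl
    rw [this]; push_cast; ring
  have hterm2 : ∀ (n : ℕ) (w : ℂ),
      HasDerivAt (fun w => (((n : ℂ) + 2) * a n) * w ^ (n + 1))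
        (((((n : ℂ) + 2) * ((n : ℂ) + 1)) * a n) * w ^ n) w := by
    intro n w
    have h := (hasDerivAt_pow (n + 1) w).const_mul (((n : ℂ) + 2) * a n)
    refine h.congr_deriv ?_
    have : (n + 1) - 1 = n := rfl
    rw [this]; push_cast; ring
  have habsn2 : ∀ n : ℕ, ‖(n : ℂ) + 2‖ = (n : ℝ) + 2 := by
    intro n
    have h : ((n : ℂ) + 2) = ((((n:ℝ) + 2 : ℝ)) : ℂ) := by push_cast; ring
    rw [h, Complex.norm_real, Real.norm_eq_abs, abs_of_nonneg (by have := hn0 n; linarith)]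
  have habsn1 : ∀ n : ℕ, ‖(n : ℂ) + 1‖ = (n : ℝ) + 1 := by
    intro n
    have h : ((n : ℂ) + 1) = ((((n:ℝ) + 1 : ℝ)) : ℂ) := by push_cast; ring
    rw [h, Complex.norm_real, Real.norm_eq_abs, abs_of_nonneg (by have := hn0 n; linarith)]
  have hb1 : ∀ (n : ℕ) (w : ℂ), w ∈ ball (0:ℂ) 1 →
      ‖(((n : ℂ) + 2) * a n) * w ^ (n + 1)‖ ≤ u1 n := by
    intro n w hw
    have hwlt : ‖w‖ < 1 := by simpa [Complex.dist_eq] using hw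
    have hwle : ‖w‖ ^ (n+1) ≤ 1 :=
      pow_le_one₀ (norm_nonneg w) hwlt.le
    have : ‖(((n : ℂ) + 2) * a n) * w ^ (n + 1)‖
        = (((n:ℝ) + 2) * ‖a n‖) * ‖w‖ ^ (n+1) := by
      simp [norm_mul, norm_pow, habsn2 n]
    rw [this]
    have h0 : 0 ≤ ((n:ℝ) + 2) * ‖a n‖ := hu10 n
    calc (((n:ℝ) + 2) * ‖a n‖) * ‖w‖ ^ (n+1)
        ≤ (((n:ℝ) + 2) * ‖a n‖) * 1 := by
          exact mul_le_mul_of_nonneg_left hwle h0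
      _ = u1 n := by ring
  have hb2 : ∀ (n : ℕ) (w : ℂ), w ∈ ball (0:ℂ) 1 →
      ‖((((n : ℂ) + 2) * ((n : ℂ) + 1)) * a n) * w ^ n‖ ≤ u2 n := by
    intro n w hw
    have hwlt : ‖w‖ < 1 := by simpa [Complex.dist_eq] using hw
    have hwle : ‖w‖ ^ n ≤ 1 :=
      pow_le_one₀ (norm_nonneg w) hwlt.le
    have : ‖((((n : ℂ) + 2) * ((n : ℂ) + 1)) * a n) * w ^ n‖
        = (((n:ℝ) + 2) * ((n:ℝ)+1) * ‖a n‖) * ‖w‖ ^ n := by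
      simp [norm_mul, norm_pow, habsn2 n, habsn1 n]
    rw [this]
    have h0 : 0 ≤ ((n:ℝ) + 2) * ((n:ℝ)+1) * ‖a n‖ := hu20 n
    calc (((n:ℝ) + 2) * ((n:ℝ)+1) * ‖a n‖) * ‖w‖ ^ n
        ≤ (((n:ℝ) + 2) * ((n:ℝ)+1) * ‖a n‖) * 1 := by
          exact mul_le_mul_of_nonneg_left hwle h0
      _ = u2 n := by ring
  have hconn : IsPreconnected (ball (0:ℂ) 1) := (convex_ball (0:ℂ) 1).isPreconnected
  have h0mem : (0:ℂ) ∈ ball (0:ℂ) 1 := mem_ball_self one_pos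
  have hg1d : ∀ w ∈ ball (0:ℂ) 1, HasDerivAt g (g1 w) w := by
    intro w hw
    exact hasDerivAt_tsum_of_isPreconnected hu1 isOpen_ball hconn
      (fun n y _ => hterm1 n y) hb1 h0mem
      (by simpa [pow_succ] using summable_zero) hw
  have hg2d : ∀ w ∈ ball (0:ℂ) 1, HasDerivAt g1 (g2 w) w := by
    intro w hw
    exact hasDerivAt_tsum_of_isPreconnected hu2 isOpen_ball hconn
      (fun n y _ => hterm2 n y) hb2 h0mem
      (by simpa [pow_succ] using summable_zero) hw
  have hfg : ∀ w ∈ ball (0:ℂ) 1, f w = w + g w := by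
    intro w hw
    have h := (hf w hw).tsum_eq
    simp only [hg]
    rw [h]; ring
  have hdf : ∀ w ∈ ball (0:ℂ) 1, HasDerivAt f (1 + g1 w) w := by
    intro w hw
    have h1 : HasDerivAt (fun u : ℂ => u + g u) (1 + g1 w) w :=
      (hasDerivAt_id w).add (hg1d w hw)
    exact h1.congr_of_eventuallyEq
      (Filter.eventuallyEq_of_mem (isOpen_ball.mem_nhds hw) hfg)
  have hdf_eq : ∀ w ∈ ball (0:ℂ) 1, deriv f w = 1 + g1 w := fun w hw => (hdf w hw).deriv
  intro z hz
  have hr1 : ‖z‖ < 1 := by simpa [Complex.dist_eq] using hz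
  set r : ℝ := ‖z‖ with hrdef
  have hr0 : 0 ≤ r := norm_nonneg z
  have hddf : deriv (deriv f) z = g2 z := by
    have hev : deriv f =ᶠ[nhds z] fun w => 1 + g1 w :=
      Filter.eventuallyEq_of_mem (isOpen_ball.mem_nhds hz) hdf_eq
    rw [hev.deriv_eq]
    exact ((hg2d z hz).const_add 1).deriv
  rw [hddf, hdf_eq z hz]
  -- norm bounds
  have hsum_norm1 : Summable (fun n : ℕ => ‖(((n : ℂ) + 2) * a n) * z ^ (n + 1)‖) :=
    Summable.of_nonneg_of_le (fun n => norm_nonneg _) (fun n => hb1 n z hz) hu1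
  have hsum_norm2 : Summable (fun n : ℕ => ‖((((n : ℂ) + 2) * ((n : ℂ) + 1)) * a n) * z ^ n‖) :=
    Summable.of_nonneg_of_le (fun n => norm_nonneg _) (fun n => hb2 n z hz) hu2
  have hnorm1eq : ∀ n : ℕ, ‖(((n : ℂ) + 2) * a n) * z ^ (n + 1)‖ = u1 n * r ^ (n+1) := by
    intro n
    simp only [norm_mul, norm_pow, habsn2 n, hu1def, ← hrdef]
    try ring
  have hnorm2eq : ∀ n : ℕ, ‖((((n : ℂ) + 2) * ((n : ℂ) + 1)) * a n) * z ^ n‖ = u2 n * r ^ n := by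
    intro n
    simp only [norm_mul, norm_pow, habsn2 n, habsn1 n, hu2def, ← hrdef]
    try ring
  have hsum_b1 : Summable (fun n => u1 n * r ^ (n+1)) := by
    refine Summable.of_nonneg_of_le (fun n => by positivity) (fun n => ?_) hu1
    calc u1 n * r ^ (n+1) ≤ u1 n * 1 :=
          mul_le_mul_of_nonneg_left (pow_le_one₀ hr0 hr1.le) (hu10 n)
      _ = u1 n := by ring
  have hsum_b2 : Summable (fun n => u2 n * r ^ (n+1)) := by
    refine Summable.of_nonneg_of_le (fun n => by positivity) (fun n => ?_) hu2
    calc u2 n * r ^ (n+1) ≤ u2 n * 1 :=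
          mul_le_mul_of_nonneg_left (pow_le_one₀ hr0 hr1.le) (hu20 n)
      _ = u2 n := by ring
  have hA : ‖g1 z‖ ≤ ∑' n, u1 n * r ^ (n+1) := by
    have h := norm_tsum_le_tsum_norm hsum_norm1
    calc ‖g1 z‖ ≤ ∑' n : ℕ, ‖(((n : ℂ) + 2) * a n) * z ^ (n + 1)‖ := h
      _ = ∑' n, u1 n * r ^ (n+1) := by exact tsum_congr hnorm1eq
  have hB : ‖z * g2 z‖ ≤ ∑' n, u2 n * r ^ (n+1) := by
    have h := norm_tsum_le_tsum_norm hsum_norm2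
    have h2 : ‖g2 z‖ ≤ ∑' n, u2 n * r ^ n := by
      calc ‖g2 z‖
          ≤ ∑' n : ℕ, ‖((((n : ℂ) + 2) * ((n : ℂ) + 1)) * a n) * z ^ n‖ := h
        _ = ∑' n, u2 n * r ^ n := tsum_congr hnorm2eq
    have hsum2' : Summable (fun n => u2 n * r ^ n) := by
      refine Summable.of_nonneg_of_le (fun n => by positivity) (fun n => ?_) hu2
      calc u2 n * r ^ n ≤ u2 n * 1 :=
            mul_le_mul_of_nonneg_left (pow_le_one₀ hr0 hr1.le) (hu20 n)
        _ = u2 n := by ring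
    calc ‖z * g2 z‖ = r * ‖g2 z‖ := by
          rw [norm_mul, ← hrdef]
      _ ≤ r * ∑' n, u2 n * r ^ n := mul_le_mul_of_nonneg_left h2 hr0
      _ = ∑' n, u2 n * r ^ (n+1) := by
          rw [← tsum_mul_left]
          exact tsum_congr fun n => by ring
  -- key combined bound
  have hsum_bc : Summable (fun n => c n * r ^ (n+1)) := by
    refine Summable.of_nonneg_of_le (fun n => by have := hc0 n; positivity) (fun n => ?_) hS
    calc c n * r ^ (n+1) ≤ c n * 1 :=
          mul_le_mul_of_nonneg_left (pow_le_one₀ hr0 hr1.le) (hc0 n)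
      _ = c n := by ring
  have hkey : (∑' n, u2 n * r ^ (n+1)) + (1 - α) * ∑' n, u1 n * r ^ (n+1)
      ≤ r * (1 - α) := by
    have e1 : (∑' n, u2 n * r ^ (n+1)) + (1 - α) * ∑' n, u1 n * r ^ (n+1)
        = ∑' n, c n * r ^ (n+1) := by
      rw [← tsum_mul_left, ← Summable.tsum_add hsum_b2 (hsum_b1.mul_left (1 - α))]
      refine tsum_congr fun n => ?_
      simp only [hu1def, hu2def, hc]
      ring
    rw [e1]
    calc (∑' n, c n * r ^ (n+1)) ≤ ∑' n, r * c n := by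
          refine Summable.tsum_le_tsum (fun n => ?_) hsum_bc (hS.mul_left r)
          have hp : r ^ (n+1) ≤ r := by
            calc r ^ (n+1) ≤ r ^ 1 :=
                  pow_le_pow_of_le_one hr0 hr1.le (by omega)
              _ = r := pow_one r
          calc c n * r ^ (n+1) ≤ c n * r := mul_le_mul_of_nonneg_left hp (hc0 n)
            _ = r * c n := by ring
      _ = r * ∑' n, c n := tsum_mul_left
      _ ≤ r * (1 - α) := mul_le_mul_of_nonneg_left hsum hr0
  have hα' : (0:ℝ) < 1 - α := by linarith
  have hAr : ‖g1 z‖ < 1 := by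
    have h2 : (0:ℝ) ≤ ∑' n, u2 n * r ^ (n+1) :=
      tsum_nonneg (fun n => by positivity)
    have h1 : (1 - α) * (∑' n, u1 n * r ^ (n+1)) ≤ (1 - α) * r := by nlinarith [hkey]
    have h3 : (∑' n, u1 n * r ^ (n+1)) ≤ r := le_of_mul_le_mul_left h1 hα'
    calc ‖g1 z‖ ≤ ∑' n, u1 n * r ^ (n+1) := hA
      _ ≤ r := h3
      _ < 1 := hr1
  have hDpos : 0 < ‖1 + g1 z‖ := by
    have h := norm_sub_norm_le (1 : ℂ) (-(g1 z))
    simp only [sub_neg_eq_add, norm_neg, norm_one] at h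
    linarith
  have hWD : ‖z * g2 z‖ < (1 - α) * ‖1 + g1 z‖ := by
    have hDge : 1 - ‖g1 z‖ ≤ ‖1 + g1 z‖ := by
      have h := norm_sub_norm_le (1 : ℂ) (-(g1 z))
      simp only [sub_neg_eq_add, norm_neg, norm_one] at h
      linarith
    have hcomb : ‖z * g2 z‖ + (1 - α) * ‖g1 z‖ < 1 - α := by
      have := add_le_add hB (mul_le_mul_of_nonneg_left hA hα'.le)
      have hrlt : r * (1 - α) < 1 - α := by nlinarith
      linarith [hkey]
    nlinarith [norm_nonneg (g1 z), mul_le_mul_of_nonneg_left hDge hα'.le]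
  -- final arithmetic
  set W := z * g2 z
  set D := 1 + g1 z
  have hre : -(‖W / D‖) ≤ (W / D).re := by
    have h := Complex.abs_re_le_norm (W / D)
    cases' abs_le.mp h with h1 h2
    linarith
  have habsdiv : ‖W / D‖ < 1 - α := by
    rw [norm_div]
    rw [div_lt_iff₀ hDpos]
    exact hWD
  have : (1 + W / D).re = 1 + (W / D).re := by
    simp [Complex.add_re]
  rw [this]
  linarith
end

section
/- Let α ∈ [0,1). If f(z) = z + Σ_{n≥2} a_n z^n is holomorphic on the unit disk U ⊂ ℂ and Σ_{n≥2} (n−α) |a_n| ≤ 1−α, then f is starlike of order α, i.e., Re(z f'(z)/f(z)) > α for all z ∈ U \ {0}. -/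
/-- If f(z) = z + Σ_{n≥2} a_n z^n is holomorphic on the unit disk and
Σ_{n≥2} (n−α)|a_n| ≤ 1−α, then f is starlike of order α: Re(z f'(z)/f(z)) > α on U \ {0}. -/
theorem stmt_2 (α : ℝ) (hα0 : 0 ≤ α) (hα1 : α < 1) (a : ℕ → ℂ) (f : ℂ → ℂ)
    (hf : ∀ z ∈ Metric.ball (0 : ℂ) 1,
      HasSum (fun n : ℕ => a n * z ^ (n + 2)) (f z - z))
    (hS : Summable (fun n : ℕ => (((n : ℝ) + 2) - α) * ‖a n‖))
    (hsum : ∑' n : ℕ, (((n : ℝ) + 2) - α) * ‖a n‖ ≤ 1 - α) :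
    ∀ z ∈ Metric.ball (0 : ℂ) 1, z ≠ 0 →
      α < (z * deriv f z / f z).re := by
  intro z hz hz0
  set r : ℝ := ‖z‖ with hr_def
  have hr1 : r < 1 := by simpa [Complex.dist_eq] using hz
  have hr0 : 0 < r := by simpa [hr_def] using norm_pos_iff.mpr hz0
  have hA_nonneg : ∀ n, (0:ℝ) ≤ ‖a n‖ := fun n => norm_nonneg _
  have h2α : ∀ n : ℕ, (1:ℝ) ≤ ((n:ℝ) + 2) - α := by
    intro n
    have : (0:ℝ) ≤ (n:ℝ) := n.cast_nonneg
    linarith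
  -- summability of |a n| and (n+2)|a n|
  have hA : Summable (fun n => ‖a n‖) := by
    refine hS.of_nonneg_of_le (fun n => hA_nonneg n) (fun n => ?_)
    nlinarith [hA_nonneg n, h2α n]
  have hN : Summable (fun n : ℕ => ((n:ℝ) + 2) * ‖a n‖) := by
    have h := hS.add (hA.mul_left α)
    refine h.congr (fun n => ?_)
    ring
  -- derivative of f at z
  set R : ℝ := (r + 1) / 2 with hR_def
  have hR0 : 0 < R := by positivity
  have hR1 : R < 1 := by simp only [hR_def]; linarith
  have hrR : r < R := by simp only [hR_def]; linarith
  set g : ℕ → ℂ → ℂ := fun n y => a n * y ^ (n + 2) with hg_def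
  set g' : ℕ → ℂ → ℂ := fun n y => a n * (((n:ℂ) + 2) * y ^ (n + 1)) with hg'_def
  have hg : ∀ n y, HasDerivAt (g n) (g' n y) y := by
    intro n y
    have h := (hasDerivAt_pow (n + 2) y).const_mul (a n)
    simp only [hg_def, hg'_def]
    refine h.congr_deriv ?_
    rw [show n + 2 - 1 = n + 1 by omega]
    push_cast
    ring_nf
  have hg'bound : ∀ n y, y ∈ Metric.ball (0:ℂ) R →
      ‖g' n y‖ ≤ ((n:ℝ) + 2) * ‖a n‖ := by
    intro n y hy
    have hyR : ‖y‖ < R := by simpa [Complex.dist_eq] using hy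
    have hy1 : ‖y‖ ≤ 1 := le_of_lt (lt_trans hyR hR1)
    have hypow : ‖y‖ ^ (n + 1) ≤ 1 :=
      pow_le_one₀ (norm_nonneg y) hy1
    have : ‖g' n y‖ = ‖a n‖ * (‖(n:ℂ) + 2‖ * ‖y‖ ^ (n + 1)) := by
      simp [hg'_def, norm_mul, norm_pow]
    rw [this]
    have habs : ‖(n:ℂ) + 2‖ = (n:ℝ) + 2 := by
      have : ((n:ℂ) + 2) = (((n:ℝ) + 2 : ℝ) : ℂ) := by push_cast; ring
      rw [this, Complex.norm_real, Real.norm_eq_abs, abs_of_nonneg (by positivity)]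
    rw [habs]
    calc ‖a n‖ * (((n:ℝ) + 2) * ‖y‖ ^ (n + 1))
        ≤ ‖a n‖ * (((n:ℝ) + 2) * 1) := by
          refine mul_le_mul_of_nonneg_left ?_ (hA_nonneg n)
          exact mul_le_mul_of_nonneg_left hypow (by positivity)
      _ = ((n:ℝ) + 2) * ‖a n‖ := by ring
  have h0R : (0:ℂ) ∈ Metric.ball (0:ℂ) R := by simpa using hR0
  have hzR : z ∈ Metric.ball (0:ℂ) R := by simpa [Complex.dist_eq] using hrR
  have hg0 : Summable (fun n => g n (0:ℂ)) := by
    refine summable_zero.congr (fun n => ?_)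
    simp [hg_def]
  have hD : HasDerivAt (fun y => ∑' n, g n y) (∑' n, g' n z) z :=
    hasDerivAt_tsum_of_isPreconnected hN Metric.isOpen_ball
      (convex_ball (0:ℂ) R).isPreconnected (fun n y _ => hg n y)
      (fun n y hy => hg'bound n y hy) h0R hg0 hzR
  -- f agrees with y + tsum near z, hence same derivative
  have heq : f =ᶠ[nhds z] fun y => y + ∑' n, g n y := by
    filter_upwards [Metric.isOpen_ball.mem_nhds hz] with y hy
    have h := (hf y hy).tsum_eq
    simp only [hg_def]
    rw [h]; ring
  have hF : HasDerivAt f (1 + ∑' n, g' n z) z :=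
    ((hasDerivAt_id z).add hD).congr_of_eventuallyEq heq
  have hderiv : deriv f z = 1 + ∑' n, g' n z := hF.deriv
  set D : ℂ := ∑' n, g' n z with hD_def
  have hsumS : Summable (fun n => g n z) := (hf z hz).summable
  have hS_eq : ∑' n, g n z = f z - z := (hf z hz).tsum_eq
  have hsumD : Summable (fun n => g' n z) :=
    Summable.of_norm_bounded hN (fun n => hg'bound n z hzR)
  -- real auxiliary series
  set u1 : ℕ → ℝ := fun n => ‖a n‖ * r ^ (n + 1) with hu1_def
  set u2 : ℕ → ℝ := fun n => ((n:ℝ) + 1) * (‖a n‖ * r ^ (n + 1)) with hu2_def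
  have hrpow1 : ∀ n : ℕ, r ^ (n + 1) ≤ 1 := fun n =>
    pow_le_one₀ hr0.le hr1.le
  have hrpowr : ∀ n : ℕ, r ^ (n + 1) ≤ r := by
    intro n
    have := pow_le_pow_of_le_one hr0.le hr1.le (show 1 ≤ n + 1 by omega)
    simpa using this
  have hu1 : Summable u1 := by
    refine hN.of_nonneg_of_le (fun n => by positivity) (fun n => ?_)
    simp only [hu1_def]
    have hc : (0:ℝ) ≤ (n:ℝ) := Nat.cast_nonneg n
    nlinarith [hA_nonneg n, hrpow1 n, pow_nonneg hr0.le (n+1),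
      mul_le_mul_of_nonneg_left (hrpow1 n) (hA_nonneg n)]
  have hu2 : Summable u2 := by
    refine hN.of_nonneg_of_le (fun n => by positivity) (fun n => ?_)
    simp only [hu2_def]
    have h1 : ‖a n‖ * r ^ (n + 1) ≤ ‖a n‖ * 1 :=
      mul_le_mul_of_nonneg_left (hrpow1 n) (hA_nonneg n)
    have hc : (0:ℝ) ≤ (n:ℝ) := Nat.cast_nonneg n
    nlinarith [hA_nonneg n, hc, h1, mul_le_mul_of_nonneg_left h1 hc]
  set P : ℝ := ∑' n, u1 n with hP_def
  set Q : ℝ := ∑' n, u2 n with hQ_def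
  -- the key coefficient inequality
  have hQP : Q + (1 - α) * P ≤ r * (1 - α) := by
    have hterm : ∀ n, u2 n + (1 - α) * u1 n ≤ r * ((((n:ℝ) + 2) - α) * ‖a n‖) := by
      intro n
      have h1 : (((n:ℝ) + 2) - α) * ‖a n‖ * r ^ (n + 1)
          ≤ (((n:ℝ) + 2) - α) * ‖a n‖ * r := by
        refine mul_le_mul_of_nonneg_left (hrpowr n) ?_
        have := h2α n
        nlinarith [hA_nonneg n]
      simp only [hu1_def, hu2_def]
      nlinarith [h1]
    have h2 : Summable (fun n => u2 n + (1 - α) * u1 n) := hu2.add (hu1.mul_left (1 - α))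
    have h3 := Summable.tsum_le_tsum hterm h2 (hS.mul_left r)
    rw [Summable.tsum_add hu2 (hu1.mul_left (1 - α)), tsum_mul_left, tsum_mul_left] at h3
    have h4 : r * ∑' n : ℕ, (((n:ℝ) + 2) - α) * ‖a n‖ ≤ r * (1 - α) :=
      mul_le_mul_of_nonneg_left hsum hr0.le
    calc Q + (1 - α) * P ≤ r * ∑' n : ℕ, (((n:ℝ) + 2) - α) * ‖a n‖ := h3
      _ ≤ r * (1 - α) := h4
  -- bound on |f z|
  have habs_cast : ∀ n : ℕ, ‖(n:ℂ) + 1‖ = (n:ℝ) + 1 := by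
    intro n
    have h : ((n:ℂ) + 1) = (((n:ℝ) + 1 : ℝ) : ℂ) := by push_cast; ring
    rw [h, Complex.norm_real, Real.norm_eq_abs, abs_of_nonneg (by positivity)]
  have hgnorm : ∀ n, ‖g n z‖ = r * u1 n := by
    intro n
    simp only [hg_def, hu1_def, norm_mul, norm_pow, ← hr_def]
    ring
  have hfzb : r - r * P ≤ ‖f z‖ := by
    have h1 : ‖(f z - z : ℂ)‖ ≤ ∑' n, ‖g n z‖ := by
      rw [← hS_eq]
      exact norm_tsum_le_tsum_norm (by simpa [hgnorm] using hu1.mul_left r)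
    have h2 : ∑' n, ‖g n z‖ = r * P := by
      simp only [hgnorm]; rw [tsum_mul_left]
    have h3 : ‖z‖ ≤ ‖f z‖ + ‖f z - z‖ := by
      calc ‖z‖ = ‖f z - (f z - z)‖ := by ring_nf
        _ ≤ ‖f z‖ + ‖f z - z‖ := norm_sub_le _ _
    rw [h2] at h1
    simp only [← hr_def] at h1 h3
    linarith
  -- the quantity T = z f'(z) - f(z)
  set T : ℂ := ∑' n, (z * g' n z - g n z) with hT_def
  have hT_eq : z * deriv f z - f z = T := by
    have ht : T = z * D - (f z - z) := by
      rw [hT_def, Summable.tsum_sub (hsumD.mul_left z) hsumS, tsum_mul_left, hS_eq, hD_def]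
    rw [hderiv, ht]; ring
  have hTnorm : ∀ n, ‖z * g' n z - g n z‖ = r * u2 n := by
    intro n
    have h : z * g' n z - g n z = ((n:ℂ) + 1) * a n * z ^ (n + 2) := by
      simp only [hg_def, hg'_def]; ring
    rw [h]
    simp only [norm_mul, norm_pow, habs_cast, ← hr_def, hu2_def]
    ring
  have hTb : ‖T‖ ≤ r * Q := by
    have h1 : ‖T‖ ≤ ∑' n, ‖z * g' n z - g n z‖ :=
      norm_tsum_le_tsum_norm (by simpa [hTnorm] using hu2.mul_left r)
    have h2 : ∑' n, ‖z * g' n z - g n z‖ = r * Q := by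
      simp only [hTnorm]; rw [tsum_mul_left]
    rw [h2] at h1
    simpa using h1
  -- strict inequality |T| < (1-α)|f z|
  have hTlt : ‖T‖ < (1 - α) * ‖f z‖ := by
    have h2 : r * Q + r * ((1 - α) * P) ≤ r * (r * (1 - α)) := by
      nlinarith [mul_le_mul_of_nonneg_left hQP hr0.le]
    have h3 : r * (r * (1 - α)) < r * (1 - α) := by
      nlinarith [mul_pos (mul_pos hr0 (sub_pos.mpr hα1)) (sub_pos.mpr hr1)]
    have h4 : (1 - α) * (r - r * P) ≤ (1 - α) * ‖f z‖ :=
      mul_le_mul_of_nonneg_left hfzb (by linarith)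
    nlinarith [hTb]
  have habs_pos : 0 < ‖f z‖ := by
    nlinarith [norm_nonneg T]
  have hfz0 : f z ≠ 0 := by
    intro h
    rw [h] at habs_pos
    simp at habs_pos
  -- conclude
  have hw : z * deriv f z / f z = 1 + T / f z := by
    field_simp
    linear_combination hT_eq
  rw [hw]
  have h4 : ‖T / f z‖ < 1 - α := by
    rw [norm_div, div_lt_iff₀ habs_pos]
    linarith
  have h5 := Complex.abs_re_le_norm (T / f z)
  have h6 := neg_abs_le (T / f z).re
  simp only [Complex.add_re, Complex.one_re]
  linarith [h5, h6, h4]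
end

section
/- Let X be a complex Hilbert space, B its open unit ball, α ∈ [0,1), and f : B → X a locally biholomorphic mapping. If ‖Df(z)⁻¹ D²f(z)(x,x)‖ ≤ 1−α for all z ∈ B \ {0} and all x ∈ X with ‖x‖ = 1 and Re⟨x,z⟩ = 0, then f is a biholomorphic convex mapping of order α on B, i.e., ‖x‖² − Re⟨Df(z)⁻¹ D²f(z)(x,x), z⟩ > α‖x‖² for all z ∈ B \ {0} and x ∈ X \ {0} with Re⟨x,z⟩ = 0. -/
/-- If ‖Df(z)⁻¹ D²f(z)(x,x)‖ ≤ 1−α for all z ∈ B \ {0} and unit vectors x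
with Re⟨x,z⟩ = 0, then f is a biholomorphic convex mapping of order α on B. -/
theorem stmt_3 {X : Type*} [NormedAddCommGroup X] [InnerProductSpace ℂ X] [CompleteSpace X]
    (α : ℝ) (hα0 : 0 ≤ α) (hα1 : α < 1) (f : X → X)
    (hdiff : ∀ z ∈ Metric.ball (0 : X) 1, DifferentiableAt ℂ f z)
    (hdiff2 : ∀ z ∈ Metric.ball (0 : X) 1, DifferentiableAt ℂ (fderiv ℂ f) z)
    (hloc : ∀ z ∈ Metric.ball (0 : X) 1, ∃ g : X →L[ℂ] X,
      (fderiv ℂ f z).comp g = ContinuousLinearMap.id ℂ X ∧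
      g.comp (fderiv ℂ f z) = ContinuousLinearMap.id ℂ X)
    (hbound : ∀ z ∈ Metric.ball (0 : X) 1, z ≠ 0 → ∀ x : X, ‖x‖ = 1 →
      (inner ℂ x z : ℂ).re = 0 →
      ∀ g : X →L[ℂ] X,
        (fderiv ℂ f z).comp g = ContinuousLinearMap.id ℂ X →
        g.comp (fderiv ℂ f z) = ContinuousLinearMap.id ℂ X →
        ‖g (fderiv ℂ (fderiv ℂ f) z x x)‖ ≤ 1 - α) :
    ∀ z ∈ Metric.ball (0 : X) 1, z ≠ 0 → ∀ x : X, x ≠ 0 →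
      (inner ℂ x z : ℂ).re = 0 →
      ∀ g : X →L[ℂ] X,
        (fderiv ℂ f z).comp g = ContinuousLinearMap.id ℂ X →
        g.comp (fderiv ℂ f z) = ContinuousLinearMap.id ℂ X →
      α * ‖x‖ ^ 2 < ‖x‖ ^ 2 - (inner ℂ (g (fderiv ℂ (fderiv ℂ f) z x x)) z : ℂ).re := by
  intro z hz hz0 x hx0 horth g hg1 hg2
  set c : ℝ := ‖x‖ with hc
  have hcpos : 0 < c := norm_pos_iff.mpr hx0
  have hcne : (c : ℂ) ≠ 0 := by exact_mod_cast hcpos.ne'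
  set u : X := ((c : ℂ)⁻¹) • x with hu
  have hxu : x = (c : ℂ) • u := by
    rw [hu, smul_smul, mul_inv_cancel₀ hcne, one_smul]
  have hunorm : ‖u‖ = 1 := by
    rw [hu, norm_smul]
    simp [norm_inv, Complex.norm_real, abs_of_pos hcpos]
    field_simp
    exact hc.symm
  have huorth : (inner ℂ u z : ℂ).re = 0 := by
    rw [hu, inner_smul_left]
    simp only [map_inv₀, Complex.conj_ofReal, Complex.mul_re, Complex.inv_re,
      Complex.inv_im, Complex.ofReal_re, Complex.ofReal_im]
    have : (inner ℂ x z : ℂ).re = 0 := horth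
    simp [this, Complex.normSq_ofReal]
  have hb := hbound z hz hz0 u hunorm huorth g hg1 hg2
  set w : X := g (fderiv ℂ (fderiv ℂ f) z u u) with hw
  have hkey : g (fderiv ℂ (fderiv ℂ f) z x x) = ((c : ℂ) ^ 2) • w := by
    rw [hxu]
    simp only [map_smul, ContinuousLinearMap.smul_apply, smul_smul]
    rw [sq]
  have hre : (inner ℂ (g (fderiv ℂ (fderiv ℂ f) z x x)) z : ℂ).re
      = c ^ 2 * (inner ℂ w z : ℂ).re := by
    rw [hkey, inner_smul_left, ← Complex.ofReal_pow, Complex.conj_ofReal]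
    simp only [Complex.mul_re, Complex.ofReal_re, Complex.ofReal_im, zero_mul, sub_zero]
  have hzlt : ‖z‖ < 1 := by simpa using hz
  have hineq : (inner ℂ w z : ℂ).re < 1 - α := by
    have h1 : (inner ℂ w z : ℂ).re ≤ ‖w‖ * ‖z‖ := by
      calc (inner ℂ w z : ℂ).re ≤ ‖(inner ℂ w z : ℂ)‖ := Complex.re_le_norm _
        _ ≤ ‖w‖ * ‖z‖ := norm_inner_le_norm w z
    have h2 : ‖w‖ * ‖z‖ < 1 - α := by
      rcases eq_or_lt_of_le (norm_nonneg w) with h | h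
      · rw [← h]; simpa using (by linarith : (0:ℝ) < 1 - α)
      · calc ‖w‖ * ‖z‖ ≤ (1 - α) * ‖z‖ := by
              apply mul_le_mul_of_nonneg_right hb (norm_nonneg z)
          _ < (1 - α) * 1 := by
              apply mul_lt_mul_of_pos_left hzlt (by linarith)
          _ = 1 - α := mul_one _
    linarith
  rw [hre]
  have hc2 : (0:ℝ) < c ^ 2 := by positivity
  nlinarith [mul_lt_mul_of_pos_left hineq hc2]
end

section
/- Let X be a complex Hilbert space with unit ball B, α ∈ [0,1), c < 1, and f : B → X locally biholomorphic with ‖Df(z) − I‖ ≤ c for all z ∈ B. If ‖D²f(z)(x,x)‖ ≤ (1−c)(1−α) for all x ∈ X with ‖x‖ = 1 and all z ∈ B \ {0} with Re⟨x,z⟩ = 0, then f is a biholomorphic convex mapping of order α on B. -/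
/-- If ‖Df(z) − I‖ ≤ c < 1 on B and ‖D²f(z)(x,x)‖ ≤ (1−c)(1−α) for unit x,
z ∈ B \ {0} with Re⟨x,z⟩ = 0, then f is a biholomorphic convex mapping of order α on B. -/
theorem stmt_4 {X : Type*} [NormedAddCommGroup X] [InnerProductSpace ℂ X] [CompleteSpace X]
    (α : ℝ) (hα0 : 0 ≤ α) (hα1 : α < 1) (c : ℝ) (hc : c < 1) (f : X → X)
    (hdiff : ∀ z ∈ Metric.ball (0 : X) 1, DifferentiableAt ℂ f z)
    (hdiff2 : ∀ z ∈ Metric.ball (0 : X) 1, DifferentiableAt ℂ (fderiv ℂ f) z)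
    (hI : ∀ z ∈ Metric.ball (0 : X) 1,
      ‖fderiv ℂ f z - ContinuousLinearMap.id ℂ X‖ ≤ c)
    (hbound : ∀ x : X, ‖x‖ = 1 → ∀ z ∈ Metric.ball (0 : X) 1, z ≠ 0 →
      (inner ℂ x z : ℂ).re = 0 →
      ‖fderiv ℂ (fderiv ℂ f) z x x‖ ≤ (1 - c) * (1 - α)) :
    ∀ z ∈ Metric.ball (0 : X) 1, z ≠ 0 → ∀ x : X, x ≠ 0 →
      (inner ℂ x z : ℂ).re = 0 →
      ∀ g : X →L[ℂ] X,
        (fderiv ℂ f z).comp g = ContinuousLinearMap.id ℂ X →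
        g.comp (fderiv ℂ f z) = ContinuousLinearMap.id ℂ X →
        α * ‖x‖ ^ 2 < ‖x‖ ^ 2 - (inner ℂ (g (fderiv ℂ (fderiv ℂ f) z x x)) z : ℂ).re := by
  intro z hz hz0 x hx0 hortho g hg1 hg2
  set F := fderiv ℂ f z with hF
  set D := fderiv ℂ (fderiv ℂ f) z with hD
  have hc' : (0:ℝ) < 1 - c := by linarith
  have hxpos : (0:ℝ) < ‖x‖ := norm_pos_iff.mpr hx0
  have hxne : (‖x‖ : ℝ) ≠ 0 := ne_of_gt hxpos
  set u : X := ((‖x‖⁻¹ : ℝ) : ℂ) • x with hu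
  have hun : ‖u‖ = 1 := by
    rw [hu, norm_smul]
    simp [abs_of_pos hxpos, inv_mul_cancel₀ hxne]
  have huz : (inner ℂ u z : ℂ).re = 0 := by
    rw [hu, inner_smul_left]
    simp [hortho]
  have hb := hbound u hun z hz hz0 huz
  have huu : D u u = ((‖x‖⁻¹ : ℝ) : ℂ) • ((‖x‖⁻¹ : ℝ) : ℂ) • D x x := by
    simp [hu]
  have hnuu : ‖D u u‖ = ‖x‖⁻¹ * (‖x‖⁻¹ * ‖D x x‖) := by
    rw [huu, norm_smul, norm_smul]
    simp [abs_of_pos hxpos]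
  have hDb : ‖D x x‖ ≤ ‖x‖ ^ 2 * ((1 - c) * (1 - α)) := by
    rw [hnuu] at hb
    have h := mul_le_mul_of_nonneg_left hb (le_of_lt (mul_pos hxpos hxpos))
    have hid : ‖x‖ * ‖x‖ * (‖x‖⁻¹ * (‖x‖⁻¹ * ‖D x x‖)) = ‖D x x‖ := by
      field_simp
    rw [hid] at h
    nlinarith
  -- bound on g
  have hgb : (1 - c) * ‖g (D x x)‖ ≤ ‖D x x‖ := by
    set y := D x x
    have h1 : F (g y) = y := by
      have := congrArg (fun T : X →L[ℂ] X => T y) hg1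
      simpa using this
    have h2 : ‖(F - ContinuousLinearMap.id ℂ X) (g y)‖ ≤ c * ‖g y‖ :=
      ContinuousLinearMap.le_of_opNorm_le _ (hI z hz) _
    have h3 : (F - ContinuousLinearMap.id ℂ X) (g y) = y - g y := by
      simp [h1]
    have h4 : ‖g y‖ - ‖y‖ ≤ ‖g y - y‖ := norm_sub_norm_le _ _
    rw [h3] at h2
    rw [norm_sub_rev] at h4
    linarith
  have hRe : (inner ℂ (g (D x x)) z : ℂ).re ≤ ‖g (D x x)‖ * ‖z‖ := by
    refine (Complex.re_le_norm _).trans ?_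
    exact norm_inner_le_norm _ _
  have hz1 : ‖z‖ < 1 := by simpa [Metric.mem_ball] using hz
  have hM : ‖g (D x x)‖ ≤ ‖x‖ ^ 2 * (1 - α) := by
    have h2 : ‖x‖ ^ 2 * ((1 - c) * (1 - α)) = (1 - c) * (‖x‖ ^ 2 * (1 - α)) := by ring
    exact le_of_mul_le_mul_left (by linarith [hgb.trans hDb]) hc'
  have hMpos : (0:ℝ) < ‖x‖ ^ 2 * (1 - α) := mul_pos (pow_pos hxpos 2) (by linarith)
  have hlt : ‖x‖ ^ 2 * (1 - α) * ‖z‖ < ‖x‖ ^ 2 * (1 - α) :=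
    mul_lt_of_lt_one_right hMpos hz1
  linarith [hRe, mul_le_mul_of_nonneg_right hM (norm_nonneg z), hlt]
end

section
/- Let X be a complex Hilbert space with unit ball B, α ∈ [0,1), and f(z) = z + Σ_{k≥2} A_k(z^k) a holomorphic mapping on B, where each A_k is a bounded symmetric k-linear operator. If Σ_{k≥2} k(k−α) ‖A_k‖ ≤ 1−α, then f ∈ K(B,α), i.e., f is a biholomorphic convex mapping of order α on B. -/
open ContinuousMultilinearMap Function Metric

section aux
set_option linter.unusedSectionVars false
variable {X F : Type*} [NormedAddCommGroup X] [NormedSpace ℂ X]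
  [NormedAddCommGroup F] [NormedSpace ℂ F]

lemma aux_prod_update {n : ℕ} (z x : X) (i : Fin (n+1)) :
    ∏ j, ‖Function.update (fun _ : Fin (n+1) => z) i x j‖ = ‖x‖ * ‖z‖ ^ n := by
  have : (fun j => ‖Function.update (fun _ : Fin (n+1) => z) i x j‖)
      = Function.update (fun _ : Fin (n+1) => ‖z‖) i ‖x‖ := by
    funext j
    rcases eq_or_ne j i with rfl | h
    · simp
    · simp [h]
  rw [this, Finset.prod_update_of_mem (Finset.mem_univ i), Finset.prod_const]
  congr 1
  rw [Finset.sdiff_singleton_eq_erase, Finset.card_erase_of_mem (Finset.mem_univ i)]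
  simp

lemma aux_toCLM_norm_le {n : ℕ} (M : ContinuousMultilinearMap ℂ (fun _ : Fin (n+1) => X) F)
    (z : X) (i : Fin (n+1)) :
    ‖M.toContinuousLinearMap (fun _ => z) i‖ ≤ ‖M‖ * ‖z‖ ^ n := by
  refine ContinuousLinearMap.opNorm_le_bound _ (by positivity) fun x => ?_
  have := M.le_opNorm (Function.update (fun _ : Fin (n+1) => z) i x)
  rw [aux_prod_update] at this
  simpa [toContinuousLinearMap, mul_comm, mul_left_comm, mul_assoc] using this

lemma aux_diag_hasFDerivAt {n : ℕ} (M : ContinuousMultilinearMap ℂ (fun _ : Fin (n+1) => X) F)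
    (z : X) :
    HasFDerivAt (fun w : X => M (fun _ => w))
      (∑ i : Fin (n+1), M.toContinuousLinearMap (fun _ => z) i) z := by
  have := HasFDerivAt.multilinear_comp (f := M) (g := fun _ (w : X) => w)
    (g' := fun _ => ContinuousLinearMap.id ℂ X) (x := z) (fun i => hasFDerivAt_id z)
  simpa using this

lemma aux_diag_deriv_norm_le {n : ℕ} (M : ContinuousMultilinearMap ℂ (fun _ : Fin (n+1) => X) F)
    (z : X) :
    ‖∑ i : Fin (n+1), M.toContinuousLinearMap (fun _ => z) i‖ ≤ ((n:ℝ)+1) * ‖M‖ * ‖z‖ ^ n := by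
  calc ‖∑ i : Fin (n+1), M.toContinuousLinearMap (fun _ => z) i‖
      ≤ ∑ i : Fin (n+1), ‖M.toContinuousLinearMap (fun _ => z) i‖ := norm_sum_le _ _
    _ ≤ ∑ _i : Fin (n+1), ‖M‖ * ‖z‖ ^ n := Finset.sum_le_sum fun i _ => aux_toCLM_norm_le M z i
    _ = ((n:ℝ)+1) * ‖M‖ * ‖z‖ ^ n := by
        simp [Finset.sum_const, mul_assoc]

lemma aux_snoc_const {n : ℕ} (z x : X) (j : Fin (n+1)) :
    (Fin.snoc (fun _ : Fin n => z) x : Fin (n+1) → X) j = if j = Fin.last n then x else z := by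
  refine Fin.lastCases ?_ (fun i => ?_) j
  · simp
  · simp [Fin.snoc_castSucc, (Fin.castSucc_lt_last i).ne]

lemma aux_curryRight_apply_norm_le {n : ℕ}
    (M : ContinuousMultilinearMap ℂ (fun _ : Fin (n+1) => X) F) (z : X) :
    ‖M.curryRight (fun _ => z)‖ ≤ ‖M‖ * ‖z‖ ^ n := by
  refine ContinuousLinearMap.opNorm_le_bound _ (by positivity) fun x => ?_
  have h := M.le_opNorm (Fin.snoc (fun _ : Fin n => z) x)
  rw [Fin.prod_univ_castSucc] at h
  simp only [Fin.snoc_castSucc, Fin.snoc_last, Finset.prod_const, Finset.card_univ,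
    Fintype.card_fin] at h
  simpa [ContinuousMultilinearMap.curryRight_apply, mul_assoc] using h

lemma aux_diag_hasFDerivAt_symm {n : ℕ}
    (M : ContinuousMultilinearMap ℂ (fun _ : Fin (n+1) => X) F)
    (hM : ∀ (v : Fin (n+1) → X) (σ : Equiv.Perm (Fin (n+1))), M (v ∘ σ) = M v) (z : X) :
    HasFDerivAt (fun w : X => M (fun _ => w))
      ((n+1 : ℕ) • M.curryRight (fun _ => z)) z := by
  have h := HasFDerivAt.multilinear_comp (f := M) (g := fun _ (w : X) => w)
    (g' := fun _ => ContinuousLinearMap.id ℂ X) (x := z) (fun i => hasFDerivAt_id z)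
  have key : (∑ i : Fin (n+1), (M.toContinuousLinearMap (fun _ => z) i).comp
      (ContinuousLinearMap.id ℂ X)) = (n+1 : ℕ) • M.curryRight (fun _ => z) := by
    ext x
    have hterm : ∀ i : Fin (n+1),
        M (Function.update (fun _ => z) i x) = M (Fin.snoc (fun _ : Fin n => z) x) := by
      intro i
      rw [← hM (Fin.snoc (fun _ : Fin n => z) x) (Equiv.swap i (Fin.last n))]
      congr 1
      funext j
      rcases eq_or_ne j i with rfl | h
      · simp only [Function.comp_apply, Equiv.swap_apply_left, Function.update_self]
        rw [aux_snoc_const]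
        simp
      · have hne : Equiv.swap i (Fin.last n) j ≠ Fin.last n := by
          intro hc
          apply h
          have := congrArg (Equiv.swap i (Fin.last n)) hc
          rwa [Equiv.swap_apply_self, Equiv.swap_apply_right] at this
        simp only [Function.comp_apply, Function.update_of_ne h]
        rw [aux_snoc_const, if_neg hne]
    simp only [ContinuousLinearMap.sum_apply, ContinuousLinearMap.coe_comp', comp_apply,
      ContinuousLinearMap.coe_id', id_eq, toContinuousLinearMap_apply]
    rw [Finset.sum_congr rfl (fun i _ => hterm i), Finset.sum_const]
    simp [ContinuousMultilinearMap.curryRight_apply]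
  rw [← key]
  exact h

end aux

/-- `f ∈ K(B,α)`: `f` is a biholomorphic convex mapping of order `α` on the unit ball:
`f` is holomorphic and locally biholomorphic on `B` with `f(0)=0`, `Df(0)=I`, and
`‖x‖² − Re⟨Df(z)⁻¹D²f(z)(x,x), z⟩ > α‖x‖²` whenever `z ∈ B \ {0}`, `x ≠ 0`, `Re⟨x,z⟩ = 0`. -/
def IsConvexMappingOfOrder {X : Type*} [NormedAddCommGroup X] [InnerProductSpace ℂ X]
    [CompleteSpace X] (f : X → X) (α : ℝ) : Prop :=
  (∀ z ∈ Metric.ball (0 : X) 1, DifferentiableAt ℂ f z) ∧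
  f 0 = 0 ∧ fderiv ℂ f 0 = ContinuousLinearMap.id ℂ X ∧
  (∀ z ∈ Metric.ball (0 : X) 1, ∃ g : X →L[ℂ] X,
      (fderiv ℂ f z).comp g = ContinuousLinearMap.id ℂ X ∧
      g.comp (fderiv ℂ f z) = ContinuousLinearMap.id ℂ X) ∧
  ∀ z ∈ Metric.ball (0 : X) 1, z ≠ 0 → ∀ x : X, x ≠ 0 →
    (inner ℂ x z : ℂ).re = 0 →
    ∀ g : X →L[ℂ] X,
      (fderiv ℂ f z).comp g = ContinuousLinearMap.id ℂ X →
      g.comp (fderiv ℂ f z) = ContinuousLinearMap.id ℂ X →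
      α * ‖x‖ ^ 2 < ‖x‖ ^ 2 - (inner ℂ (g (fderiv ℂ (fderiv ℂ f) z x x)) z : ℂ).re

set_option maxHeartbeats 1000000 in
/-- If f(z) = z + Σ_{k≥2} A_k(z^k) with Σ_{k≥2} k(k−α)‖A_k‖ ≤ 1−α,
then f ∈ K(B,α). -/
theorem stmt_6 {X : Type*} [NormedAddCommGroup X] [InnerProductSpace ℂ X] [CompleteSpace X]
    (α : ℝ) (hα0 : 0 ≤ α) (hα1 : α < 1)
    (A : (k : ℕ) → ContinuousMultilinearMap ℂ (fun _ : Fin (k + 2) => X) X)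
    (hAsymm : ∀ k (v : Fin (k + 2) → X) (σ : Equiv.Perm (Fin (k + 2))),
      A k (v ∘ σ) = A k v)
    (f : X → X)
    (hf : ∀ z ∈ Metric.ball (0 : X) 1,
      HasSum (fun k : ℕ => A k (fun _ => z)) (f z - z))
    (hS : Summable (fun k : ℕ => ((k : ℝ) + 2) * (((k : ℝ) + 2) - α) * ‖A k‖))
    (hsum : ∑' k : ℕ, ((k : ℝ) + 2) * (((k : ℝ) + 2) - α) * ‖A k‖ ≤ 1 - α) :
    IsConvexMappingOfOrder f α := by
  classical
  have hα1' : (0:ℝ) < 1 - α := by linarith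
  have hAnn : ∀ k : ℕ, (0:ℝ) ≤ ‖A k‖ := fun k => norm_nonneg _
  have hcast : ∀ k : ℕ, (0:ℝ) ≤ (k:ℝ) := fun k => Nat.cast_nonneg k
  have hle1 : ∀ k : ℕ, ((k:ℝ)+2) * ‖A k‖ ≤ ((k:ℝ)+2) * (((k:ℝ)+2) - α) * ‖A k‖ := by
    intro k
    have h : (0:ℝ) ≤ (((k:ℝ)+2) * (((k:ℝ)+1) - α)) * ‖A k‖ :=
      mul_nonneg (mul_nonneg (by linarith [hcast k]) (by linarith [hcast k])) (hAnn k)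
    nlinarith [h]
  have hle2 : ∀ k : ℕ, ((k:ℝ)+2) * ((k:ℝ)+1) * ‖A k‖ ≤ ((k:ℝ)+2) * (((k:ℝ)+2) - α) * ‖A k‖ := by
    intro k
    have h : (0:ℝ) ≤ (((k:ℝ)+2) * (1 - α)) * ‖A k‖ :=
      mul_nonneg (mul_nonneg (by linarith [hcast k]) (by linarith)) (hAnn k)
    nlinarith [h]
  have hnn1 : ∀ k : ℕ, (0:ℝ) ≤ ((k:ℝ)+2) * ‖A k‖ := fun k => by positivity
  have hnn2 : ∀ k : ℕ, (0:ℝ) ≤ ((k:ℝ)+2) * ((k:ℝ)+1) * ‖A k‖ := fun k => by positivity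
  have hu1 : Summable (fun k : ℕ => ((k:ℝ)+2) * ‖A k‖) :=
    Summable.of_nonneg_of_le hnn1 hle1 hS
  have hu2 : Summable (fun k : ℕ => ((k:ℝ)+2) * ((k:ℝ)+1) * ‖A k‖) :=
    Summable.of_nonneg_of_le hnn2 hle2 hS
  set P : ℝ := ∑' k : ℕ, ((k:ℝ)+2) * ‖A k‖ with hPdef
  set Q : ℝ := ∑' k : ℕ, ((k:ℝ)+2) * ((k:ℝ)+1) * ‖A k‖ with hQdef
  have hP0 : 0 ≤ P := tsum_nonneg hnn1
  have hQ0 : 0 ≤ Q := tsum_nonneg hnn2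
  have hPle : P ≤ 1 - α := le_trans (Summable.tsum_le_tsum hle1 hu1 hS) hsum
  have hQP : Q + (1 - α) * P ≤ 1 - α := by
    have heq : Q + (1-α) * P = ∑' k : ℕ, ((k:ℝ)+2) * (((k:ℝ)+2) - α) * ‖A k‖ := by
      rw [hQdef, hPdef, ← tsum_mul_left, ← Summable.tsum_add hu2 (hu1.mul_left _)]
      exact tsum_congr fun k => by ring
    rw [heq]; exact hsum
  -- first derivative of each term
  have hψd : ∀ (k : ℕ) (z : X), HasFDerivAt (fun w : X => A k (fun _ => w))
      ((k+2 : ℕ) • (A k).curryRight (fun _ => z)) z := fun k z =>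
    aux_diag_hasFDerivAt_symm (A k) (hAsymm k) z
  have hψn : ∀ (k : ℕ) (z : X), ‖((k+2 : ℕ) • (A k).curryRight (fun _ => z) : X →L[ℂ] X)‖
      ≤ ((k:ℝ)+2) * ‖A k‖ * ‖z‖ ^ (k+1) := by
    intro k z
    calc ‖((k+2 : ℕ) • (A k).curryRight (fun _ => z) : X →L[ℂ] X)‖
        ≤ ((k+2 : ℕ) : ℝ) * ‖(A k).curryRight (fun _ => z)‖ := norm_nsmul_le
      _ ≤ ((k:ℝ)+2) * (‖A k‖ * ‖z‖ ^ (k+1)) := by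
          have h1 := aux_curryRight_apply_norm_le (A k) z
          have h2 : ((k+2 : ℕ) : ℝ) = (k:ℝ)+2 := by push_cast; ring
          rw [h2]
          exact mul_le_mul_of_nonneg_left h1 (by positivity)
      _ = ((k:ℝ)+2) * ‖A k‖ * ‖z‖ ^ (k+1) := by ring
  -- ball basics
  have hz0 : (0:X) ∈ Metric.ball (0:X) 1 := mem_ball_self one_pos
  have hopen : IsOpen (Metric.ball (0:X) 1) := isOpen_ball
  have hconn : IsPreconnected (Metric.ball (0:X) 1) := (convex_ball (0:X) 1).isPreconnected
  have hφ0 : (fun k : ℕ => A k (fun _ : Fin (k+2) => (0:X))) = fun _ => (0:X) :=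
    funext fun k => (A k).map_coord_zero 0 rfl
  have hψzero : ∀ k : ℕ, ((k+2 : ℕ) • (A k).curryRight (fun _ => (0:X)) : X →L[ℂ] X) = 0 := by
    intro k
    rw [(A k).curryRight.map_coord_zero (m := fun _ => (0:X)) 0 rfl, smul_zero]
  -- sum of first derivatives
  have hF1 : ∀ z ∈ Metric.ball (0:X) 1,
      HasFDerivAt (fun w : X => ∑' k : ℕ, A k (fun _ => w))
      (∑' k : ℕ, ((k+2 : ℕ) • (A k).curryRight (fun _ => z) : X →L[ℂ] X)) z := by
    intro z hz
    refine hasFDerivAt_tsum_of_isPreconnected hu1 hopen hconn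
      (fun k w _ => hψd k w) (fun k w hw => ?_) hz0 ?_ hz
    · refine le_trans (hψn k w) ?_
      have hpow : ‖w‖ ^ (k+1) ≤ 1 :=
        pow_le_one₀ (norm_nonneg w) (le_of_lt (mem_ball_zero_iff.mp hw))
      nlinarith [mul_nonneg (hnn1 k) (sub_nonneg.mpr hpow), hnn1 k]
    · rw [hφ0]; exact summable_zero
  -- f agrees with the sum on the ball
  have hDf : ∀ z ∈ Metric.ball (0:X) 1, HasFDerivAt f
      (ContinuousLinearMap.id ℂ X
        + ∑' k : ℕ, ((k+2 : ℕ) • (A k).curryRight (fun _ => z) : X →L[ℂ] X)) z := by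
    intro z hz
    have heq : f =ᶠ[nhds z] fun w => w + ∑' k : ℕ, A k (fun _ => w) := by
      filter_upwards [hopen.mem_nhds hz] with w hw
      rw [(hf w hw).tsum_eq]
      abel
    exact ((hasFDerivAt_id z).add (hF1 z hz)).congr_of_eventuallyEq heq
  have hfd_eq : ∀ z ∈ Metric.ball (0:X) 1, fderiv ℂ f z = ContinuousLinearMap.id ℂ X
      + ∑' k : ℕ, ((k+2 : ℕ) • (A k).curryRight (fun _ => z) : X →L[ℂ] X) :=
    fun z hz => (hDf z hz).fderiv
  -- second derivative of each term
  have hD2 : ∀ (k : ℕ) (z : X), HasFDerivAt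
      (fun w : X => ((k+2 : ℕ) • (A k).curryRight (fun _ => w) : X →L[ℂ] X))
      ((k+2 : ℕ) • ∑ i : Fin (k+1), ((A k).curryRight.toContinuousLinearMap (fun _ => z) i)) z :=
    fun k z => (aux_diag_hasFDerivAt ((A k).curryRight) z).const_smul (k+2 : ℕ)
  have hD2n : ∀ (k : ℕ) (z : X),
      ‖((k+2:ℕ) • ∑ i : Fin (k+1), ((A k).curryRight.toContinuousLinearMap (fun _ => z) i)
          : X →L[ℂ] X →L[ℂ] X)‖
        ≤ ((k:ℝ)+2) * (((k:ℝ)+1) * ‖A k‖ * ‖z‖ ^ k) := by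
    intro k z
    calc ‖((k+2:ℕ) • ∑ i : Fin (k+1), ((A k).curryRight.toContinuousLinearMap (fun _ => z) i)
          : X →L[ℂ] X →L[ℂ] X)‖
        ≤ ((k+2:ℕ):ℝ) * ‖∑ i : Fin (k+1), ((A k).curryRight.toContinuousLinearMap (fun _ => z) i)‖ :=
          norm_nsmul_le
      _ ≤ ((k:ℝ)+2) * (((k:ℝ)+1) * ‖(A k).curryRight‖ * ‖z‖ ^ k) := by
          have h1 := aux_diag_deriv_norm_le ((A k).curryRight) z
          have h2 : ((k+2 : ℕ) : ℝ) = (k:ℝ)+2 := by push_cast; ring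
          rw [h2]
          exact mul_le_mul_of_nonneg_left h1 (by positivity)
      _ = ((k:ℝ)+2) * (((k:ℝ)+1) * ‖A k‖ * ‖z‖ ^ k) := by
          rw [ContinuousMultilinearMap.curryRight_norm]
  -- sum of second derivatives
  have hΨd : ∀ z ∈ Metric.ball (0:X) 1, HasFDerivAt
      (fun w : X => ∑' k : ℕ, ((k+2:ℕ) • (A k).curryRight (fun _ => w) : X →L[ℂ] X))
      (∑' k : ℕ, ((k+2:ℕ) • ∑ i : Fin (k+1),
        ((A k).curryRight.toContinuousLinearMap (fun _ => z) i) : X →L[ℂ] X →L[ℂ] X)) z := by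
    intro z hz
    refine hasFDerivAt_tsum_of_isPreconnected hu2 hopen hconn (fun k w _ => hD2 k w)
      (fun k w hw => ?_) hz0 ?_ hz
    · refine le_trans (hD2n k w) ?_
      have hpow : ‖w‖ ^ k ≤ 1 :=
        pow_le_one₀ (norm_nonneg w) (le_of_lt (mem_ball_zero_iff.mp hw))
      nlinarith [mul_nonneg (hnn2 k) (sub_nonneg.mpr hpow), hnn2 k]
    · have h0 : (fun k : ℕ => ((k+2:ℕ) • (A k).curryRight (fun _ => (0:X)) : X →L[ℂ] X))
          = fun _ => 0 := funext hψzero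
      rw [h0]; exact summable_zero
  have h2nd : ∀ z ∈ Metric.ball (0:X) 1, fderiv ℂ (fderiv ℂ f) z
      = ∑' k : ℕ, ((k+2:ℕ) • ∑ i : Fin (k+1),
        ((A k).curryRight.toContinuousLinearMap (fun _ => z) i) : X →L[ℂ] X →L[ℂ] X) := by
    intro z hz
    have heq : fderiv ℂ f =ᶠ[nhds z] fun w => ContinuousLinearMap.id ℂ X
        + ∑' k : ℕ, ((k+2:ℕ) • (A k).curryRight (fun _ => w) : X →L[ℂ] X) := by
      filter_upwards [hopen.mem_nhds hz] with w hw using hfd_eq w hw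
    have h := ((hasFDerivAt_const (ContinuousLinearMap.id ℂ X) z).add
      (hΨd z hz)).congr_of_eventuallyEq heq
    rw [zero_add] at h
    exact h.fderiv
  -- norm of the tsum of first derivatives
  have hψsummable : ∀ z : X, ‖z‖ ≤ 1 → Summable (fun k : ℕ =>
      ‖((k+2:ℕ) • (A k).curryRight (fun _ => z) : X →L[ℂ] X)‖) := by
    intro z hz
    refine Summable.of_nonneg_of_le (fun k => norm_nonneg _) (fun k => ?_) hu1
    refine le_trans (hψn k z) ?_
    have hpow : ‖z‖ ^ (k+1) ≤ 1 := pow_le_one₀ (norm_nonneg z) hz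
    nlinarith [mul_nonneg (hnn1 k) (sub_nonneg.mpr hpow), hnn1 k]
  have hΨnorm : ∀ z ∈ Metric.ball (0:X) 1,
      ‖(∑' k : ℕ, ((k+2:ℕ) • (A k).curryRight (fun _ => z) : X →L[ℂ] X))‖ ≤ ‖z‖ * P := by
    intro z hz
    have hz1 : ‖z‖ ≤ 1 := le_of_lt (mem_ball_zero_iff.mp hz)
    calc ‖(∑' k : ℕ, ((k+2:ℕ) • (A k).curryRight (fun _ => z) : X →L[ℂ] X))‖
        ≤ ∑' k : ℕ, ‖((k+2:ℕ) • (A k).curryRight (fun _ => z) : X →L[ℂ] X)‖ :=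
          norm_tsum_le_tsum_norm (hψsummable z hz1)
      _ ≤ ∑' k : ℕ, (((k:ℝ)+2) * ‖A k‖ * ‖z‖) := by
          refine Summable.tsum_le_tsum (fun k => ?_) (hψsummable z hz1) (hu1.mul_right ‖z‖)
          refine le_trans (hψn k z) ?_
          rcases Nat.eq_zero_or_pos (k+1) with h | _
          · omega
          · have hpow : ‖z‖ ^ (k+1) ≤ ‖z‖ :=
              pow_le_of_le_one (norm_nonneg z) hz1 (Nat.succ_ne_zero k)
            nlinarith [mul_nonneg (hnn1 k) (sub_nonneg.mpr hpow), hnn1 k]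
      _ = ‖z‖ * P := by rw [tsum_mul_right]; ring
  have hNlt1 : ∀ z ∈ Metric.ball (0:X) 1,
      ‖(∑' k : ℕ, ((k+2:ℕ) • (A k).curryRight (fun _ => z) : X →L[ℂ] X))‖ < 1 := by
    intro z hz
    have h1 := hΨnorm z hz
    have h2 : ‖z‖ < 1 := mem_ball_zero_iff.mp hz
    nlinarith [norm_nonneg z]
  -- invertibility
  have hinv : ∀ z ∈ Metric.ball (0:X) 1, ∃ g : X →L[ℂ] X,
      (fderiv ℂ f z).comp g = ContinuousLinearMap.id ℂ X ∧
      g.comp (fderiv ℂ f z) = ContinuousLinearMap.id ℂ X := by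
    intro z hz
    set N : X →L[ℂ] X := ∑' k : ℕ, ((k+2:ℕ) • (A k).curryRight (fun _ => z) : X →L[ℂ] X) with hN
    have hNa : ‖N‖ < 1 := hNlt1 z hz
    have hval : ((Units.oneSub (-N) (by rw [norm_neg]; exact hNa)) : X →L[ℂ] X)
        = ContinuousLinearMap.id ℂ X + N := by
      rw [Units.val_oneSub, sub_neg_eq_add, ContinuousLinearMap.one_def]
    refine ⟨↑(Units.oneSub (-N) (by rw [norm_neg]; exact hNa))⁻¹, ?_, ?_⟩
    · rw [hfd_eq z hz, ← hN, ← hval, ← ContinuousLinearMap.mul_def, Units.mul_inv]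
      exact ContinuousLinearMap.one_def.symm
    · rw [hfd_eq z hz, ← hN, ← hval, ← ContinuousLinearMap.mul_def, Units.inv_mul]
      exact ContinuousLinearMap.one_def.symm
  refine ⟨fun z hz => (hDf z hz).differentiableAt, ?_, ?_, hinv, ?_⟩
  · -- f 0 = 0
    have h := hf 0 hz0
    rw [show (fun k : ℕ => A k (fun _ : Fin (k+2) => (0:X))) = fun _ => (0:X) from hφ0] at h
    have h2 := h.unique hasSum_zero
    simpa [sub_eq_zero] using h2
  · -- fderiv f 0 = id
    have hΨ0 : (∑' k : ℕ, ((k+2:ℕ) • (A k).curryRight (fun _ => (0:X)) : X →L[ℂ] X)) = 0 := by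
      rw [show (fun k : ℕ => ((k+2:ℕ) • (A k).curryRight (fun _ => (0:X)) : X →L[ℂ] X))
        = fun _ => 0 from funext hψzero]
      exact tsum_zero
    rw [hfd_eq 0 hz0, hΨ0, add_zero]
  · -- main inequality
    intro z hz hz0' x hx0 _ g _ hg2
    set N : X →L[ℂ] X := ∑' k : ℕ, ((k+2:ℕ) • (A k).curryRight (fun _ => z) : X →L[ℂ] X) with hN
    have hzlt : ‖z‖ < 1 := mem_ball_zero_iff.mp hz
    have hz1 : ‖z‖ ≤ 1 := hzlt.le
    have hN1 : ‖N‖ < 1 := hNlt1 z hz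
    have hNP : ‖N‖ ≤ ‖z‖ * P := hΨnorm z hz
    -- bound on ‖g‖
    have hgb : ‖g‖ * (1 - ‖N‖) ≤ 1 := by
      have hgeq : g = ContinuousLinearMap.id ℂ X - g.comp N := by
        have h1 := hg2
        rw [hfd_eq z hz, ← hN, ContinuousLinearMap.comp_add, ContinuousLinearMap.comp_id] at h1
        exact eq_sub_of_add_eq h1
      have h2 : ‖g‖ ≤ 1 + ‖g‖ * ‖N‖ := by
        calc ‖g‖ = ‖ContinuousLinearMap.id ℂ X - g.comp N‖ := by rw [← hgeq]
          _ ≤ ‖ContinuousLinearMap.id ℂ X‖ + ‖g.comp N‖ := norm_sub_le _ _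
          _ ≤ 1 + ‖g‖ * ‖N‖ :=
            add_le_add ContinuousLinearMap.norm_id_le (ContinuousLinearMap.opNorm_comp_le _ _)
      nlinarith
    -- bound on second derivative
    have hD2summ : Summable (fun k : ℕ => ‖((k+2:ℕ) • ∑ i : Fin (k+1),
        ((A k).curryRight.toContinuousLinearMap (fun _ => z) i) : X →L[ℂ] X →L[ℂ] X)‖) := by
      refine Summable.of_nonneg_of_le (fun k => norm_nonneg _) (fun k => ?_) hu2
      refine le_trans (hD2n k z) ?_
      have hpow : ‖z‖ ^ k ≤ 1 := pow_le_one₀ (norm_nonneg z) hz1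
      nlinarith [mul_nonneg (hnn2 k) (sub_nonneg.mpr hpow), hnn2 k]
    have hQnorm : ‖(∑' k : ℕ, ((k+2:ℕ) • ∑ i : Fin (k+1),
        ((A k).curryRight.toContinuousLinearMap (fun _ => z) i) : X →L[ℂ] X →L[ℂ] X))‖ ≤ Q := by
      calc ‖(∑' k : ℕ, ((k+2:ℕ) • ∑ i : Fin (k+1),
          ((A k).curryRight.toContinuousLinearMap (fun _ => z) i) : X →L[ℂ] X →L[ℂ] X))‖
          ≤ ∑' k : ℕ, ‖((k+2:ℕ) • ∑ i : Fin (k+1),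
            ((A k).curryRight.toContinuousLinearMap (fun _ => z) i) : X →L[ℂ] X →L[ℂ] X)‖ :=
            norm_tsum_le_tsum_norm hD2summ
        _ ≤ ∑' k : ℕ, ((k:ℝ)+2) * ((k:ℝ)+1) * ‖A k‖ := by
            refine Summable.tsum_le_tsum (fun k => ?_) hD2summ hu2
            refine le_trans (hD2n k z) ?_
            have hpow : ‖z‖ ^ k ≤ 1 := pow_le_one₀ (norm_nonneg z) hz1
            nlinarith [mul_nonneg (hnn2 k) (sub_nonneg.mpr hpow), hnn2 k]
        _ = Q := rfl
    have hw : ‖fderiv ℂ (fderiv ℂ f) z x x‖ ≤ Q * (‖x‖ * ‖x‖) := by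
      rw [h2nd z hz]
      set S : X →L[ℂ] X →L[ℂ] X := ∑' k : ℕ, ((k+2:ℕ) • ∑ i : Fin (k+1),
        ((A k).curryRight.toContinuousLinearMap (fun _ => z) i) : X →L[ℂ] X →L[ℂ] X) with hSdef
      calc ‖(S x) x‖ ≤ ‖S x‖ * ‖x‖ := ContinuousLinearMap.le_opNorm _ _
        _ ≤ (‖S‖ * ‖x‖) * ‖x‖ :=
            mul_le_mul_of_nonneg_right (ContinuousLinearMap.le_opNorm _ _) (norm_nonneg x)
        _ ≤ Q * (‖x‖ * ‖x‖) := by nlinarith [norm_nonneg x, hQnorm, norm_nonneg (S x)]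
    have hre : (inner ℂ (g (fderiv ℂ (fderiv ℂ f) z x x)) z : ℂ).re
        ≤ ‖g‖ * (Q * (‖x‖ * ‖x‖)) * ‖z‖ := by
      calc (inner ℂ (g (fderiv ℂ (fderiv ℂ f) z x x)) z : ℂ).re
          ≤ ‖(inner ℂ (g (fderiv ℂ (fderiv ℂ f) z x x)) z : ℂ)‖ := by
            exact Complex.re_le_norm _
        _ ≤ ‖g (fderiv ℂ (fderiv ℂ f) z x x)‖ * ‖z‖ := norm_inner_le_norm _ _
        _ ≤ (‖g‖ * ‖fderiv ℂ (fderiv ℂ f) z x x‖) * ‖z‖ :=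
            mul_le_mul_of_nonneg_right (ContinuousLinearMap.le_opNorm _ _) (norm_nonneg z)
        _ ≤ ‖g‖ * (Q * (‖x‖ * ‖x‖)) * ‖z‖ := by
            have := mul_le_mul_of_nonneg_left hw (norm_nonneg g)
            nlinarith [norm_nonneg z]
    have hx2 : 0 < ‖x‖ * ‖x‖ := by
      have := norm_pos_iff.mpr hx0
      positivity
    -- key numeric inequality
    have key : ‖g‖ * (Q * (‖x‖ * ‖x‖)) * ‖z‖ < (1 - α) * (‖x‖ * ‖x‖) := by
      have h6 : Q * ‖z‖ < (1 - α) * (1 - ‖N‖) := by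
        have h3 : Q * ‖z‖ + (1-α) * ‖N‖ ≤ ‖z‖ * (Q + (1-α) * P) := by
          nlinarith [hNP]
        have h4 : ‖z‖ * (Q + (1-α) * P) ≤ ‖z‖ * (1-α) :=
          mul_le_mul_of_nonneg_left hQP (norm_nonneg z)
        nlinarith [norm_nonneg z]
      have h7 : (‖g‖ * (1 - ‖N‖)) * (Q * (‖x‖ * ‖x‖) * ‖z‖) ≤ Q * (‖x‖ * ‖x‖) * ‖z‖ := by
        have hnn : 0 ≤ Q * (‖x‖ * ‖x‖) * ‖z‖ := by positivity
        nlinarith [hgb]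
      have h8 : Q * (‖x‖ * ‖x‖) * ‖z‖ < (1-α) * (1 - ‖N‖) * (‖x‖ * ‖x‖) := by
        nlinarith [h6, hx2]
      nlinarith [h7, h8, hN1, hx2, norm_nonneg g, mul_pos hx2 (sub_pos.mpr hN1)]
    have hsq : ‖x‖ ^ 2 = ‖x‖ * ‖x‖ := sq ‖x‖
    rw [hsq]
    linarith [hre, key]
end

section
/- Let X be a complex Hilbert space with unit ball B, α ∈ [0,1), and A : X × X → X a bounded symmetric bilinear operator with ‖A‖ ≤ (1−α)/(4−2α). Then f(z) = z + A(z,z) is a biholomorphic convex mapping of order α on B. -/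
/-- The derivative of `z ↦ z + A z z` at `w` is `id + (A+A) w` when `A` is symmetric. -/
theorem stmt7_hasFDerivAt {X : Type*} [NormedAddCommGroup X] [InnerProductSpace ℂ X]
    [CompleteSpace X] (A : X →L[ℂ] X →L[ℂ] X) (hAsymm : ∀ x y : X, A x y = A y x) (w : X) :
    HasFDerivAt (fun z : X => z + A z z) (ContinuousLinearMap.id ℂ X + (A + A) w) w := by
  have h1 : HasFDerivAt (fun p : X × X => A p.1 p.2)
      (A.isBoundedBilinearMap.deriv (w, w)) (w, w) :=
    A.isBoundedBilinearMap.hasFDerivAt (w, w)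
  have h2 : HasFDerivAt (fun z : X => (z, z))
      ((ContinuousLinearMap.id ℂ X).prod (ContinuousLinearMap.id ℂ X)) w :=
    HasFDerivAt.prodMk (hasFDerivAt_id w) (hasFDerivAt_id w)
  have h4 : HasFDerivAt ((fun p : X × X => A p.1 p.2) ∘ (fun z : X => (z, z)))
      ((A.isBoundedBilinearMap.deriv (w, w)).comp
        ((ContinuousLinearMap.id ℂ X).prod (ContinuousLinearMap.id ℂ X))) w :=
    HasFDerivAt.comp (f := fun z : X => (z, z)) w h1 h2
  have h5 := (hasFDerivAt_id w).add h4
  convert h5 using 1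
  all_goals ext x
  all_goals simp [IsBoundedBilinearMap.deriv_apply, hAsymm x w]

set_option maxHeartbeats 1000000 in
/-- If A is a bounded symmetric bilinear operator with ‖A‖ ≤ (1−α)/(4−2α),
then f(z) = z + A(z,z) is a biholomorphic convex mapping of order α on B. -/
theorem stmt_7 {X : Type*} [NormedAddCommGroup X] [InnerProductSpace ℂ X] [CompleteSpace X]
    (α : ℝ) (hα0 : 0 ≤ α) (hα1 : α < 1)
    (A : X →L[ℂ] X →L[ℂ] X) (hAsymm : ∀ x y : X, A x y = A y x)
    (hA : ‖A‖ ≤ (1 - α) / (4 - 2 * α)) :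
    IsConvexMappingOfOrder (fun z : X => z + A z z) α := by
  have h4α : (0:ℝ) < 4 - 2 * α := by linarith
  have hA' : ‖A‖ * (4 - 2 * α) ≤ 1 - α := by
    rw [le_div_iff₀ h4α] at hA; exact hA
  have hN : (0:ℝ) ≤ ‖A‖ := norm_nonneg A
  -- package the bilinear data into an opaque operator D
  obtain ⟨D, hfderiv, hsnd, hDz, hDxx⟩ :
      ∃ D : X →L[ℂ] X →L[ℂ] X,
        (∀ w : X, fderiv ℂ (fun z : X => z + A z z) w = ContinuousLinearMap.id ℂ X + D w) ∧
        (∀ z : X, fderiv ℂ (fderiv ℂ (fun z : X => z + A z z)) z = D) ∧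
        (∀ z : X, ‖D z‖ ≤ 2 * ‖A‖ * ‖z‖) ∧
        (∀ x : X, ‖D x x‖ ≤ 2 * ‖A‖ * ‖x‖ * ‖x‖) := by
    refine ⟨A + A, ?_, ?_, ?_, ?_⟩
    · exact fun w => (stmt7_hasFDerivAt A hAsymm w).fderiv
    · intro z
      have heq : fderiv ℂ (fun z : X => z + A z z) =
          fun w => ContinuousLinearMap.id ℂ X + (A + A) w :=
        funext fun w => (stmt7_hasFDerivAt A hAsymm w).fderiv
      rw [heq]
      have h := (((hasFDerivAt_const (ContinuousLinearMap.id ℂ X) z).add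
        ((A + A).hasFDerivAt (x := z)))).fderiv
      rw [zero_add] at h; exact h
    · intro z
      have h1 : ‖A z‖ ≤ ‖A‖ * ‖z‖ := A.le_opNorm z
      calc ‖(A + A) z‖ = ‖A z + A z‖ := rfl
        _ ≤ ‖A z‖ + ‖A z‖ := norm_add_le _ _
        _ ≤ 2 * ‖A‖ * ‖z‖ := by linarith
    · intro x
      have h1 : ‖A x x‖ ≤ ‖A‖ * ‖x‖ * ‖x‖ := by
        calc ‖A x x‖ ≤ ‖A x‖ * ‖x‖ := (A x).le_opNorm x
          _ ≤ ‖A‖ * ‖x‖ * ‖x‖ :=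
            mul_le_mul_of_nonneg_right (A.le_opNorm x) (norm_nonneg x)
      calc ‖(A + A) x x‖ = ‖A x x + A x x‖ := rfl
        _ ≤ ‖A x x‖ + ‖A x x‖ := norm_add_le _ _
        _ ≤ 2 * ‖A‖ * ‖x‖ * ‖x‖ := by linarith
  have hdiff : ∀ w : X, DifferentiableAt ℂ (fun z : X => z + A z z) w := fun w =>
    (stmt7_hasFDerivAt A hAsymm w).differentiableAt
  have hDzlt : ∀ z : X, ‖z‖ < 1 → ‖D z‖ < 1 := by
    intro z hz
    have h1 := hDz z
    have h2 : (0:ℝ) ≤ ‖z‖ := norm_nonneg z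
    nlinarith
  have hinv : ∀ z : X, ‖z‖ < 1 → ∃ g : X →L[ℂ] X,
      (fderiv ℂ (fun z : X => z + A z z) z).comp g = ContinuousLinearMap.id ℂ X ∧
      g.comp (fderiv ℂ (fun z : X => z + A z z) z) = ContinuousLinearMap.id ℂ X := by
    intro z hz
    have hu : ‖-(D z)‖ < 1 := by rw [norm_neg]; exact hDzlt z hz
    refine ⟨↑(Units.oneSub (-(D z)) hu)⁻¹, ?_, ?_⟩
    · have h := (Units.oneSub (-(D z)) hu).mul_inv
      rw [Units.val_oneSub, sub_neg_eq_add] at h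
      rw [hfderiv z, ← ContinuousLinearMap.one_def, ← ContinuousLinearMap.mul_def]
      exact h
    · have h := (Units.oneSub (-(D z)) hu).inv_mul
      rw [Units.val_oneSub, sub_neg_eq_add] at h
      rw [hfderiv z, ← ContinuousLinearMap.one_def, ← ContinuousLinearMap.mul_def]
      exact h
  refine ⟨fun z _ => hdiff z, by simp, ?_, ?_, ?_⟩
  · rw [hfderiv 0]
    simp
  · intro z hz
    exact hinv z (by simpa [mem_ball_zero_iff] using hz)
  · intro z hz hz0 x hx0 hxz g hg1 hg2
    have hz1 : ‖z‖ < 1 := by simpa [mem_ball_zero_iff] using hz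
    rw [hsnd z]
    have hzn : (0:ℝ) ≤ ‖z‖ := norm_nonneg z
    have hg0 : (0:ℝ) ≤ ‖g‖ := norm_nonneg g
    -- g = id - g ∘ (D z)
    have hgeq : g = ContinuousLinearMap.id ℂ X - g.comp (D z) := by
      have h : g.comp (ContinuousLinearMap.id ℂ X + D z) = ContinuousLinearMap.id ℂ X := by
        rw [← hfderiv z]; exact hg2
      rw [ContinuousLinearMap.comp_add, ContinuousLinearMap.comp_id] at h
      rw [← h]; abel
    have hgnorm : ‖g‖ * (1 - ‖D z‖) ≤ 1 := by
      have h1 : ‖g‖ ≤ 1 + ‖g‖ * ‖D z‖ := by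
        calc ‖g‖ = ‖ContinuousLinearMap.id ℂ X - g.comp (D z)‖ := by rw [← hgeq]
          _ ≤ ‖ContinuousLinearMap.id ℂ X‖ + ‖g.comp (D z)‖ := norm_sub_le _ _
          _ ≤ 1 + ‖g‖ * ‖D z‖ := by
              have h2 := ContinuousLinearMap.opNorm_comp_le g (D z)
              have h3 := ContinuousLinearMap.norm_id_le (𝕜 := ℂ) (E := X)
              linarith
      nlinarith
    -- abstract the relevant real quantities
    obtain ⟨G, U, t, K, hGn, hUn, htn, hKn, hUt, hGU, htkey, hre, hK2, hKx⟩ :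
        ∃ G U t K : ℝ, 0 ≤ G ∧ 0 ≤ U ∧ 0 ≤ t ∧ 0 ≤ K ∧ U ≤ t ∧ G * (1 - U) ≤ 1 ∧
          t * (2 - α) < 1 - α ∧
          (inner ℂ (g (D x x)) z : ℂ).re ≤ G * t * K ^ 2 ∧ 0 < K ^ 2 ∧
          ‖x‖ ^ 2 = K ^ 2 := by
      refine ⟨‖g‖, ‖D z‖, 2 * ‖A‖ * ‖z‖, ‖x‖, hg0, norm_nonneg _, by positivity,
        norm_nonneg _, hDz z, hgnorm, ?_, ?_, pow_pos (norm_pos_iff.mpr hx0) 2, rfl⟩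
      · have s1 : ‖z‖ * (‖A‖ * (4 - 2 * α)) ≤ ‖z‖ * (1 - α) :=
          mul_le_mul_of_nonneg_left hA' hzn
        have s2 : ‖z‖ * (1 - α) < 1 * (1 - α) :=
          mul_lt_mul_of_pos_right hz1 (by linarith)
        nlinarith [s1, s2]
      · have h1 := re_inner_le_norm (𝕜 := ℂ) (g (D x x)) z
        have h2 : ‖g (D x x)‖ ≤ ‖g‖ * (2 * ‖A‖ * ‖x‖ * ‖x‖) := by
          calc ‖g (D x x)‖ ≤ ‖g‖ * ‖D x x‖ := g.le_opNorm _
            _ ≤ ‖g‖ * (2 * ‖A‖ * ‖x‖ * ‖x‖) := mul_le_mul_of_nonneg_left (hDxx x) hg0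
        have h3 : ‖g (D x x)‖ * ‖z‖ ≤ ‖g‖ * (2 * ‖A‖ * ‖x‖ * ‖x‖) * ‖z‖ :=
          mul_le_mul_of_nonneg_right h2 hzn
        have h4 : (inner ℂ (g (D x x)) z : ℂ).re = RCLike.re (inner ℂ (g (D x x)) z : ℂ) := rfl
        have h5 : ‖g‖ * (2 * ‖A‖ * ‖x‖ * ‖x‖) * ‖z‖ = ‖g‖ * (2 * ‖A‖ * ‖z‖) * ‖x‖ ^ 2 := by
          ring
        rw [h4]
        linarith [h5 ▸ h3, h1]
    rw [hKx]
    have h1α : (0:ℝ) < 1 - α := by linarith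
    have h1t : (0:ℝ) < 1 - t := by nlinarith [mul_nonneg htn h1α.le]
    have hGt : G * (1 - t) ≤ 1 := by nlinarith [mul_nonneg hGn (sub_nonneg.2 hUt)]
    have h2 : G * t * (1 - t) ≤ t := by nlinarith [mul_le_mul_of_nonneg_right hGt htn]
    have h3 : t < (1 - α) * (1 - t) := by nlinarith
    have h4 : G * t < 1 - α := lt_of_mul_lt_mul_right (lt_of_le_of_lt h2 h3) h1t.le
    nlinarith [mul_lt_mul_of_pos_right h4 hK2, hre]
end

section
/- Let X be a complex Hilbert space with unit ball B, α ∈ [0,1), a ∈ ℂ with 0 < |a| ≤ 1/2, and u ∈ X with ‖u‖ = 1. Then f(z) = z + a⟨z,u⟩² u is a biholomorphic convex mapping of order α on B if and only if |a| ≤ (1−α)/(4−2α). -/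
set_option linter.unusedSectionVars false
set_option maxHeartbeats 1000000

section Dev
open ContinuousLinearMap ComplexConjugate
variable {X : Type*} [NormedAddCommGroup X] [InnerProductSpace ℂ X] [CompleteSpace X]

local notation "⟪" x ", " y "⟫" => (inner ℂ x y : ℂ)

noncomputable def cmT (u : X) : X →L[ℂ] X := (innerSL ℂ u).smulRight u

lemma cmT_apply (u z : X) : cmT u z = ⟪u, z⟫ • u := rfl

lemma hasFDerivAt_cm (a : ℂ) (u z : X) :
    HasFDerivAt (fun z : X => z + (a * ⟪u, z⟫ ^ 2) • u)
      (ContinuousLinearMap.id ℂ X + (2 * a * ⟪u, z⟫) • cmT u) z := by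
  have h1 : HasFDerivAt (fun z : X => ⟪u, z⟫) (innerSL ℂ u : X →L[ℂ] ℂ) z :=
    (innerSL ℂ u).hasFDerivAt
  have h2 : HasFDerivAt (fun z : X => a * ⟪u, z⟫ ^ 2)
      ((2 * a * ⟪u, z⟫) • (innerSL ℂ u : X →L[ℂ] ℂ)) z := by
    have h := (h1.mul h1).const_mul a
    have : HasFDerivAt (fun z : X => a * (⟪u, z⟫ * ⟪u, z⟫))
        ((2 * a * ⟪u, z⟫) • (innerSL ℂ u : X →L[ℂ] ℂ)) z := by
      refine h.congr_fderiv ?_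
      ext y
      simp [smul_smul]
      ring
    simpa [pow_two] using this
  have h3 := h2.smul_const u
  have h4 : (((2 * a * ⟪u, z⟫) • (innerSL ℂ u : X →L[ℂ] ℂ)).smulRight u)
      = (2 * a * ⟪u, z⟫) • cmT u := by
    ext y
    simp [cmT, smul_smul]
  rw [h4] at h3
  exact (hasFDerivAt_id z).add h3

lemma fderiv_cm (a : ℂ) (u z : X) :
    fderiv ℂ (fun z : X => z + (a * ⟪u, z⟫ ^ 2) • u) z
      = ContinuousLinearMap.id ℂ X + (2 * a * ⟪u, z⟫) • cmT u :=
  (hasFDerivAt_cm a u z).fderiv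

noncomputable def cmM (a : ℂ) (u : X) : X →L[ℂ] X →L[ℂ] X :=
  ((2 * a) • (innerSL ℂ u : X →L[ℂ] ℂ)).smulRight (cmT u)

lemma cmM_apply (a : ℂ) (u x : X) : cmM a u x = (2 * a * ⟪u, x⟫) • cmT u := by
  simp [cmM, smul_smul, mul_assoc]

lemma fderiv2_cm (a : ℂ) (u z : X) :
    fderiv ℂ (fderiv ℂ (fun z : X => z + (a * ⟪u, z⟫ ^ 2) • u)) z = cmM a u := by
  have hf : fderiv ℂ (fun z : X => z + (a * ⟪u, z⟫ ^ 2) • u)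
      = fun z => ContinuousLinearMap.id ℂ X + cmM a u z := by
    funext y
    rw [fderiv_cm, cmM_apply]
  rw [hf]
  exact (((cmM a u).hasFDerivAt (x := z)).const_add (ContinuousLinearMap.id ℂ X)).fderiv

lemma fderiv2_cm_apply (a : ℂ) (u z x : X) :
    fderiv ℂ (fderiv ℂ (fun z : X => z + (a * ⟪u, z⟫ ^ 2) • u)) z x x
      = (2 * a * ⟪u, x⟫ ^ 2) • u := by
  rw [fderiv2_cm, cmM_apply]
  simp [cmT_apply, smul_smul]
  ring_nf

lemma comp_cm (u : X) (hu : ‖u‖ = 1) (β γ : ℂ) :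
    (ContinuousLinearMap.id ℂ X + β • cmT u).comp (ContinuousLinearMap.id ℂ X + γ • cmT u)
      = ContinuousLinearMap.id ℂ X + (β + γ + β * γ) • cmT u := by
  have huu : ⟪u, u⟫ = 1 := by
    rw [inner_self_eq_norm_sq_to_K, hu]; norm_num
  ext x
  simp [cmT_apply, inner_add_right, inner_smul_right, huu, smul_smul, hu]
  module

lemma inv_cm (u : X) (hu : ‖u‖ = 1) (β : ℂ) (hβ : 1 + β ≠ 0) :
    (ContinuousLinearMap.id ℂ X + β • cmT u).comp
        (ContinuousLinearMap.id ℂ X + (-β / (1 + β)) • cmT u) = ContinuousLinearMap.id ℂ X ∧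
    (ContinuousLinearMap.id ℂ X + (-β / (1 + β)) • cmT u).comp
        (ContinuousLinearMap.id ℂ X + β • cmT u) = ContinuousLinearMap.id ℂ X := by
  have h1 : β + -β / (1 + β) + β * (-β / (1 + β)) = 0 := by field_simp; ring
  have h2 : -β / (1 + β) + β + -β / (1 + β) * β = 0 := by field_simp; ring
  constructor
  · rw [comp_cm u hu, h1]; simp
  · rw [comp_cm u hu, h2]; simp

lemma real_key (α A W Z Tt N : ℝ) (hα1 : α < 1) (hA0 : 0 < A)
    (hA : A ≤ (1 - α) / (4 - 2 * α)) (hW0 : 0 ≤ W) (hWZ : W ≤ Z) (hZ : Z < 1)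
    (hT : Tt ≤ N) (hT0 : 0 ≤ Tt) (hN : 0 < N) (hα0 : 0 ≤ α) :
    2 * A * Tt ^ 2 * W < (1 - α) * ((1 - 2 * A * W) * N ^ 2) := by
  have h4 : (0:ℝ) < 4 - 2 * α := by linarith
  have hA0' : A * (4 - 2 * α) ≤ 1 - α := (le_div_iff₀ h4).mp hA
  have hA' : 2 * A * (2 - α) ≤ 1 - α := by linarith [hA0']
  have h1 : 2 * A * W * (2 - α) < 1 - α := by nlinarith [mul_le_mul_of_nonneg_left hA' hW0]
  have hTN : Tt ^ 2 ≤ N ^ 2 := by nlinarith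
  have hstep : 2 * A * Tt ^ 2 * W ≤ 2 * A * N ^ 2 * W := by nlinarith [mul_le_mul_of_nonneg_left hTN (by positivity : (0:ℝ) ≤ 2 * A * W)]
  have hNpos : (0:ℝ) < N ^ 2 := by positivity
  nlinarith [mul_lt_mul_of_pos_left h1 hNpos, hstep]


lemma gval (u : X) (hu : ‖u‖ = 1) (β s : ℂ) (hβ : 1 + β ≠ 0) :
    (ContinuousLinearMap.id ℂ X + (-β / (1 + β)) • cmT u) (s • u) = (s / (1 + β)) • u := by
  have huu : ⟪u, u⟫ = 1 := by
    rw [inner_self_eq_norm_sq_to_K, hu]; norm_num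
  have h1 : (ContinuousLinearMap.id ℂ X + (-β / (1 + β)) • cmT u) (s • u)
      = (s + -β / (1 + β) * s) • u := by
    simp [cmT_apply, inner_smul_right, huu, smul_smul, add_smul, mul_comm, hu]
  rw [h1]
  congr 1
  field_simp
  ring

end Dev



/-- For 0 < |a| ≤ 1/2 and ‖u‖ = 1, f(z) = z + a⟨z,u⟩²u is a biholomorphic
convex mapping of order α on B if and only if |a| ≤ (1−α)/(4−2α). -/
theorem stmt_8 {X : Type*} [NormedAddCommGroup X] [InnerProductSpace ℂ X] [CompleteSpace X]
    (α : ℝ) (hα0 : 0 ≤ α) (hα1 : α < 1)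
    (a : ℂ) (ha0 : 0 < ‖a‖) (ha : ‖a‖ ≤ 1 / 2)
    (u : X) (hu : ‖u‖ = 1) :
    IsConvexMappingOfOrder (fun z : X => z + (a * (inner ℂ u z : ℂ) ^ 2) • u) α ↔
      ‖a‖ ≤ (1 - α) / (4 - 2 * α) := by
  classical
  set A : ℝ := ‖a‖ with hAdef
  have huu : (inner ℂ u u : ℂ) = 1 := by
    rw [inner_self_eq_norm_sq_to_K, hu]; norm_num
  have hinn : ∀ z : X, ‖(inner ℂ u z : ℂ)‖ ≤ ‖z‖ := by
    intro z
    have h := norm_inner_le_norm (𝕜 := ℂ) u z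
    simpa [hu] using h
  have hden_ne : ∀ z : X, ‖z‖ < 1 → (1 + 2 * a * (inner ℂ u z : ℂ)) ≠ 0 := by
    intro z hz h0
    have h2 := hinn z
    have h1 : ‖(2 * a * (inner ℂ u z : ℂ))‖ < 1 := by
      have he : ‖(2 * a * (inner ℂ u z : ℂ))‖
          = 2 * A * ‖(inner ℂ u z : ℂ)‖ := by
        simp [norm_mul, hAdef]
      rw [he]
      nlinarith [norm_nonneg (inner ℂ u z : ℂ)]
    have he2 : (2 * a * (inner ℂ u z : ℂ)) = -1 := by linear_combination h0
    rw [he2] at h1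
    simp at h1
  constructor
  · -- necessity
    intro h
    obtain ⟨-, -, -, -, h5⟩ := h
    set k : ℂ := (starRingEnd ℂ) a / (A : ℂ) with hk
    have hAne : (A : ℂ) ≠ 0 := Complex.ofReal_ne_zero.mpr (ne_of_gt ha0)
    have hane : a ≠ 0 := by
      intro h0; rw [hAdef, h0] at ha0; simp at ha0
    have hak : a * k = (A : ℂ) := by
      rw [hk, mul_div_assoc']
      rw [Complex.mul_conj, Complex.normSq_eq_norm_sq]
      rw [div_eq_iff hAne]
      push_cast
      ring
    have habsk : ‖k‖ = 1 := by
      rw [hk, norm_div, Complex.norm_conj, ← hAdef, Complex.norm_real, Real.norm_eq_abs, abs_of_pos ha0]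
      field_simp
    have hkk : k * (starRingEnd ℂ) k = 1 := by
      rw [Complex.mul_conj, Complex.normSq_eq_norm_sq, habsk]
      norm_num
    have hconjak : (starRingEnd ℂ) a * (starRingEnd ℂ) k = (A : ℂ) := by
      rw [← map_mul, hak, Complex.conj_ofReal]
    have hclaim : ∀ r : ℝ, 0 < r → r < 1 → 2 * A * r * (2 - α) < 1 - α := by
      intro r hr0 hr1
      have h2Ar : 2 * A * r < 1 := by nlinarith
      set w : ℂ := -(r : ℂ) * k with hw
      set z : X := w • u with hzdef
      set x : X := (Complex.I * k) • u with hxdef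
      have habsw : ‖w‖ = r := by
        simp [hw, norm_mul, habsk, Complex.norm_real, abs_of_pos hr0]
      have hnz : ‖z‖ = r := by
        rw [hzdef, norm_smul, hu, mul_one, habsw]
      have hnx : ‖x‖ = 1 := by
        rw [hxdef, norm_smul, hu, mul_one, norm_mul, Complex.norm_I, habsk]
        norm_num
      have hzb : z ∈ Metric.ball (0 : X) 1 := by
        rw [mem_ball_zero_iff, hnz]; exact hr1
      have hz0 : z ≠ 0 := by
        intro h0; rw [h0, norm_zero] at hnz; linarith
      have hx0 : x ≠ 0 := by
        intro h0; rw [h0, norm_zero] at hnx; linarith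
      have hwz : (inner ℂ u z : ℂ) = w := by
        rw [hzdef, inner_smul_right, huu, mul_one]
      have hortho : (inner ℂ x z : ℂ).re = 0 := by
        have hxz : (inner ℂ x z : ℂ) = (r : ℝ) * Complex.I := by
          rw [hxdef, hzdef, inner_smul_left, inner_smul_right, huu, hw]
          simp only [map_mul, Complex.conj_I, mul_one]
          push_cast
          linear_combination (Complex.I * (r : ℂ)) * hkk
        rw [hxz]
        simp
      have hβval : (2 : ℂ) * a * (inner ℂ u z : ℂ) = ((-(2 * A * r) : ℝ) : ℂ) := by
        rw [hwz, hw]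
        push_cast
        linear_combination (-2 * (r : ℂ)) * hak
      have hden : (1 : ℂ) + 2 * a * (inner ℂ u z : ℂ) ≠ 0 := by
        rw [hβval]
        intro h0
        have h0' : ((1 - 2 * A * r : ℝ) : ℂ) = 0 := by push_cast at h0 ⊢; linear_combination h0
        have := Complex.ofReal_eq_zero.mp h0'
        linarith
      obtain ⟨hc1, hc2⟩ := inv_cm u hu (2 * a * (inner ℂ u z : ℂ)) hden
      have happ := h5 z hzb hz0 x hx0 hortho _
        (by rw [fderiv_cm a u z]; exact hc1) (by rw [fderiv_cm a u z]; exact hc2)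
      rw [fderiv2_cm_apply a u z x,
        gval u hu (2 * a * (inner ℂ u z : ℂ)) (2 * a * (inner ℂ u x : ℂ) ^ 2) hden,
        inner_smul_left, hwz] at happ
      have htx : (inner ℂ u x : ℂ) = Complex.I * k := by
        rw [hxdef, inner_smul_right, huu, mul_one]
      have hdenR : (1 - 2 * A * r : ℝ) ≠ 0 := by linarith
      have h1β : (1 : ℂ) + 2 * a * w = ((1 - 2 * A * r : ℝ) : ℂ) := by
        rw [hw]; push_cast; linear_combination (-2 * (r : ℂ)) * hak
      rw [htx, h1β] at happ
      have hq : (starRingEnd ℂ) (2 * a * (Complex.I * k) ^ 2 / ((1 - 2 * A * r : ℝ) : ℂ)) * w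
          = ((2 * A * r / (1 - 2 * A * r) : ℝ) : ℂ) := by
        rw [map_div₀, Complex.conj_ofReal, hw]
        rw [div_mul_eq_mul_div]
        push_cast
        rw [div_eq_div_iff (by have h' := Complex.ofReal_ne_zero.mpr hdenR; push_cast at h'; exact h') (by have h' := Complex.ofReal_ne_zero.mpr hdenR; push_cast at h'; exact h')]
        simp only [map_mul, map_pow, mul_pow, Complex.conj_I, neg_sq, Complex.I_sq, map_ofNat, map_neg, map_one]
        linear_combination (2 * (r : ℂ) * ((1 : ℂ) - 2 * (A : ℂ) * (r : ℂ)) * (starRingEnd ℂ) k * k) * hconjak + (2 * (A : ℂ) * (r : ℂ) * ((1 : ℂ) - 2 * (A : ℂ) * (r : ℂ))) * hkk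
      rw [hq, Complex.ofReal_re, hnx] at happ
      have hdpos : (0 : ℝ) < 1 - 2 * A * r := by linarith
      have hlt : 2 * A * r / (1 - 2 * A * r) < 1 - α := by nlinarith [happ]
      rw [div_lt_iff₀ hdpos] at hlt
      nlinarith [hlt]
    by_contra hcon
    push_neg at hcon
    have h4 : (0 : ℝ) < 4 - 2 * α := by linarith
    have hcon' : 1 - α < A * (4 - 2 * α) := by
      rw [div_lt_iff₀ h4] at hcon; linarith
    have h2A2 : (0 : ℝ) < 2 * A * (2 - α) := by nlinarith
    set q : ℝ := (1 - α) / (2 * A * (2 - α)) with hqdef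
    have hq1 : q < 1 := by
      rw [hqdef, div_lt_one h2A2]; nlinarith
    have hq0 : 0 < q := by
      rw [hqdef]; exact div_pos (by linarith) h2A2
    have hmain := hclaim ((q + 1) / 2) (by linarith) (by linarith)
    have hqeq : 2 * A * q * (2 - α) = 1 - α := by
      rw [hqdef]; field_simp [show (2:ℝ) - α ≠ 0 by linarith]
    nlinarith [hmain, hqeq]
  · -- sufficiency
    intro hA
    refine ⟨fun z _ => (hasFDerivAt_cm a u z).differentiableAt, by simp, ?_, ?_, ?_⟩
    · rw [fderiv_cm a u 0]; simp
    · intro z hz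
      rw [mem_ball_zero_iff] at hz
      obtain ⟨hc1, hc2⟩ := inv_cm u hu (2 * a * (inner ℂ u z : ℂ)) (hden_ne z hz)
      exact ⟨_, by rw [fderiv_cm a u z]; exact hc1, by rw [fderiv_cm a u z]; exact hc2⟩
    · intro z hz hz0 x hx0 hxz g hg1 hg2
      rw [mem_ball_zero_iff] at hz
      set w : ℂ := (inner ℂ u z : ℂ) with hw
      set β : ℂ := 2 * a * w with hβdef
      have hβ : (1 : ℂ) + β ≠ 0 := hden_ne z hz
      obtain ⟨hc1, hc2⟩ := inv_cm u hu β hβ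
      set gex : X →L[ℂ] X := ContinuousLinearMap.id ℂ X + (-β / (1 + β)) • cmT u with hgex
      have hfd : fderiv ℂ (fun z : X => z + (a * (inner ℂ u z : ℂ) ^ 2) • u) z
          = ContinuousLinearMap.id ℂ X + β • cmT u := fderiv_cm a u z
      have hcomp1 : (fderiv ℂ (fun z : X => z + (a * (inner ℂ u z : ℂ) ^ 2) • u) z).comp gex
          = ContinuousLinearMap.id ℂ X := by rw [hfd]; exact hc1
      have hgeq : g = gex := by
        calc g = g.comp (ContinuousLinearMap.id ℂ X) := (g.comp_id).symm
          _ = g.comp ((fderiv ℂ (fun z : X => z + (a * (inner ℂ u z : ℂ) ^ 2) • u) z).comp gex) := by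
              rw [hcomp1]
          _ = (g.comp (fderiv ℂ (fun z : X => z + (a * (inner ℂ u z : ℂ) ^ 2) • u) z)).comp gex := by
              rw [ContinuousLinearMap.comp_assoc]
          _ = gex := by rw [hg2, ContinuousLinearMap.id_comp]
      set t : ℂ := (inner ℂ u x : ℂ) with ht
      have hval : g (fderiv ℂ (fderiv ℂ (fun z : X => z + (a * (inner ℂ u z : ℂ) ^ 2) • u)) z x x)
          = ((2 * a * t ^ 2) / (1 + β)) • u := by
        rw [fderiv2_cm_apply a u z x, hgeq, hgex, gval u hu β (2 * a * t ^ 2) hβ]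
      rw [hval, inner_smul_left, ← hw]
      have hre : ((starRingEnd ℂ) (2 * a * t ^ 2 / (1 + β)) * w).re
          ≤ ‖((starRingEnd ℂ) (2 * a * t ^ 2 / (1 + β)) * w)‖ := Complex.re_le_norm _
      have habs1 : ‖((starRingEnd ℂ) (2 * a * t ^ 2 / (1 + β)) * w)‖
          = (2 * A * ‖t‖ ^ 2 * ‖w‖) / ‖(1 + β)‖ := by
        rw [norm_mul, Complex.norm_conj, norm_div, norm_mul, norm_mul, norm_pow, Complex.norm_two,
          ← hAdef]
        ring
      have hβabs : ‖β‖ = 2 * A * ‖w‖ := by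
        rw [hβdef, norm_mul, norm_mul, Complex.norm_two, ← hAdef]
      have hden_ge : 1 - 2 * A * ‖w‖ ≤ ‖(1 + β)‖ := by
        have h : (1 : ℝ) ≤ ‖(1 + β)‖ + ‖β‖ := by
          have h' := norm_add_le (1 + β) (-β)
          simpa using h'
        rw [hβabs] at h
        linarith
      have hWz : ‖w‖ ≤ ‖z‖ := hinn z
      have hTx : ‖t‖ ≤ ‖x‖ := hinn x
      have hNx : 0 < ‖x‖ := norm_pos_iff.mpr hx0
      have h2AW : 0 < 1 - 2 * A * ‖w‖ := by
        nlinarith [norm_nonneg w]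
      have hkey := real_key α A (‖w‖) ‖z‖ (‖t‖) ‖x‖ hα1 ha0 hA
        (norm_nonneg w) hWz hz hTx (norm_nonneg t) hNx hα0
      have hfrac1 : (2 * A * ‖t‖ ^ 2 * ‖w‖) / ‖(1 + β)‖
          ≤ (2 * A * ‖t‖ ^ 2 * ‖w‖) / (1 - 2 * A * ‖w‖) := by
        exact div_le_div_of_nonneg_left
          (mul_nonneg (mul_nonneg (mul_nonneg (by norm_num) ha0.le) (sq_nonneg _))
            (norm_nonneg w)) h2AW hden_ge
      have hfrac2 : (2 * A * ‖t‖ ^ 2 * ‖w‖) / (1 - 2 * A * ‖w‖)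
          < (1 - α) * ‖x‖ ^ 2 := by
        rw [div_lt_iff₀ h2AW]
        nlinarith [hkey]
      have hfin : ((starRingEnd ℂ) (2 * a * t ^ 2 / (1 + β)) * w).re < (1 - α) * ‖x‖ ^ 2 := by
        calc ((starRingEnd ℂ) (2 * a * t ^ 2 / (1 + β)) * w).re
            ≤ ‖((starRingEnd ℂ) (2 * a * t ^ 2 / (1 + β)) * w)‖ := hre
          _ = (2 * A * ‖t‖ ^ 2 * ‖w‖) / ‖(1 + β)‖ := habs1
          _ ≤ (2 * A * ‖t‖ ^ 2 * ‖w‖) / (1 - 2 * A * ‖w‖) := hfrac1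
          _ < (1 - α) * ‖x‖ ^ 2 := hfrac2
      nlinarith [hfin]
end

section
/- Let g(z) = a + a₁ z + ⋯ be analytic on the unit disk U with g not identically equal to the constant a. If there exists z₀ ∈ U \ {0} such that |g(z₀)| = max_{|z| ≤ |z₀|} |g(z)|, then there exists a real number t ≥ (|g(z₀)| − |a|)/(|g(z₀)| + |a|) such that z₀ g'(z₀) = t · g(z₀). -/
open Metric Complex Filter Set

-- Step 1 lemma: strict maximum principle consequence
theorem key_lt (g : ℂ → ℂ) (hg : DifferentiableOn ℂ g (Metric.ball (0 : ℂ) 1))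
    (hnc : ∃ z ∈ Metric.ball (0 : ℂ) 1, g z ≠ g 0)
    (z₀ : ℂ) (hz₀ : z₀ ∈ Metric.ball (0 : ℂ) 1) (hz₀ne : z₀ ≠ 0)
    (hmax : ∀ z : ℂ, ‖z‖ ≤ ‖z₀‖ →
      ‖g z‖ ≤ ‖g z₀‖)
    (ζ : ℂ) (hζ : ‖ζ‖ < ‖z₀‖) :
    ‖g ζ‖ < ‖g z₀‖ := by
  refine lt_of_le_of_ne (hmax ζ hζ.le) ?_
  intro heq
  have hr1 : ‖z₀‖ < 1 := by simpa using mem_ball_zero_iff.mp hz₀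
  have hrpos : 0 < ‖z₀‖ := norm_pos_iff.mpr hz₀ne
  have hball : ball (0:ℂ) (‖z₀‖) ⊆ ball 0 1 := ball_subset_ball hr1.le
  have hsub : DifferentiableOn ℂ g (ball 0 (‖z₀‖)) := hg.mono hball
  have hζmem : ζ ∈ ball (0:ℂ) (‖z₀‖) := by
    simpa [mem_ball_zero_iff] using hζ
  have hmaxon : IsMaxOn (norm ∘ g) (ball (0:ℂ) (‖z₀‖)) ζ := by
    intro z hz
    have hz' : ‖z‖ ≤ ‖z₀‖ := by
      have := mem_ball_zero_iff.mp hz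
      simpa using this.le
    simp only [Function.comp, Set.mem_setOf_eq]
    calc ‖g z‖ ≤ ‖g z₀‖ := hmax z hz'
    _ = ‖g ζ‖ := heq.symm
  have heq2 : EqOn g (Function.const ℂ (g ζ)) (ball (0:ℂ) (‖z₀‖)) :=
    Complex.eqOn_of_isPreconnected_of_isMaxOn_norm (convex_ball _ _).isPreconnected
      isOpen_ball hsub hζmem hmaxon
  have hg_an : AnalyticOnNhd ℂ g (ball (0:ℂ) 1) := hg.analyticOnNhd isOpen_ball
  have hc_an : AnalyticOnNhd ℂ (Function.const ℂ (g ζ)) (ball (0:ℂ) 1) := fun z _ =>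
    analyticAt_const
  have hev : g =ᶠ[nhds (0:ℂ)] Function.const ℂ (g ζ) := by
    filter_upwards [ball_mem_nhds (0:ℂ) hrpos] with z hz using heq2 hz
  obtain ⟨z, hz, hne⟩ := hnc
  have hall := hg_an.eqOn_of_preconnected_of_eventuallyEq hc_an
      (convex_ball (0:ℂ) 1).isPreconnected (mem_ball_self one_pos) hev hz
  have h0 : g 0 = g ζ := heq2 (mem_ball_self hrpos)
  exact hne (hall.trans h0.symm)


theorem normSq_sub_eq (u c : ℂ) :
    Complex.normSq (u - c) = Complex.normSq u + Complex.normSq c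
      - 2 * ((starRingEnd ℂ) c * u).re := by
  simp only [Complex.normSq_apply, Complex.sub_re, Complex.sub_im, Complex.mul_re,
    Complex.mul_im, Complex.conj_re, Complex.conj_im]
  ring

theorem normSq_one_sub_eq (u c : ℂ) :
    Complex.normSq (1 - (starRingEnd ℂ) c * u)
      = 1 + Complex.normSq c * Complex.normSq u - 2 * ((starRingEnd ℂ) c * u).re := by
  simp only [Complex.normSq_apply, Complex.sub_re, Complex.sub_im, Complex.mul_re,
    Complex.mul_im, Complex.one_re, Complex.one_im, Complex.conj_re, Complex.conj_im]
  ring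

set_option maxHeartbeats 1000000 in
theorem schwarz_pick (w : ℂ → ℂ) (hw : DifferentiableOn ℂ w (ball (0:ℂ) 1))
    (hlt : ∀ z ∈ ball (0:ℂ) 1, ‖w z‖ < 1)
    (r : ℝ) (hr0 : 0 ≤ r) (hr1 : r < 1) :
    ‖w r‖ * (1 + ‖w 0‖ * r) ≤ ‖w 0‖ + r := by
  set c : ℂ := w 0 with hc
  set C : ℝ := ‖c‖ with hC
  have hC0 : 0 ≤ C := norm_nonneg c
  have hC1 : C < 1 := hlt 0 (mem_ball_self one_pos)
  have hden : ∀ z ∈ ball (0:ℂ) 1, 1 - (starRingEnd ℂ) c * w z ≠ 0 := by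
    intro z hz h0
    have h1 : ‖(starRingEnd ℂ) c * w z‖ < 1 := by
      rw [norm_mul, Complex.norm_conj]
      calc C * ‖w z‖ ≤ C * 1 := by
            exact mul_le_mul_of_nonneg_left (hlt z hz).le hC0
        _ < 1 := by linarith
    rw [sub_eq_zero] at h0
    rw [← h0] at h1
    simp at h1
  set B : ℂ → ℂ := fun z => (w z - c) / (1 - (starRingEnd ℂ) c * w z) with hB
  have hBdiff : DifferentiableOn ℂ B (ball (0:ℂ) 1) := by
    refine DifferentiableOn.div (hw.sub_const c) ?_ hden
    exact (differentiableOn_const 1).sub ((differentiableOn_const _).mul hw)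
  have hBmaps : MapsTo B (ball (0:ℂ) 1) (ball (0:ℂ) 1) := by
    intro z hz
    have hu : ‖w z‖ < 1 := hlt z hz
    have hsq : (‖w z - c‖)^2 < (‖1 - (starRingEnd ℂ) c * w z‖)^2 := by
      rw [Complex.sq_norm, Complex.sq_norm]
      have h1 : Complex.normSq (1 - (starRingEnd ℂ) c * w z) - Complex.normSq (w z - c)
          = (1 - Complex.normSq c) * (1 - Complex.normSq (w z)) := by
        rw [normSq_one_sub_eq (w z) c, normSq_sub_eq (w z) c]; ring
      have h2 : Complex.normSq c < 1 := by
        rw [← Complex.sq_norm]; nlinarith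
      have h3 : Complex.normSq (w z) < 1 := by
        rw [← Complex.sq_norm]; nlinarith [norm_nonneg (w z)]
      nlinarith
    have habs : ‖w z - c‖ < ‖1 - (starRingEnd ℂ) c * w z‖ :=
      lt_of_pow_lt_pow_left₀ 2 (norm_nonneg _) hsq
    rw [mem_ball_zero_iff]
    simp only [hB, norm_div]
    rw [div_lt_one (lt_of_le_of_lt (norm_nonneg _) habs)]
    exact habs
  have hB0 : B 0 = 0 := by simp [hB, hc]
  have hrball : ((r:ℂ)) ∈ ball (0:ℂ) 1 := by
    rw [mem_ball_zero_iff]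
    simpa [Complex.norm_real, _root_.abs_of_nonneg hr0] using hr1
  have hSch : ‖B r‖ ≤ r := by
    have := Complex.norm_le_norm_of_mapsTo_ball hBdiff (hBmaps.mono_right ball_subset_closedBall) hB0
      (z := (r:ℂ)) (by simpa [Complex.norm_real, _root_.abs_of_nonneg hr0] using hr1)
    simpa [Complex.norm_real, _root_.abs_of_nonneg hr0] using this
  -- unpack
  set u : ℂ := w r with hu
  set U : ℝ := ‖u‖ with hU
  have hU0 : 0 ≤ U := norm_nonneg u
  have hU1 : U < 1 := hlt _ hrball
  have hdenpos : 0 < ‖1 - (starRingEnd ℂ) c * u‖ := by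
    have := hden _ hrball
    exact norm_pos_iff.mpr this
  have habs2 : ‖u - c‖ ≤ r * ‖1 - (starRingEnd ℂ) c * u‖ := by
    have : ‖u - c‖ / ‖1 - (starRingEnd ℂ) c * u‖ ≤ r := by
      simpa [hB, norm_div] using hSch
    rwa [div_le_iff₀ hdenpos] at this
  have hmain : Complex.normSq (u - c) ≤ r^2 * Complex.normSq (1 - (starRingEnd ℂ) c * u) := by
    rw [← Complex.sq_norm, ← Complex.sq_norm]
    calc ‖u - c‖ ^ 2 ≤ (r * ‖1 - (starRingEnd ℂ) c * u‖)^2 := by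
          exact pow_le_pow_left₀ (norm_nonneg _) habs2 2
      _ = r^2 * ‖1 - (starRingEnd ℂ) c * u‖ ^ 2 := by ring
  set x : ℝ := ((starRingEnd ℂ) c * u).re with hx
  have hxle : x ≤ C * U := by
    calc x ≤ |x| := le_abs_self x
      _ ≤ ‖(starRingEnd ℂ) c * u‖ := Complex.abs_re_le_norm _
      _ = C * U := by rw [norm_mul, Complex.norm_conj]
  rw [normSq_sub_eq, normSq_one_sub_eq, ← hx] at hmain
  have hnu : Complex.normSq u = U^2 := (Complex.sq_norm u).symm
  have hnc : Complex.normSq c = C^2 := (Complex.sq_norm c).symm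
  rw [hnu, hnc] at hmain
  -- quadratic argument
  have hUC : U * C < 1 := by nlinarith
  have h1r : 0 ≤ 1 - r^2 := by nlinarith
  have hh : 2*x*(1-r^2) ≤ 2*(C*U)*(1-r^2) := by nlinarith
  have hprod : (U*(1+C*r)-(C+r)) * (U*(1-C*r)-(C-r)) ≤ 0 := by nlinarith [hmain, hh]
  by_contra h
  push_neg at h
  have h' : 0 < U*(1+C*r)-(C+r) := by linarith
  have hP2 : 0 < U*(1-C*r)-(C-r) := by
    nlinarith [mul_nonneg hr0 (by nlinarith : (0:ℝ) ≤ 1 - U*C), h']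
  nlinarith [mul_pos h' hP2]

set_option maxHeartbeats 1000000 in
/-- Jack's lemma: If g is analytic on U, not identically g(0), and
|g(z₀)| = max_{|z|≤|z₀|} |g(z)| for some z₀ ∈ U \ {0}, then z₀g'(z₀) = t·g(z₀) for some
real t ≥ (|g(z₀)| − |g(0)|)/(|g(z₀)| + |g(0)|). -/
theorem stmt_9 (g : ℂ → ℂ) (hg : DifferentiableOn ℂ g (Metric.ball (0 : ℂ) 1))
    (hnc : ∃ z ∈ Metric.ball (0 : ℂ) 1, g z ≠ g 0)
    (z₀ : ℂ) (hz₀ : z₀ ∈ Metric.ball (0 : ℂ) 1) (hz₀ne : z₀ ≠ 0)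
    (hmax : ∀ z : ℂ, ‖z‖ ≤ ‖z₀‖ →
      ‖g z‖ ≤ ‖g z₀‖) :
    ∃ t : ℝ,
      (‖g z₀‖ - ‖g 0‖) / (‖g z₀‖ + ‖g 0‖) ≤ t ∧
      z₀ * deriv g z₀ = (t : ℂ) * g z₀ := by
  have hr1 : ‖z₀‖ < 1 := by
    simpa using mem_ball_zero_iff.mp hz₀
  have hrpos : 0 < ‖z₀‖ := norm_pos_iff.mpr hz₀ne
  set M : ℝ := ‖g z₀‖ with hM
  set A : ℝ := ‖g 0‖ with hA
  have hAM : A < M := by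
    have := key_lt g hg hnc z₀ hz₀ hz₀ne hmax 0 (by simpa using hrpos)
    simpa using this
  have hA0 : 0 ≤ A := norm_nonneg _
  have hM0 : 0 < M := lt_of_le_of_lt hA0 hAM
  have hMne : ((M:ℝ):ℂ) ≠ 0 := by
    simpa using Complex.ofReal_ne_zero.mpr hM0.ne'
  set w : ℂ → ℂ := fun z => g (z * z₀) / ((M:ℝ):ℂ) with hw
  -- w is differentiable on the unit ball
  have hmapsin : MapsTo (fun z : ℂ => z * z₀) (ball (0:ℂ) 1) (ball (0:ℂ) 1) := by
    intro z hz
    rw [mem_ball_zero_iff] at hz ⊢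
    have : ‖z * z₀‖ = ‖z‖ * ‖z₀‖ := norm_mul z z₀
    rw [this]
    calc ‖z‖ * ‖z₀‖ ≤ 1 * ‖z₀‖ := by
          exact mul_le_mul_of_nonneg_right hz.le (norm_nonneg _)
      _ < 1 := by simpa using hr1
  have hwdiff : DifferentiableOn ℂ w (ball (0:ℂ) 1) := by
    apply DifferentiableOn.div_const
    exact hg.comp ((differentiable_id.mul_const z₀).differentiableOn) hmapsin
  -- w is strictly bounded by 1 in the ball
  have hwlt : ∀ z ∈ ball (0:ℂ) 1, ‖w z‖ < 1 := by
    intro z hz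
    rw [mem_ball_zero_iff] at hz
    have hz' : ‖z * z₀‖ < ‖z₀‖ := by
      rw [norm_mul]
      calc ‖z‖ * ‖z₀‖ < 1 * ‖z₀‖ := by
            apply mul_lt_mul_of_pos_right _ hrpos
            simpa using hz
        _ = ‖z₀‖ := one_mul _
    have := key_lt g hg hnc z₀ hz₀ hz₀ne hmax (z * z₀) hz'
    simp only [hw, norm_div, Complex.norm_real, Real.norm_eq_abs, _root_.abs_of_pos hM0]
    rw [div_lt_one hM0]
    exact this
  have hw1 : w 1 = g z₀ / ((M:ℝ):ℂ) := by simp [hw]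
  have hw0abs : ‖w 0‖ = A / M := by
    simp [hw, norm_div, Complex.norm_real, Real.norm_eq_abs, _root_.abs_of_pos hM0, hA]
  set C : ℝ := A / M with hC
  have hC0 : 0 ≤ C := div_nonneg hA0 hM0.le
  have hC1 : C < 1 := (div_lt_one hM0).mpr hAM
  clear_value C
  -- derivative of w at 1
  have hdg : HasDerivAt g (deriv g z₀) z₀ :=
    (hg.differentiableAt (isOpen_ball.mem_nhds hz₀)).hasDerivAt
  set D : ℂ := deriv g z₀ * z₀ / ((M:ℝ):ℂ) with hD
  have hW : HasDerivAt w D 1 := by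
    have hinner : HasDerivAt (fun z : ℂ => z * z₀) z₀ 1 := by
      simpa using (hasDerivAt_id (1:ℂ)).mul_const z₀
    have hdg' : HasDerivAt g (deriv g z₀) ((1:ℂ) * z₀) := by rwa [one_mul]
    have hcomp : HasDerivAt (fun z : ℂ => g (z * z₀)) (deriv g z₀ * z₀) 1 :=
      HasDerivAt.comp 1 hdg' hinner
    exact hcomp.div_const _
  set S : ℂ := (starRingEnd ℂ) (g z₀) * (z₀ * deriv g z₀) with hS
  clear_value S
  have hval : (starRingEnd ℂ) (w 1) * D = S / ((M:ℝ):ℂ)^2 := by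
    rw [hw1, hD, hS, map_div₀, Complex.conj_ofReal]
    field_simp
  -- F and its derivative at 1
  set F : ℝ → ℝ := fun r => ‖w ((r:ℝ):ℂ)‖^2 with hF
  have hφ : HasDerivAt (fun r : ℝ => w ((r:ℝ):ℂ)) D 1 := hW.comp_ofReal
  have hFd : HasDerivAt F (2 * (S.re / M^2)) 1 := by
    have := hφ.norm_sq
    have hre : (inner ℝ (w ((1:ℝ):ℂ)) D : ℝ) = S.re / M^2 := by
      rw [Complex.inner, mul_comm]
      have h1 : ((1:ℝ):ℂ) = (1:ℂ) := by norm_num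
      rw [h1, hval]
      rw [show ((M:ℝ):ℂ)^2 = (((M^2 :ℝ)):ℂ) by push_cast; ring]
      rw [Complex.div_ofReal_re]
    rwa [hre] at this
  have hF1 : F 1 = 1 := by
    simp only [hF]
    rw [show ((1:ℝ):ℂ) = (1:ℂ) by norm_num, hw1]
    rw [norm_div]
    simp [Complex.norm_real, _root_.abs_of_pos hM0, ← hM,
      div_self hM0.ne']
  -- slope convergence
  have hslope : Tendsto (slope F 1) (nhdsWithin 1 (Iio 1)) (nhds (2 * (S.re / M^2))) := by
    have := hasDerivAt_iff_tendsto_slope.mp hFd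
    exact this.mono_left (nhdsWithin_mono 1 (fun x hx => ne_of_lt hx))
  set Gf : ℝ → ℝ := fun r => (1 - C^2) * (1 + r) / (1 + C*r)^2 with hGf
  have hGt : Tendsto Gf (nhdsWithin 1 (Iio 1)) (nhds ((1 - C^2) * (1 + 1) / (1 + C*1)^2)) := by
    have hcont : ContinuousAt Gf 1 := by
      apply ContinuousAt.div
      · fun_prop
      · fun_prop
      · have : (0:ℝ) < (1 + C*1)^2 := by nlinarith
        exact this.ne'
    exact hcont.tendsto.mono_left nhdsWithin_le_nhds
  have hev : ∀ᶠ r in nhdsWithin 1 (Iio 1), Gf r ≤ slope F 1 r := by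
    filter_upwards [Ioo_mem_nhdsLT_of_mem (show (1:ℝ) ∈ Ioc (0:ℝ) 1 from ⟨zero_lt_one, le_refl 1⟩)]
      with r hr
    obtain ⟨hr0, hrlt⟩ := hr
    rw [slope_def_field, hF1]
    rw [le_div_iff_of_neg (by linarith : r - 1 < 0)]
    have hd1 : 0 < 1 + C*r := by nlinarith
    have hwr : ‖w r‖ ≤ (C + r) / (1 + C*r) := by
      have := schwarz_pick w hwdiff hwlt r hr0.le hrlt
      rw [hw0abs] at this
      rw [le_div_iff₀ hd1]
      linarith
    have hFr : F r ≤ ((C + r)/(1 + C*r))^2 := by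
      have h0 : (0:ℝ) ≤ (C + r)/(1 + C*r) := div_nonneg (by linarith) hd1.le
      simp only [hF]
      exact pow_le_pow_left₀ (norm_nonneg _) hwr 2
    have heq : Gf r * (r - 1) = ((C + r)/(1 + C*r))^2 - 1 := by
      simp only [hGf]
      field_simp
      ring
    linarith
  have hbound : (1 - C^2) * (1 + 1) / (1 + C*1)^2 ≤ 2 * (S.re / M^2) :=
    le_of_tendsto_of_tendsto hGt hslope hev
  -- imaginary part is zero
  have hWexp : HasDerivAt (fun z : ℂ => w (Complex.exp (z * Complex.I))) (D * Complex.I) 0 := by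
    have hin : HasDerivAt (fun z : ℂ => z * Complex.I) Complex.I 0 := by
      simpa using (hasDerivAt_id (0:ℂ)).mul_const Complex.I
    have hexp : HasDerivAt (fun z : ℂ => Complex.exp (z * Complex.I)) Complex.I 0 := by
      have := HasDerivAt.comp 0 (Complex.hasDerivAt_exp ((0:ℂ) * Complex.I)) hin
      simpa [Function.comp_def] using this
    have hW' : HasDerivAt w D (Complex.exp ((0:ℂ) * Complex.I)) := by
      simpa using hW
    have := HasDerivAt.comp 0 hW' hexp
    simpa [Function.comp_def] using this
  set Gθ : ℝ → ℝ := fun θ => ‖w (Complex.exp ((θ:ℂ) * Complex.I))‖^2 with hGθdef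
  have hGθd : HasDerivAt Gθ (2 * (-(S.im / M^2))) 0 := by
    have hφθ : HasDerivAt (fun θ : ℝ => w (Complex.exp ((θ:ℂ) * Complex.I))) (D * Complex.I) 0 :=
      hWexp.comp_ofReal
    have := hφθ.norm_sq
    have hre : (inner ℝ (w (Complex.exp (((0:ℝ):ℂ) * Complex.I))) (D * Complex.I) : ℝ)
        = -(S.im / M^2) := by
      rw [Complex.inner, mul_comm]
      rw [show Complex.exp (((0:ℝ):ℂ) * Complex.I) = 1 by simp]
      rw [← mul_assoc, hval]
      rw [show ((M:ℝ):ℂ)^2 = (((M^2 :ℝ)):ℂ) by push_cast; ring]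
      rw [Complex.mul_I_re]
      rw [Complex.div_ofReal_im]
    rwa [hre] at this
  have hGθmax : IsLocalMax Gθ 0 := by
    apply Filter.Eventually.of_forall
    intro θ
    have habs1 : ‖Complex.exp ((θ:ℂ) * Complex.I) * z₀‖ ≤ ‖z₀‖ := by
      rw [norm_mul, Complex.norm_exp]
      simp
    have hle : ‖g (Complex.exp ((θ:ℂ) * Complex.I) * z₀)‖ ≤ M := hmax _ habs1
    have hθval : Gθ θ ≤ 1 := by
      simp only [hGθdef, hw, norm_div, Complex.norm_real, Real.norm_eq_abs,
        _root_.abs_of_pos hM0]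
      rw [div_pow, div_le_one (by positivity)]
      exact pow_le_pow_left₀ (norm_nonneg _) hle 2
    have hθ0 : Gθ 0 = 1 := by
      simp only [hGθdef]
      rw [show Complex.exp (((0:ℝ):ℂ) * Complex.I) = 1 by simp]
      simpa [hF] using hF1
    rw [hθ0]; exact hθval
  have hSim : S.im = 0 := by
    have := hGθmax.hasDerivAt_eq_zero hGθd
    have hM2 : (0:ℝ) < M^2 := by positivity
    field_simp at this
    linarith [this]
  -- assemble
  refine ⟨S.re / M^2, ?_, ?_⟩
  · have hkey : (1 - C^2) * (1 + 1) / (1 + C*1)^2 = 2 * ((M - A)/(M + A)) := by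
      rw [hC]
      have hMA : M + A ≠ 0 := by positivity
      field_simp
      ring
    rw [hkey] at hbound
    linarith
  · have hgz : g z₀ ≠ 0 := by
      intro h
      apply hM0.ne'
      rw [hM, h]
      simp
    have hSre : S = ((S.re : ℝ) : ℂ) := by
      apply Complex.ext
      · simp
      · simp [hSim]
    have hmulc : g z₀ * S = ((M^2 : ℝ) : ℂ) * (z₀ * deriv g z₀) := by
      rw [hS, ← mul_assoc, Complex.mul_conj]
      rw [show ((M^2 : ℝ) : ℂ) = ((Complex.normSq (g z₀) : ℝ) : ℂ) by
        rw [← Complex.sq_norm]]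
    have hM2ne : ((M^2 : ℝ) : ℂ) ≠ 0 := by
      simp only [ne_eq, Complex.ofReal_eq_zero]
      positivity
    rw [show ((S.re / M^2 : ℝ) : ℂ) = S / ((M^2 : ℝ) : ℂ) by
      push_cast
      rw [← hSre]]
    rw [div_mul_eq_mul_div, eq_div_iff hM2ne]
    push_cast at hmulc ⊢
    linear_combination -hmulc
end

section
/- Let X be a complex Hilbert space with dim X ≥ m ≥ 2, α ∈ [0,1), and u₁,…,u_m ∈ X orthonormal. For analytic functions g₁,…,g_m on the unit disk U with g_j(0)=0, g_j'(0)=1, define Φ(g₁,…,g_m)(z) = z − Σ_j ⟨z,u_j⟩ u_j + Σ_j g_j(⟨z,u_j⟩) u_j on the unit ball B of X. Then Φ(g₁,…,g_m) satisfies ‖Df(z)⁻¹ D²f(z)(·,·)‖ ≤ 1−α for all z ∈ B if and only if each g_j satisfies |g_j''(ξ)/g_j'(ξ)| ≤ 1−α for all ξ ∈ U. -/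
/-- For orthonormal u₁,…,u_m and locally univalent analytic g_j on U with
g_j(0)=0, g_j'(0)=1, the mapping Φ(g₁,…,g_m)(z) = z − Σ⟨z,u_j⟩u_j + Σ g_j(⟨z,u_j⟩)u_j
satisfies ‖Df(z)⁻¹D²f(z)(·,·)‖ ≤ 1−α for all z ∈ B iff |g_j''/g_j'| ≤ 1−α on U for all j. -/
theorem stmt_13 {X : Type*} [NormedAddCommGroup X] [InnerProductSpace ℂ X] [CompleteSpace X]
    (m : ℕ) (hm : 2 ≤ m) (α : ℝ) (hα0 : 0 ≤ α) (hα1 : α < 1)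
    (u : Fin m → X) (hu : Orthonormal ℂ u)
    (g : Fin m → ℂ → ℂ)
    (hg : ∀ j, DifferentiableOn ℂ (g j) (Metric.ball (0 : ℂ) 1))
    (hg0 : ∀ j, g j 0 = 0) (hg1 : ∀ j, deriv (g j) 0 = 1)
    (hg' : ∀ j, ∀ ξ ∈ Metric.ball (0 : ℂ) 1, deriv (g j) ξ ≠ 0)
    (f : X → X)
    (hf : f = fun z => z - ∑ j : Fin m, (inner ℂ (u j) z : ℂ) • u j
      + ∑ j : Fin m, g j (inner ℂ (u j) z : ℂ) • u j) :
    (∀ z ∈ Metric.ball (0 : X) 1,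
      ∀ G : X →L[ℂ] X,
        (fderiv ℂ f z).comp G = ContinuousLinearMap.id ℂ X →
        G.comp (fderiv ℂ f z) = ContinuousLinearMap.id ℂ X →
        ∀ x y : X, ‖G (fderiv ℂ (fderiv ℂ f) z x y)‖ ≤ (1 - α) * (‖x‖ * ‖y‖)) ↔
    (∀ j, ∀ ξ ∈ Metric.ball (0 : ℂ) 1,
      ‖deriv (deriv (g j)) ξ / deriv (g j) ξ‖ ≤ 1 - α) := by
  classical
  have hinner : ∀ j k, (inner ℂ (u j) (u k) : ℂ) = if j = k then 1 else 0 :=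
    orthonormal_iff_ite.mp hu
  set φ : Fin m → (X →L[ℂ] ℂ) := fun j => innerSL ℂ (u j) with hφdef
  set R : Fin m → (X →L[ℂ] X) := fun j => (innerSL ℂ (u j)).smulRight (u j) with hRdef
  set Q : X →L[ℂ] X := ContinuousLinearMap.id ℂ X - ∑ j, R j with hQdef
  set S : (Fin m → ℂ) → X := fun c => ∑ j, c j • u j with hSdef
  have hφapp : ∀ j w, φ j w = (inner ℂ (u j) w : ℂ) := by intro j w; simp [hφdef]
  have hφu : ∀ j k, φ j (u k) = if j = k then 1 else 0 := by
    intro j k; rw [hφapp]; exact hinner j k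
  have hφS : ∀ (c : Fin m → ℂ) j, φ j (S c) = c j := by
    intro c j; rw [hφapp, hSdef]; exact hu.inner_right_fintype c j
  have hφQ : ∀ j w, φ j (Q w) = 0 := by
    intro j w
    simp only [hQdef, ContinuousLinearMap.sub_apply, ContinuousLinearMap.id_apply,
      ContinuousLinearMap.sum_apply, hRdef, ContinuousLinearMap.smulRight_apply, map_sub, map_sum,
      map_smul, innerSL_apply_apply]
    rw [sub_eq_zero]
    rw [Finset.sum_eq_single j]
    · simp [hφapp, hinner, hu.1 j]
    · intro k _ hk; simp [hφapp, hinner, Ne.symm hk]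
    · simp
  have hQS : ∀ c : Fin m → ℂ, Q (S c) = 0 := by
    intro c
    simp only [hQdef, ContinuousLinearMap.sub_apply, ContinuousLinearMap.id_apply,
      ContinuousLinearMap.sum_apply, hRdef, ContinuousLinearMap.smulRight_apply, innerSL_apply_apply]
    rw [sub_eq_zero, hSdef]
    simp only []
    exact (Finset.sum_congr rfl fun j _ => by
      rw [hu.inner_right_fintype c j]).symm
  have hw_decomp0 : ∀ w : X, w = Q w + S (fun j => φ j w) := by
    intro w
    simp [hQdef, hSdef, hRdef, hφapp, sub_add_eq_add_sub]
  have hQQ : ∀ w, Q (Q w) = Q w := by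
    intro w
    have h1 := congrArg Q (hw_decomp0 w)
    rw [map_add, hQS, add_zero] at h1
    exact h1.symm
  have hQu : ∀ k, Q (u k) = 0 := by
    intro k
    have h1 : S (fun j => if j = k then (1:ℂ) else 0) = u k := by
      simp only [hSdef]
      rw [Finset.sum_eq_single k]
      · simp
      · intro b _ hb; simp [hb]
      · simp
    rw [← h1, hQS]
  have hw_decomp : ∀ w : X, w = Q w + S (fun j => φ j w) := by
    intro w
    simp [hQdef, hSdef, hRdef, hφapp, sub_add_eq_add_sub]
  have hSnorm : ∀ c : Fin m → ℂ, ‖S c‖ ^ 2 = ∑ j, ‖c j‖ ^ 2 := by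
    intro c
    have h2 := inner_self_eq_norm_sq (𝕜 := ℂ) (S c)
    rw [← h2, hSdef]
    rw [hu.inner_sum c c Finset.univ, map_sum]
    refine Finset.sum_congr rfl fun j _ => ?_
    rw [RCLike.conj_mul]
    norm_cast
  -- the open set V
  set V : Set X := ⋂ j, (φ j) ⁻¹' (Metric.ball (0:ℂ) 1) with hVdef
  have hVopen : IsOpen V :=
    isOpen_iInter_of_finite fun j => (Metric.isOpen_ball).preimage (φ j).continuous
  have hVball : ∀ z ∈ V, ∀ j, φ j z ∈ Metric.ball (0:ℂ) 1 := by
    intro z hz j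
    exact Set.mem_iInter.mp hz j
  have hVmem : ∀ z ∈ Metric.ball (0:X) 1, z ∈ V := by
    intro z hz
    rw [hVdef, Set.mem_iInter]
    intro j
    simp only [Set.mem_preimage, Metric.mem_ball, dist_zero_right] at *
    calc ‖φ j z‖ ≤ ‖u j‖ * ‖z‖ := by rw [hφapp]; exact norm_inner_le_norm _ _
    _ = ‖z‖ := by rw [hu.1 j, one_mul]
    _ < 1 := hz
  -- analyticity
  have hgan : ∀ j, AnalyticOnNhd ℂ (g j) (Metric.ball (0:ℂ) 1) :=
    fun j => (hg j).analyticOnNhd Metric.isOpen_ball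
  have hgd : ∀ j, ∀ ξ ∈ Metric.ball (0:ℂ) 1, HasDerivAt (g j) (deriv (g j) ξ) ξ :=
    fun j ξ hξ => ((hgan j ξ hξ).differentiableAt).hasDerivAt
  have hg'd : ∀ j, ∀ ξ ∈ Metric.ball (0:ℂ) 1,
      HasDerivAt (deriv (g j)) (deriv (deriv (g j)) ξ) ξ :=
    fun j ξ hξ => (((hgan j).deriv ξ hξ).differentiableAt).hasDerivAt
  -- first derivative
  set A : X → (X →L[ℂ] X) := fun z => Q + ∑ j, deriv (g j) (φ j z) • R j with hAdef
  have hfA : ∀ z ∈ V, HasFDerivAt f (A z) z := by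
    intro z hz
    have h1 : ∀ j : Fin m,
        HasFDerivAt (fun w => g j (φ j w) • u j) (deriv (g j) (φ j z) • R j) z := by
      intro j
      have h2 : HasFDerivAt (fun w => g j (φ j w))
          ((deriv (g j) (φ j z)) • (φ j : X →L[ℂ] ℂ)) z :=
        HasDerivAt.comp_hasFDerivAt z (hgd j _ (hVball z hz j)) ((φ j).hasFDerivAt)
      have h3 := h2.smul_const (u j)
      refine h3.congr_fderiv ?_
      ext x
      simp [hRdef, hφapp, smul_smul, mul_comm]
    have h4 : HasFDerivAt (fun w => Q w + ∑ j, g j (φ j w) • u j) (A z) z := by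
      rw [hAdef]
      exact Q.hasFDerivAt.add (HasFDerivAt.fun_sum (fun j _ => h1 j))
    refine h4.congr_of_eventuallyEq (Filter.Eventually.of_forall fun w => ?_)
    rw [hf]
    simp [hQdef, hRdef, hφapp, ContinuousLinearMap.sum_apply]
  have hfd : ∀ z ∈ V, fderiv ℂ f z = A z := fun z hz => (hfA z hz).fderiv
  -- second derivative
  set B : X → (X →L[ℂ] (X →L[ℂ] X)) := fun z =>
    ∑ j, ((deriv (deriv (g j)) (φ j z)) • (φ j : X →L[ℂ] ℂ)).smulRight (R j) with hBdef
  have hAB : ∀ z ∈ V, HasFDerivAt A (B z) z := by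
    intro z hz
    have h1 : ∀ j : Fin m, HasFDerivAt (fun w => deriv (g j) (φ j w) • R j)
        (((deriv (deriv (g j)) (φ j z)) • (φ j : X →L[ℂ] ℂ)).smulRight (R j)) z := by
      intro j
      have h2 : HasFDerivAt (fun w => deriv (g j) (φ j w))
          ((deriv (deriv (g j)) (φ j z)) • (φ j : X →L[ℂ] ℂ)) z :=
        HasDerivAt.comp_hasFDerivAt z (hg'd j _ (hVball z hz j)) ((φ j).hasFDerivAt)
      exact h2.smul_const (R j)
    rw [hAdef, hBdef]
    simpa using (hasFDerivAt_const Q z).fun_add (HasFDerivAt.fun_sum (u := Finset.univ) (fun j _ => h1 j))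
  have hffd : ∀ z ∈ V, fderiv ℂ (fderiv ℂ f) z = B z := by
    intro z hz
    have hev : fderiv ℂ f =ᶠ[nhds z] A :=
      Filter.eventuallyEq_of_mem (hVopen.mem_nhds hz) hfd
    exact ((hAB z hz).congr_of_eventuallyEq hev).fderiv
  -- formulas for applications
  have hBapp : ∀ z x y, B z x y =
      S (fun j => deriv (deriv (g j)) (φ j z) * (φ j x * φ j y)) := by
    intro z x y
    rw [hBdef, hSdef]
    simp [ContinuousLinearMap.sum_apply, ContinuousLinearMap.smul_apply,
      ContinuousLinearMap.smulRight_apply, hRdef, hφapp, smul_smul, mul_assoc]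
  have hAapp : ∀ z w, A z w = Q w + S (fun j => deriv (g j) (φ j z) * φ j w) := by
    intro z w
    rw [hAdef, hSdef]
    simp [ContinuousLinearMap.add_apply, ContinuousLinearMap.sum_apply,
      ContinuousLinearMap.smul_apply, ContinuousLinearMap.smulRight_apply, hRdef, hφapp, smul_smul]
  set Ginv : X → (X →L[ℂ] X) := fun z => Q + ∑ j, (deriv (g j) (φ j z))⁻¹ • R j with hGdef
  have hGapp : ∀ z w, Ginv z w = Q w + S (fun j => (deriv (g j) (φ j z))⁻¹ * φ j w) := by
    intro z w
    rw [hGdef, hSdef]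
    simp [ContinuousLinearMap.add_apply, ContinuousLinearMap.sum_apply,
      ContinuousLinearMap.smul_apply, ContinuousLinearMap.smulRight_apply, hRdef, hφapp, smul_smul]
  have hφdec : ∀ (w : X) (c : Fin m → ℂ) j, φ j (Q w + S c) = c j := by
    intro w c j; rw [map_add, hφQ, hφS, zero_add]
  have hQdec : ∀ (w : X) (c : Fin m → ℂ), Q (Q w + S c) = Q w := by
    intro w c; rw [map_add, hQQ, hQS, add_zero]
  have hcompAG : ∀ z ∈ V, ∀ w, A z (Ginv z w) = w := by
    intro z hz w
    rw [hGapp, hAapp, hQdec]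
    simp only [hφdec]
    have hfun : (fun j => deriv (g j) (φ j z) * ((deriv (g j) (φ j z))⁻¹ * φ j w))
        = fun j => φ j w := by
      funext j
      rw [← mul_assoc, mul_inv_cancel₀ (hg' j _ (hVball z hz j)), one_mul]
    rw [hfun]
    exact (hw_decomp w).symm
  have hcompGA : ∀ z ∈ V, ∀ w, Ginv z (A z w) = w := by
    intro z hz w
    rw [hAapp, hGapp, hQdec]
    simp only [hφdec]
    have hfun : (fun j => (deriv (g j) (φ j z))⁻¹ * (deriv (g j) (φ j z) * φ j w))
        = fun j => φ j w := by
      funext j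
      rw [← mul_assoc, inv_mul_cancel₀ (hg' j _ (hVball z hz j)), one_mul]
    rw [hfun]
    exact (hw_decomp w).symm
  have hAGc : ∀ z ∈ V, (A z).comp (Ginv z) = ContinuousLinearMap.id ℂ X := by
    intro z hz; ext w; simpa using hcompAG z hz w
  have hGAc : ∀ z ∈ V, (Ginv z).comp (A z) = ContinuousLinearMap.id ℂ X := by
    intro z hz; ext w; simpa using hcompGA z hz w
  have hGeq : ∀ z ∈ V, ∀ G : X →L[ℂ] X,
      G.comp (A z) = ContinuousLinearMap.id ℂ X → G = Ginv z := by
    intro z hz G h2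
    have h3 := congrArg (fun T : X →L[ℂ] X => T.comp (Ginv z)) h2
    simpa [ContinuousLinearMap.comp_assoc, hAGc z hz] using h3
  constructor
  · -- forward
    intro h j ξ hξ
    set z : X := ξ • u j with hzdef
    have hz1 : z ∈ Metric.ball (0:X) 1 := by
      rw [Metric.mem_ball, dist_zero_right, hzdef, norm_smul, hu.1 j, mul_one]
      exact mem_ball_zero_iff.mp hξ
    have hzV : z ∈ V := hVmem z hz1
    have hφz : ∀ k, φ k z = if k = j then ξ else 0 := by
      intro k
      rw [hzdef, map_smul]
      simp [hφu, mul_ite]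
    have hc1 : (fderiv ℂ f z).comp (Ginv z) = ContinuousLinearMap.id ℂ X := by
      rw [hfd z hzV]; exact hAGc z hzV
    have hc2 : (Ginv z).comp (fderiv ℂ f z) = ContinuousLinearMap.id ℂ X := by
      rw [hfd z hzV]; exact hGAc z hzV
    have key := h z hz1 (Ginv z) hc1 hc2 (u j) (u j)
    rw [hffd z hzV, hBapp] at key
    have hSe : S (fun k => deriv (deriv (g k)) (φ k z) * (φ k (u j) * φ k (u j)))
        = deriv (deriv (g j)) ξ • u j := by
      simp only [hSdef]
      rw [Finset.sum_eq_single j]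
      · simp [hφu, hφz]
      · intro k _ hk; simp [hφu, hk]
      · simp
    rw [hSe] at key
    have hGu : Ginv z (deriv (deriv (g j)) ξ • u j)
        = (deriv (deriv (g j)) ξ * (deriv (g j) ξ)⁻¹) • u j := by
      rw [map_smul, hGapp, hQu, zero_add]
      simp only [hSdef]
      rw [Finset.sum_eq_single j]
      · simp [hφu, hφz, smul_smul, mul_comm]
      · intro k _ hk; simp [hφu, hk]
      · simp
    rw [hGu] at key
    rw [norm_smul, hu.1 j, mul_one] at key
    have : ‖deriv (deriv (g j)) ξ / deriv (g j) ξ‖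
        = ‖deriv (deriv (g j)) ξ * (deriv (g j) ξ)⁻¹‖ := by
      rw [div_eq_mul_inv]
    rw [this]
    simpa using key
  · -- backward
    intro h z hz G hG1 hG2 x y
    have hzV : z ∈ V := hVmem z hz
    have hGeq' : G = Ginv z := hGeq z hzV G (by rwa [hfd z hzV] at hG2)
    rw [hGeq', hffd z hzV, hBapp, hGapp, hQS, zero_add]
    simp only [hφS]
    have h1mα : (0:ℝ) ≤ 1 - α := by linarith
    have hrhs : (0:ℝ) ≤ (1-α)*(‖x‖*‖y‖) := by positivity
    have hterm : ∀ j : Fin m,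
        ‖(deriv (g j) (φ j z))⁻¹ * (deriv (deriv (g j)) (φ j z) * (φ j x * φ j y))‖^2
        ≤ (1-α)^2 * (‖φ j x‖^2 * ‖φ j y‖^2) := by
      intro j
      have hrat : ‖(deriv (g j) (φ j z))⁻¹ * deriv (deriv (g j)) (φ j z)‖ ≤ 1 - α := by
        have h5 := h j (φ j z) (hVball z hzV j)
        rw [div_eq_mul_inv] at h5
        calc ‖(deriv (g j) (φ j z))⁻¹ * deriv (deriv (g j)) (φ j z)‖
            = ‖deriv (deriv (g j)) (φ j z) * (deriv (g j) (φ j z))⁻¹‖ := by rw [mul_comm]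
        _ = ‖deriv (deriv (g j)) (φ j z) * (deriv (g j) (φ j z))⁻¹‖ := rfl
        _ ≤ 1 - α := h5
      have heq : (deriv (g j) (φ j z))⁻¹ * (deriv (deriv (g j)) (φ j z) * (φ j x * φ j y))
          = ((deriv (g j) (φ j z))⁻¹ * deriv (deriv (g j)) (φ j z)) * (φ j x * φ j y) := by ring
      have h6 : ‖(deriv (g j) (φ j z))⁻¹ * (deriv (deriv (g j)) (φ j z) * (φ j x * φ j y))‖
          ≤ (1-α) * (‖φ j x‖ * ‖φ j y‖) := by
        rw [heq, norm_mul, norm_mul (φ j x) (φ j y)]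
        exact mul_le_mul_of_nonneg_right hrat (by positivity)
      calc ‖(deriv (g j) (φ j z))⁻¹ * (deriv (deriv (g j)) (φ j z) * (φ j x * φ j y))‖^2
          ≤ ((1-α) * (‖φ j x‖ * ‖φ j y‖))^2 := pow_le_pow_left₀ (norm_nonneg _) h6 2
      _ = (1-α)^2 * (‖φ j x‖^2 * ‖φ j y‖^2) := by ring
    have hbx : ∑ j : Fin m, ‖φ j x‖^2 ≤ ‖x‖^2 := by
      have := hu.sum_inner_products_le (s := Finset.univ) x
      simpa [hφapp] using this
    have hby : ∑ j : Fin m, ‖φ j y‖^2 ≤ ‖y‖^2 := by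
      have := hu.sum_inner_products_le (s := Finset.univ) y
      simpa [hφapp] using this
    have hnorm2 : ‖S (fun j => (deriv (g j) (φ j z))⁻¹
        * (deriv (deriv (g j)) (φ j z) * (φ j x * φ j y)))‖^2 ≤ ((1-α)*(‖x‖*‖y‖))^2 := by
      rw [hSnorm]
      calc ∑ j : Fin m, ‖(deriv (g j) (φ j z))⁻¹
            * (deriv (deriv (g j)) (φ j z) * (φ j x * φ j y))‖^2
          ≤ ∑ j : Fin m, (1-α)^2 * (‖φ j x‖^2 * ‖φ j y‖^2) :=
            Finset.sum_le_sum fun j _ => hterm j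
      _ = (1-α)^2 * ∑ j : Fin m, ‖φ j x‖^2 * ‖φ j y‖^2 := by rw [Finset.mul_sum]
      _ ≤ (1-α)^2 * ((∑ j : Fin m, ‖φ j x‖^2) * (∑ j : Fin m, ‖φ j y‖^2)) := by
          refine mul_le_mul_of_nonneg_left ?_ (by positivity)
          calc ∑ j : Fin m, ‖φ j x‖^2 * ‖φ j y‖^2
              ≤ ∑ j : Fin m, ‖φ j x‖^2 * ∑ k : Fin m, ‖φ k y‖^2 :=
                Finset.sum_le_sum fun j _ => mul_le_mul_of_nonneg_left
                  (Finset.single_le_sum (f := fun k => ‖φ k y‖^2) (fun k _ => by positivity) (Finset.mem_univ j))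
                  (by positivity)
          _ = (∑ j : Fin m, ‖φ j x‖^2) * (∑ j : Fin m, ‖φ j y‖^2) := by
                rw [Finset.sum_mul]
      _ ≤ (1-α)^2 * (‖x‖^2 * ‖y‖^2) := by
          refine mul_le_mul_of_nonneg_left ?_ (by positivity)
          exact mul_le_mul hbx hby (by positivity) (by positivity)
      _ = ((1-α)*(‖x‖*‖y‖))^2 := by ring
    exact (pow_le_pow_iff_left₀ (norm_nonneg _) hrhs (by norm_num)).mp hnorm2
end

section
/- Let X be a complex Hilbert space with dim X ≥ m ≥ 2, α ∈ [0,1), u₁,…,u_m ∈ X orthonormal, and g₁,…,g_m locally univalent analytic on the unit disk with g_j(0)=0, g_j'(0)=1. If f(z) = z − Σ_j ⟨z,u_j⟩ u_j + Σ_j g_j(⟨z,u_j⟩) u_j is a biholomorphic convex mapping of order α on the unit ball B of X, then each g_j is a convex function of order α on the unit disk, i.e., Re(1 + ξ g_j''(ξ)/g_j'(ξ)) > α for all ξ ∈ U. -/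
open Metric ContinuousLinearMap Finset

set_option maxHeartbeats 1000000
set_option maxRecDepth 8000

/-- If f = Φ(g₁,…,g_m) is a biholomorphic convex mapping of order α on B,
then each g_j is a convex function of order α on the unit disk. -/
theorem stmt_14 {X : Type*} [NormedAddCommGroup X] [InnerProductSpace ℂ X] [CompleteSpace X]
    (m : ℕ) (hm : 2 ≤ m) (α : ℝ) (hα0 : 0 ≤ α) (hα1 : α < 1)
    (u : Fin m → X) (hu : Orthonormal ℂ u)
    (g : Fin m → ℂ → ℂ)
    (hg : ∀ j, DifferentiableOn ℂ (g j) (Metric.ball (0 : ℂ) 1))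
    (hg0 : ∀ j, g j 0 = 0) (hg1 : ∀ j, deriv (g j) 0 = 1)
    (hg' : ∀ j, ∀ ξ ∈ Metric.ball (0 : ℂ) 1, deriv (g j) ξ ≠ 0)
    (f : X → X)
    (hf : f = fun z => z - ∑ j : Fin m, (inner ℂ (u j) z : ℂ) • u j
      + ∑ j : Fin m, g j (inner ℂ (u j) z : ℂ) • u j)
    (hconv : IsConvexMappingOfOrder f α) :
    ∀ j, ∀ ξ ∈ Metric.ball (0 : ℂ) 1,
      α < (1 + ξ * deriv (deriv (g j)) ξ / deriv (g j) ξ).re := by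
  intro j ξ hξ
  rcases eq_or_ne ξ 0 with rfl | hξ0
  · simpa using hα1
  set L : Fin m → X →L[ℂ] ℂ := fun k => innerSL ℂ (u k) with hL
  set T : Fin m → X →L[ℂ] X := fun k => (L k).smulRight (u k) with hT
  have hmem : ∀ w ∈ ball (0:X) 1, ∀ k, L k w ∈ ball (0:ℂ) 1 := by
    intro w hw k
    simp only [mem_ball, dist_zero_right] at hw ⊢
    calc ‖L k w‖ ≤ ‖u k‖ * ‖w‖ := norm_inner_le_norm _ _
      _ ≤ 1 * ‖w‖ := by rw [hu.1 k]
      _ < 1 := by simpa using hw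
  have hgd : ∀ k, ∀ ζ ∈ ball (0:ℂ) 1, DifferentiableAt ℂ (g k) ζ := fun k ζ hζ =>
    (hg k).differentiableAt (isOpen_ball.mem_nhds hζ)
  -- first derivative of f on the ball
  have hFder : ∀ w ∈ ball (0:X) 1, HasFDerivAt f
      (ContinuousLinearMap.id ℂ X + ∑ k, (deriv (g k) (L k w) - 1) • T k) w := by
    intro w hw
    have h1 : HasFDerivAt (fun z : X => ∑ k, (inner ℂ (u k) z : ℂ) • u k) (∑ k, T k) w :=
      HasFDerivAt.fun_sum fun k _ => ((L k).hasFDerivAt).smul_const (u k)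
    have h2 : HasFDerivAt (fun z : X => ∑ k, g k (inner ℂ (u k) z : ℂ) • u k)
        (∑ k, (deriv (g k) (L k w)) • T k) w := by
      apply HasFDerivAt.fun_sum
      intro k _
      have hgk : HasDerivAt (g k) (deriv (g k) (L k w)) (L k w) :=
        (hgd k _ (hmem w hw k)).hasDerivAt
      have h3 := (hgk.comp_hasFDerivAt w ((L k).hasFDerivAt)).smul_const (u k)
      convert h3 using 1
      · rfl
      ext y
      simp [hT, mul_smul]
    have h4 := ((hasFDerivAt_id w).sub h1).add h2
    rw [hf]
    convert h4 using 1
    · rfl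
    ext y
    simp [hT, sub_smul, Finset.sum_sub_distrib, smul_smul]
    abel
  -- the point z and direction x
  set z : X := ξ • u j with hzdef
  set x : X := (Complex.I * ξ) • u j with hxdef
  have hnuj : ‖u j‖ = 1 := hu.1 j
  have hz : z ∈ ball (0:X) 1 := by
    simp only [mem_ball, dist_zero_right, hzdef, norm_smul, hnuj, mul_one]
    simpa using hξ
  have huu : (inner ℂ (u j) (u j) : ℂ) = 1 := by
    simpa using orthonormal_iff_ite.mp hu j j
  have hLz : ∀ k, L k z = if k = j then ξ else 0 := by
    intro k
    simp only [hL, hzdef, innerSL_apply_apply, inner_smul_right]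
    rw [orthonormal_iff_ite.mp hu]
    split <;> simp
  have hLx : ∀ k, L k x = if k = j then Complex.I * ξ else 0 := by
    intro k
    simp only [hL, hxdef, innerSL_apply_apply, inner_smul_right]
    rw [orthonormal_iff_ite.mp hu]
    split <;> simp
  -- fderiv f z collapses
  have hA : fderiv ℂ f z = ContinuousLinearMap.id ℂ X + (deriv (g j) ξ - 1) • T j := by
    rw [(hFder z hz).fderiv]
    congr 1
    rw [Finset.sum_eq_single j]
    · rw [hLz, if_pos rfl]
    · intro k _ hk
      rw [hLz, if_neg hk, hg1 k, sub_self, zero_smul]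
    · intro h; exact absurd (Finset.mem_univ j) h
  -- second derivative
  set F : X → X →L[ℂ] X := fun w =>
    ContinuousLinearMap.id ℂ X + ∑ k, (deriv (g k) (L k w) - 1) • T k with hFdef
  have hga : ∀ k, AnalyticOnNhd ℂ (g k) (ball (0:ℂ) 1) := fun k =>
    (hg k).analyticOnNhd isOpen_ball
  have hfe : fderiv ℂ f =ᶠ[nhds z] F := by
    filter_upwards [isOpen_ball.mem_nhds hz] with w hw
    exact (hFder w hw).fderiv
  have hF' : HasFDerivAt F
      (∑ k, ((deriv (deriv (g k)) (L k z)) • (L k)).smulRight (T k)) z := by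
    have h5 : HasFDerivAt (fun w => ∑ k, (deriv (g k) (L k w) - 1) • T k)
        (∑ k, ((deriv (deriv (g k)) (L k z)) • (L k)).smulRight (T k)) z := by
      apply HasFDerivAt.fun_sum
      intro k _
      have hdk : DifferentiableAt ℂ (deriv (g k)) (L k z) :=
        ((hga k).deriv _ (hmem z hz k)).differentiableAt
      exact ((hdk.hasDerivAt.sub_const 1).comp_hasFDerivAt z
        ((L k).hasFDerivAt)).smul_const (T k)
    exact h5.const_add _
  have hB : fderiv ℂ (fderiv ℂ f) z x x
      = (deriv (deriv (g j)) ξ * (Complex.I * ξ) * (Complex.I * ξ)) • u j := by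
    rw [hfe.fderiv_eq, hF'.fderiv]
    simp only [ContinuousLinearMap.sum_apply, ContinuousLinearMap.smulRight_apply,
      ContinuousLinearMap.smul_apply, smul_eq_mul, hT, smul_smul]
    rw [Finset.sum_eq_single j]
    · rw [hLz, hLx, if_pos rfl, if_pos rfl]
    · intro k _ hk
      rw [hLx, if_neg hk]
      simp
    · intro h; exact absurd (Finset.mem_univ j) h
  -- the inverse of fderiv f z
  have hgj : deriv (g j) ξ ≠ 0 := hg' j ξ hξ
  set G : X →L[ℂ] X := ContinuousLinearMap.id ℂ X + ((deriv (g j) ξ)⁻¹ - 1) • T j with hGdef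
  have hTidem : ∀ y : X, T j (T j y) = T j y := by
    intro y
    simp [hT, hL, inner_smul_right, huu, smul_smul, hnuj]
  have hcompgen : ∀ a b : ℂ, a + b + a * b = 0 →
      (ContinuousLinearMap.id ℂ X + a • T j).comp (ContinuousLinearMap.id ℂ X + b • T j)
        = ContinuousLinearMap.id ℂ X := by
    intro a b hab
    ext y
    simp only [ContinuousLinearMap.comp_apply, ContinuousLinearMap.add_apply,
      ContinuousLinearMap.id_apply, ContinuousLinearMap.smul_apply, map_add,
      ContinuousLinearMap.map_smul, hTidem]
    have hy : y + a • T j y + (b • T j y + a • b • T j y)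
        = y + (a + b + a * b) • T j y := by
      rw [smul_smul, add_smul, add_smul]; abel
    rw [hy, hab, zero_smul, add_zero]
  have hcomp1 : (fderiv ℂ f z).comp G = ContinuousLinearMap.id ℂ X := by
    rw [hA, hGdef]
    exact hcompgen _ _ (by field_simp; ring)
  have hcomp2 : G.comp (fderiv ℂ f z) = ContinuousLinearMap.id ℂ X := by
    rw [hA, hGdef]
    exact hcompgen _ _ (by field_simp; ring)
  -- apply convexity condition
  have hz0 : z ≠ 0 := by
    simp only [hzdef, smul_ne_zero_iff]
    refine ⟨hξ0, fun h => by simp [h] at hnuj⟩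
  have hx0 : x ≠ 0 := by
    simp only [hxdef, smul_ne_zero_iff]
    exact ⟨mul_ne_zero Complex.I_ne_zero hξ0, fun h => by simp [h] at hnuj⟩
  have hRe : (inner ℂ x z : ℂ).re = 0 := by
    simp only [hxdef, hzdef, inner_smul_left, inner_smul_right, huu, mul_one]
    simp [Complex.mul_re, Complex.conj_re, Complex.conj_im]
    ring
  have key := hconv.2.2.2.2 z hz hz0 x hx0 hRe G hcomp1 hcomp2
  -- compute the inner product
  have hGB : G (fderiv ℂ (fderiv ℂ f) z x x)
      = ((deriv (deriv (g j)) ξ * (Complex.I * ξ) * (Complex.I * ξ)) / deriv (g j) ξ) • u j := by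
    rw [hB, hGdef]
    simp only [ContinuousLinearMap.add_apply, ContinuousLinearMap.id_apply,
      ContinuousLinearMap.smul_apply, hT, ContinuousLinearMap.smulRight_apply,
      hL, innerSL_apply_apply, inner_smul_right, huu, mul_one, smul_smul]
    rw [← add_smul]
    congr 1
    field_simp
    ring
  rw [hGB] at key
  have hxnorm : ‖x‖ ^ 2 = Complex.normSq ξ := by
    rw [hxdef, norm_smul, hnuj, mul_one, norm_mul, Complex.norm_I, one_mul,
      Complex.sq_norm]
  have hinner : (inner ℂ (((deriv (deriv (g j)) ξ * (Complex.I * ξ) * (Complex.I * ξ))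
      / deriv (g j) ξ) • u j) z : ℂ).re
      = - Complex.normSq ξ * (ξ * deriv (deriv (g j)) ξ / deriv (g j) ξ).re := by
    set c := deriv (deriv (g j)) ξ
    set d := deriv (g j) ξ
    rw [hzdef, inner_smul_left, inner_smul_right, huu, mul_one]
    have h1 : (starRingEnd ℂ) (c * (Complex.I * ξ) * (Complex.I * ξ) / d) * ξ
        = (starRingEnd ℂ) ((c * (Complex.I * ξ) * (Complex.I * ξ) / d) * (starRingEnd ℂ) ξ) := by
      rw [map_mul, Complex.conj_conj]
    rw [h1, Complex.conj_re]
    have h2 : (c * (Complex.I * ξ) * (Complex.I * ξ) / d) * (starRingEnd ℂ) ξ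
        = (-(Complex.normSq ξ) : ℝ) * (ξ * c / d) := by
      push_cast
      rw [← Complex.mul_conj]
      field_simp
      linear_combination (c * (starRingEnd ℂ) ξ) * Complex.I_sq
    rw [h2, Complex.re_ofReal_mul]
  rw [hxnorm, hinner] at key
  have hns : (0:ℝ) < Complex.normSq ξ := Complex.normSq_pos.mpr hξ0
  have hns2 := hns
  have : α < 1 + (ξ * deriv (deriv (g j)) ξ / deriv (g j) ξ).re := by
    nlinarith [key, hns]
  simpa [Complex.add_re] using this
end

section
/- Let α ∈ [0,1) and define h(ξ) = (1 − (1−ξ)^{2α−1})/(2α−1) if α ≠ 1/2 and h(ξ) = −log(1−ξ) if α = 1/2, for ξ in the unit disk U. Then Re(1 + ξ h''(ξ)/h'(ξ)) > α for all ξ ∈ U (h is convex of order α), but for any complex Hilbert space X with dim X ≥ 2 and orthonormal u₁,…,u_m (m ≥ 2), the mapping F(z) = z − Σ_j ⟨z,u_j⟩ u_j + Σ_j h(⟨z,u_j⟩) u_j is NOT a biholomorphic convex mapping of order α on the unit ball B of X. -/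
open Complex Finset

noncomputable section


lemma hpow_deriv (d : ℂ) (ξ : ℂ) (hξ : 1 - ξ ∈ Complex.slitPlane) :
    HasDerivAt (fun ζ : ℂ => (1 - ζ) ^ d) (-(d * (1 - ξ) ^ (d - 1))) ξ := by
  have h1 : HasDerivAt (fun ζ : ℂ => 1 - ζ) (-1) ξ := (hasDerivAt_id ξ).const_sub 1
  have := h1.cpow_const (c := d) hξ
  simpa using this

lemma hfun_deriv (α : ℝ) (h : ℂ → ℂ)
    (hh : h = fun ξ => if α = 1 / 2 then -Complex.log (1 - ξ)
      else (1 - (1 - ξ) ^ (((2 * α - 1 : ℝ)) : ℂ)) / ((2 * α - 1 : ℝ) : ℂ))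
    (ξ : ℂ) (hξ : 1 - ξ ∈ Complex.slitPlane) :
    HasDerivAt h ((1 - ξ) ^ ((((2 * α - 1 : ℝ)) : ℂ) - 1)) ξ := by
  subst hh
  by_cases hα : α = 1 / 2
  · simp only [hα, if_pos rfl]
    have h1 : HasDerivAt (fun ζ : ℂ => 1 - ζ) (-1) ξ := (hasDerivAt_id ξ).const_sub 1
    have h2 := (Complex.hasDerivAt_log hξ).comp ξ h1
    have h3 := h2.neg
    rw [show ((((2 * (1/2 : ℝ) - 1 : ℝ)) : ℂ) - 1) = -1 by norm_num, Complex.cpow_neg_one]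
    exact h3.congr_deriv (by ring)
  · simp only [if_neg hα]
    set c : ℂ := (((2 * α - 1 : ℝ)) : ℂ) with hc
    have hcne : c ≠ 0 := by
      simp only [hc, ne_eq, Complex.ofReal_eq_zero]
      intro hcon; apply hα; linarith
    have h2 := hpow_deriv c ξ hξ
    have h3 := (h2.const_sub 1).div_const c
    refine h3.congr_deriv ?_
    field_simp

lemma slit_of_lt_one {ξ : ℂ} (hξ : ‖ξ‖ < 1) : 1 - ξ ∈ Complex.slitPlane := by
  rw [Complex.mem_slitPlane_iff]
  left
  have := Complex.abs_re_le_norm ξ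
  simp only [Complex.sub_re, Complex.one_re]
  have : ξ.re ≤ |ξ.re| := le_abs_self _
  linarith [Complex.abs_re_le_norm ξ]

lemma part1 (α : ℝ) (hα1 : α < 1) (h : ℂ → ℂ)
    (hh : h = fun ξ => if α = 1 / 2 then -Complex.log (1 - ξ)
      else (1 - (1 - ξ) ^ (((2 * α - 1 : ℝ)) : ℂ)) / ((2 * α - 1 : ℝ) : ℂ))
    (ξ : ℂ) (hξ : ξ ∈ Metric.ball (0 : ℂ) 1) :
    α < (1 + ξ * deriv (deriv h) ξ / deriv h ξ).re := by
  rw [Metric.mem_ball, dist_zero_right] at hξ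
  have habs : ‖ξ‖ < 1 := hξ
  have hslit : 1 - ξ ∈ Complex.slitPlane := slit_of_lt_one habs
  have hbne : (1 : ℂ) - ξ ≠ 0 := Complex.slitPlane_ne_zero hslit
  set c : ℂ := (((2 * α - 1 : ℝ)) : ℂ) with hc
  have h1 : deriv h ξ = (1 - ξ) ^ (c - 1) := (hfun_deriv α h hh ξ hslit).deriv
  have hev : deriv h =ᶠ[nhds ξ] fun ζ => (1 - ζ) ^ (c - 1) := by
    have hopen : IsOpen {ζ : ℂ | 1 - ζ ∈ Complex.slitPlane} :=
      Complex.isOpen_slitPlane.preimage (continuous_const.sub continuous_id)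
    filter_upwards [hopen.mem_nhds hslit] with ζ hζ
    exact (hfun_deriv α h hh ζ hζ).deriv
  have h2 : deriv (deriv h) ξ = -((c - 1) * (1 - ξ) ^ (c - 1 - 1)) := by
    rw [hev.deriv_eq]
    exact (hpow_deriv (c - 1) ξ hslit).deriv
  rw [h1, h2]
  have hpne : (1 - ξ) ^ (c - 1) ≠ 0 := by
    intro hcon
    rw [Complex.cpow_eq_zero_iff] at hcon
    exact hbne hcon.1
  have hkey : (1 : ℂ) + ξ * -((c - 1) * (1 - ξ) ^ (c - 1 - 1)) / (1 - ξ) ^ (c - 1)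
      = 1 + ξ * (1 - c) / (1 - ξ) := by
    rw [show c - 1 - 1 = (c - 1) - 1 by ring, Complex.cpow_sub _ _ hbne, Complex.cpow_one]
    field_simp
    ring
  rw [hkey]
  -- real-part computation
  have hn : ξ.re ^ 2 + ξ.im ^ 2 < 1 := by
    have := Complex.sq_norm ξ
    rw [Complex.normSq_apply] at this
    nlinarith [habs, norm_nonneg ξ]
  have hD : 0 < (1 - ξ.re) ^ 2 + ξ.im ^ 2 := by
    rcases eq_or_ne ξ.im 0 with him | him
    · have : ξ.re < 1 := by nlinarith
      nlinarith
    · positivity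
  have h1c : (1 : ℂ) - c = ((2 - 2 * α : ℝ) : ℂ) := by
    rw [hc]; push_cast; ring
  rw [h1c]
  have hre : ((1 : ℂ) + ξ * ((2 - 2*α : ℝ) : ℂ) / (1 - ξ)).re
      = 1 + (2 - 2*α) * ((ξ.re * (1 - ξ.re) + ξ.im * (-ξ.im)) / ((1 - ξ.re)^2 + ξ.im^2)) := by
    rw [Complex.add_re, Complex.one_re, Complex.div_re]
    simp [Complex.normSq_apply, Complex.mul_re, Complex.mul_im, Complex.sub_re, Complex.sub_im,
      Complex.one_re, Complex.one_im, Complex.ofReal_re, Complex.ofReal_im]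
    have hD' : (1-ξ.re)*(1-ξ.re)+ξ.im*ξ.im ≠ 0 := by nlinarith
    field_simp
  rw [hre]
  rw [div_eq_mul_inv]
  have hDinv : 0 < ((1 - ξ.re)^2 + ξ.im^2)⁻¹ := inv_pos.mpr hD
  have hgoal : (1 - α) * ((1 - ξ.re)^2 + ξ.im^2) + (2 - 2*α) * (ξ.re * (1 - ξ.re) + ξ.im * (-ξ.im))
      = (1 - α) * (1 - (ξ.re^2 + ξ.im^2)) := by ring
  nlinarith [mul_pos (mul_pos (sub_pos.mpr hα1) (sub_pos.mpr hn)) hDinv,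
    mul_inv_cancel₀ (ne_of_gt hD)]

lemma sum_two {m : ℕ} {β : Type*} [AddCommMonoid β] (f : Fin m → β) (j0 j1 : Fin m)
    (hne : j0 ≠ j1) (hz : ∀ j, j ≠ j0 → j ≠ j1 → f j = 0) :
    ∑ j, f j = f j0 + f j1 := by
  rw [← Finset.sum_subset (Finset.subset_univ {j0, j1})]
  · rw [Finset.sum_pair hne]
  · intro x _ hx
    simp only [Finset.mem_insert, Finset.mem_singleton, not_or] at hx
    exact hz x hx.1 hx.2

lemma part2 {X : Type*} [NormedAddCommGroup X] [InnerProductSpace ℂ X] [CompleteSpace X]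
    (m : ℕ) (hm : 2 ≤ m) (α : ℝ) (hα0 : 0 ≤ α) (hα1 : α < 1)
    (u : Fin m → X) (hu : Orthonormal ℂ u)
    (h : ℂ → ℂ)
    (hh : h = fun ξ => if α = 1 / 2 then -Complex.log (1 - ξ)
      else (1 - (1 - ξ) ^ (((2 * α - 1 : ℝ)) : ℂ)) / ((2 * α - 1 : ℝ) : ℂ))
    (F : X → X)
    (hF : F = fun z => z - ∑ j : Fin m, (inner ℂ (u j) z : ℂ) • u j
      + ∑ j : Fin m, h (inner ℂ (u j) z : ℂ) • u j) :
    ¬ IsConvexMappingOfOrder F α := by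
  intro hconv
  obtain ⟨-, -, -, -, hlast⟩ := hconv
  set c : ℂ := (((2 * α - 1 : ℝ)) : ℂ) with hc
  set φ : ℂ → ℂ := fun ξ => (1 - ξ) ^ (c - 1) with hφ
  have huu : ∀ i j, (inner ℂ (u i) (u j) : ℂ) = if i = j then 1 else 0 :=
    orthonormal_iff_ite.mp hu
  have hun : ∀ j, ‖u j‖ = 1 := hu.1
  set j0 : Fin m := ⟨0, by omega⟩ with hj0
  set j1 : Fin m := ⟨1, by omega⟩ with hj1
  have hne : j0 ≠ j1 := by simp [hj0, hj1, Fin.ext_iff]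
  set z₀ : X := (2 : ℂ)⁻¹ • u j0 + (2 : ℂ)⁻¹ • u j1 with hz₀
  set x₀ : X := u j0 - u j1 with hx₀
  -- basic inner product values
  have ht : ∀ j, (inner ℂ (u j) z₀ : ℂ) =
      (if j = j0 then 2⁻¹ else 0) + (if j = j1 then 2⁻¹ else 0) := by
    intro j
    simp [hz₀, inner_add_right, inner_smul_right, huu, mul_ite]
  have hs : ∀ j, (inner ℂ (u j) x₀ : ℂ) =
      (if j = j0 then 1 else 0) - (if j = j1 then 1 else 0) := by
    intro j
    simp [hx₀, inner_sub_right, huu]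
  have htj0 : (inner ℂ (u j0) z₀ : ℂ) = 2⁻¹ := by rw [ht]; simp [hne]
  have htj1 : (inner ℂ (u j1) z₀ : ℂ) = 2⁻¹ := by rw [ht]; simp [hne.symm]
  -- membership facts
  have hnz : (inner ℂ z₀ z₀ : ℂ) = 2⁻¹ := by
    simp [hz₀, inner_add_left, inner_add_right, inner_smul_left, inner_smul_right, huu,
      hne, hne.symm, -inner_self_eq_norm_sq_to_K]
    norm_num [Complex.ext_iff]
  have hz₀norm : ‖z₀‖ ^ 2 = 2⁻¹ := by
    have := inner_self_eq_norm_sq (𝕜 := ℂ) z₀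
    rw [hnz] at this
    simpa using this.symm
  have hz₀ball : z₀ ∈ Metric.ball (0 : X) 1 := by
    rw [Metric.mem_ball, dist_zero_right]
    nlinarith [norm_nonneg z₀]
  have hz₀ne : z₀ ≠ 0 := by
    intro hcon
    rw [hcon] at hnz
    simp at hnz
  have hxx : (inner ℂ x₀ x₀ : ℂ) = 2 := by
    simp [hx₀, inner_sub_left, inner_sub_right, huu, hne, hne.symm, -inner_self_eq_norm_sq_to_K]
    norm_num
  have hx₀norm : ‖x₀‖ ^ 2 = 2 := by
    have := inner_self_eq_norm_sq (𝕜 := ℂ) x₀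
    rw [hxx] at this
    simpa using this.symm
  have hx₀ne : x₀ ≠ 0 := by
    intro hcon
    rw [hcon] at hxx
    simp at hxx
  have hortho : (inner ℂ x₀ z₀ : ℂ).re = 0 := by
    have : (inner ℂ x₀ z₀ : ℂ) = 0 := by
      simp [hx₀, hz₀, inner_sub_left, inner_add_right, inner_smul_right, huu, hne, hne.symm, hun]
    rw [this]; simp
  -- the projection operators and operator family
  set P : Fin m → (X →L[ℂ] X) := fun j => (innerSL ℂ (u j)).smulRight (u j) with hP
  set M : (Fin m → ℂ) → (X →L[ℂ] X) :=
    fun a => ContinuousLinearMap.id ℂ X + ∑ j, a j • P j with hM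
  have hMapp : ∀ (a : Fin m → ℂ) (x : X),
      M a x = x + ∑ j, (a j * (inner ℂ (u j) x : ℂ)) • u j := by
    intro a x
    simp [hM, hP, ContinuousLinearMap.sum_apply, smul_smul]
  have hMinner : ∀ (a : Fin m → ℂ) (x : X) (j : Fin m),
      (inner ℂ (u j) (M a x) : ℂ) = (1 + a j) * (inner ℂ (u j) x : ℂ) := by
    intro a x j
    rw [hMapp]
    rw [inner_add_right, inner_sum]
    simp only [inner_smul_right, huu, mul_ite, mul_one, mul_zero]
    rw [Finset.sum_ite_eq Finset.univ j]
    simp; ring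
  have hMcomp : ∀ (a b : Fin m → ℂ), (∀ j, a j + b j + a j * b j = 0) →
      (M a).comp (M b) = ContinuousLinearMap.id ℂ X := by
    intro a b hab
    ext x
    simp only [ContinuousLinearMap.comp_apply, ContinuousLinearMap.id_apply]
    rw [hMapp a (M b x)]
    have hterm : ∀ j : Fin m, (a j * (inner ℂ (u j) (M b x) : ℂ)) • u j
        = (-(b j * (inner ℂ (u j) x : ℂ))) • u j := by
      intro j
      rw [hMinner]
      congr 1
      linear_combination (inner ℂ (u j) x : ℂ) * hab j
    rw [Finset.sum_congr rfl (fun j _ => hterm j)]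
    rw [hMapp b x]
    simp [neg_smul, Finset.sum_neg_distrib]
  -- first derivative of F
  have hslitz : ∀ (z : X), ‖z‖ < 1 → ∀ j, 1 - (inner ℂ (u j) z : ℂ) ∈ Complex.slitPlane := by
    intro z hz j
    apply slit_of_lt_one
    calc ‖(inner ℂ (u j) z : ℂ)‖ = ‖(inner ℂ (u j) z : ℂ)‖ := rfl
      _ ≤ ‖u j‖ * ‖z‖ := norm_inner_le_norm _ _
      _ < 1 := by rw [hun j, one_mul]; exact hz
  have hA : ∀ (z : X), ‖z‖ < 1 →
      HasFDerivAt F (M (fun j => φ (inner ℂ (u j) z : ℂ) - 1)) z := by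
    intro z hz
    have d1 : HasFDerivAt (fun w : X => ∑ j, (inner ℂ (u j) w : ℂ) • u j) (∑ j, P j) z := by
      have heqf : (fun w : X => ∑ j, (inner ℂ (u j) w : ℂ) • u j) = ⇑(∑ j, P j) := by
        funext w
        simp [hP, ContinuousLinearMap.sum_apply]
      rw [heqf]
      exact (∑ j, P j).hasFDerivAt
    have d2 : ∀ j : Fin m, HasFDerivAt (fun w : X => h (inner ℂ (u j) w : ℂ) • u j)
        (φ (inner ℂ (u j) z : ℂ) • P j) z := by
      intro j
      have hinner : HasFDerivAt (fun w : X => (inner ℂ (u j) w : ℂ)) (innerSL ℂ (u j)) z :=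
        (innerSL ℂ (u j)).hasFDerivAt
      have hder : HasDerivAt h (φ (inner ℂ (u j) z : ℂ)) (inner ℂ (u j) z : ℂ) :=
        hfun_deriv α h hh _ (hslitz z hz j)
      have hcomp := hder.comp_hasFDerivAt z hinner
      have hsm := hcomp.smul (hasFDerivAt_const (u j) z)
      have : (h (inner ℂ (u j) z : ℂ)) • (0 : X →L[ℂ] X) +
          ((φ (inner ℂ (u j) z : ℂ)) • innerSL ℂ (u j)).smulRight (u j)
          = φ (inner ℂ (u j) z : ℂ) • P j := by
        ext w
        simp [hP, ContinuousLinearMap.smulRight_apply, smul_smul]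
      exact hsm.congr_fderiv this
    have dsum : HasFDerivAt (fun w : X => ∑ j, h (inner ℂ (u j) w : ℂ) • u j)
        (∑ j, φ (inner ℂ (u j) z : ℂ) • P j) z := HasFDerivAt.fun_sum (fun j _ => d2 j)
    have dall := ((hasFDerivAt_id z).sub d1).add dsum
    have heqd : ContinuousLinearMap.id ℂ X - (∑ j, P j) + ∑ j, φ (inner ℂ (u j) z : ℂ) • P j
        = M (fun j => φ (inner ℂ (u j) z : ℂ) - 1) := by
      rw [hM]
      simp only [sub_smul, one_smul, Finset.sum_sub_distrib]
      abel
    rw [heqd] at dall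
    rw [hF]
    exact dall
  -- second derivative of F at z₀
  have hz₀lt : ‖z₀‖ < 1 := by rw [Metric.mem_ball, dist_zero_right] at hz₀ball; exact hz₀ball
  set φd : ℂ → ℂ := fun ξ => -((c - 1) * (1 - ξ) ^ (c - 1 - 1)) with hφd
  set B : X →L[ℂ] (X →L[ℂ] X) :=
    ∑ j, ((φd (inner ℂ (u j) z₀ : ℂ)) • innerSL ℂ (u j)).smulRight (P j) with hB
  have hG : HasFDerivAt (fun z : X => M (fun j => φ (inner ℂ (u j) z : ℂ) - 1)) B z₀ := by
    have hsum : HasFDerivAt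
        (fun z : X => ∑ j, (φ (inner ℂ (u j) z : ℂ) - 1) • P j) B z₀ := by
      rw [hB]
      apply HasFDerivAt.fun_sum
      intro j _
      have hinner : HasFDerivAt (fun w : X => (inner ℂ (u j) w : ℂ)) (innerSL ℂ (u j)) z₀ :=
        (innerSL ℂ (u j)).hasFDerivAt
      have hder : HasDerivAt φ (φd (inner ℂ (u j) z₀ : ℂ)) (inner ℂ (u j) z₀ : ℂ) :=
        hpow_deriv (c - 1) _ (hslitz z₀ hz₀lt j)
      have hcomp := (hder.comp_hasFDerivAt z₀ hinner).sub_const 1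
      have hsm := hcomp.smul (hasFDerivAt_const (P j) z₀)
      refine hsm.congr_fderiv ?_
      simp
    have hall := hsum.const_add (ContinuousLinearMap.id ℂ X)
    simpa [hM] using hall
  have hfd2 : fderiv ℂ (fderiv ℂ F) z₀ = B := by
    have he : fderiv ℂ F =ᶠ[nhds z₀] fun z : X => M (fun j => φ (inner ℂ (u j) z : ℂ) - 1) := by
      filter_upwards [Metric.isOpen_ball.mem_nhds hz₀ball] with w hw
      exact (hA w (by rwa [Metric.mem_ball, dist_zero_right] at hw)).fderiv
    rw [he.fderiv_eq, hG.fderiv]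
  -- the inverse g of fderiv F z₀
  set b : Fin m → ℂ := fun j => (1 - (inner ℂ (u j) z₀ : ℂ)) ^ ((1 : ℂ) - c) - 1 with hb
  set a : Fin m → ℂ := fun j => φ (inner ℂ (u j) z₀ : ℂ) - 1 with ha
  have hprod : ∀ j, φ (inner ℂ (u j) z₀ : ℂ) * (1 - (inner ℂ (u j) z₀ : ℂ)) ^ ((1 : ℂ) - c) = 1 := by
    intro j
    have hbne : (1 : ℂ) - (inner ℂ (u j) z₀ : ℂ) ≠ 0 :=
      Complex.slitPlane_ne_zero (hslitz z₀ hz₀lt j)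
    rw [hφ]
    rw [← Complex.cpow_add _ _ hbne]
    norm_num
  have hab : ∀ j, a j + b j + a j * b j = 0 := by
    intro j
    simp only [ha, hb]
    linear_combination hprod j
  have hab' : ∀ j, b j + a j + b j * a j = 0 := by
    intro j; linear_combination hab j
  have hg1 : (fderiv ℂ F z₀).comp (M b) = ContinuousLinearMap.id ℂ X := by
    rw [(hA z₀ hz₀lt).fderiv]
    exact hMcomp a b hab
  have hg2 : (M b).comp (fderiv ℂ F z₀) = ContinuousLinearMap.id ℂ X := by
    rw [(hA z₀ hz₀lt).fderiv]
    exact hMcomp b a hab'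
  have hfinal := hlast z₀ hz₀ball hz₀ne x₀ hx₀ne hortho (M b) hg1 hg2
  -- compute the second-order term
  set K : ℂ := φd (2⁻¹ : ℂ) with hK
  have hBxx : (B x₀) x₀ = K • u j0 + K • u j1 := by
    have h1 : (B x₀) x₀ =
        ∑ j, ((φd (inner ℂ (u j) z₀ : ℂ) * (inner ℂ (u j) x₀ : ℂ)) * (inner ℂ (u j) x₀ : ℂ)) • u j := by
      simp [hB, ContinuousLinearMap.sum_apply, ContinuousLinearMap.smulRight_apply,
        ContinuousLinearMap.smul_apply, hP, smul_smul]
    rw [h1, sum_two _ j0 j1 hne]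
    · rw [hs, hs, htj0, htj1]
      simp [hne, hne.symm, hK]
    · intro j hj0' hj1'
      rw [hs j]
      simp [hj0', hj1']
  have hgval : (M b) ((B x₀) x₀) = (K * (1 + b j0)) • u j0 + (K * (1 + b j1)) • u j1 := by
    rw [hBxx, hMapp]
    have hin : ∀ k, (inner ℂ (u k) (K • u j0 + K • u j1) : ℂ)
        = K * ((if k = j0 then 1 else 0) + (if k = j1 then 1 else 0)) := by
      intro k
      simp [inner_add_right, inner_smul_right, huu, mul_ite]
      split_ifs <;> ring
    have hz' : ∀ j, j ≠ j0 → j ≠ j1 → (b j * (inner ℂ (u j) (K • u j0 + K • u j1) : ℂ)) • u j = 0 := by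
      intro j hj0' hj1'
      rw [hin j]
      simp [hj0', hj1']
    rw [Finset.sum_congr rfl (fun j _ => rfl), sum_two _ j0 j1 hne hz']
    rw [hin j0, hin j1]
    simp [hne, hne.symm]
    module
  have hval : (inner ℂ ((M b) ((B x₀) x₀)) z₀ : ℂ).re = 4 - 4 * α := by
    have h1b : (1 : ℂ) + b j0 = ((2 : ℂ)⁻¹) ^ ((1 : ℂ) - c) := by
      rw [hb]; simp only [htj0]; norm_num
    have h1b' : (1 : ℂ) + b j1 = ((2 : ℂ)⁻¹) ^ ((1 : ℂ) - c) := by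
      rw [hb]; simp only [htj1]; norm_num
    have hKv : K * (((2 : ℂ)⁻¹) ^ ((1 : ℂ) - c)) = ((4 - 4 * α : ℝ) : ℂ) := by
      simp only [hK, hφd]
      rw [show (1 : ℂ) - 2⁻¹ = 2⁻¹ by norm_num]
      have h2 : ((2 : ℂ))⁻¹ ≠ 0 := by norm_num
      have hpp : ((2⁻¹ : ℂ)) ^ (c - 1 - 1) * ((2⁻¹ : ℂ)) ^ ((1 : ℂ) - c)
          = ((2⁻¹ : ℂ)) ^ ((-1 : ℂ)) := by
        rw [← Complex.cpow_add _ _ h2]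
        ring_nf
      have : -((c - 1) * ((2⁻¹ : ℂ)) ^ (c - 1 - 1)) * ((2⁻¹ : ℂ)) ^ ((1 : ℂ) - c)
          = -((c - 1)) * (((2⁻¹ : ℂ)) ^ (c - 1 - 1) * ((2⁻¹ : ℂ)) ^ ((1 : ℂ) - c)) := by ring
      rw [this, hpp, Complex.cpow_neg_one]
      rw [hc]
      push_cast
      ring
    rw [hgval, h1b, h1b']
    rw [inner_add_left, inner_smul_left, inner_smul_left, htj0, htj1]
    rw [hKv]
    rw [Complex.conj_ofReal]
    have : ((4 - 4 * α : ℝ) : ℂ) * 2⁻¹ + ((4 - 4 * α : ℝ) : ℂ) * 2⁻¹ = ((4 - 4 * α : ℝ) : ℂ) := by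
      ring
    rw [this, Complex.ofReal_re]
  rw [hfd2, hx₀norm, hval] at hfinal
  linarith

/-- h(ξ) = (1−(1−ξ)^{2α−1})/(2α−1) (resp. −log(1−ξ) when α = 1/2) is convex
of order α on the unit disk, but F = Φ(h,…,h) is not a biholomorphic convex mapping of
order α on the unit ball of any complex Hilbert space containing m ≥ 2 orthonormal vectors. -/
theorem stmt_15 {X : Type*} [NormedAddCommGroup X] [InnerProductSpace ℂ X] [CompleteSpace X]
    (m : ℕ) (hm : 2 ≤ m) (α : ℝ) (hα0 : 0 ≤ α) (hα1 : α < 1)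
    (u : Fin m → X) (hu : Orthonormal ℂ u)
    (h : ℂ → ℂ)
    (hh : h = fun ξ => if α = 1 / 2 then -Complex.log (1 - ξ)
      else (1 - (1 - ξ) ^ (((2 * α - 1 : ℝ)) : ℂ)) / ((2 * α - 1 : ℝ) : ℂ))
    (F : X → X)
    (hF : F = fun z => z - ∑ j : Fin m, (inner ℂ (u j) z : ℂ) • u j
      + ∑ j : Fin m, h (inner ℂ (u j) z : ℂ) • u j) :
    (∀ ξ ∈ Metric.ball (0 : ℂ) 1,
      α < (1 + ξ * deriv (deriv h) ξ / deriv h ξ).re) ∧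
    ¬ IsConvexMappingOfOrder F α := by
  constructor
  · exact fun ξ hξ => part1 α hα1 h hh ξ hξ
  · exact part2 m hm α hα0 hα1 u hu h hh F hF

end
end

section
/- Let X be a complex Hilbert space with dim X ≥ m ≥ 2, α ∈ [0,1), u₁,…,u_m ∈ X orthonormal, and λ₁,…,λ_m ∈ ℂ \ {0}. Then f(z) = z − Σ_j ⟨z,u_j⟩ u_j + Σ_j (e^{λ_j ⟨z,u_j⟩} − 1)/λ_j · u_j is a biholomorphic convex mapping of order α on the unit ball B of X if and only if |λ_j| ≤ 1−α for all j = 1,…,m. -/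
open Complex ContinuousLinearMap Finset

namespace S16
variable {X : Type*} [NormedAddCommGroup X] [InnerProductSpace ℂ X] [CompleteSpace X]

noncomputable def Mj (v : X) : X →L[ℂ] X := (innerSL ℂ v).smulRight v

@[simp] lemma Mj_apply (v x : X) : Mj v x = (inner ℂ v x : ℂ) • v := rfl

noncomputable def T {m : ℕ} (u : Fin m → X) (p : Fin m → ℂ) : X →L[ℂ] X :=
  ContinuousLinearMap.id ℂ X + ∑ j, p j • Mj (u j)

lemma T_apply {m : ℕ} (u : Fin m → X) (p : Fin m → ℂ) (x : X) :
    T u p x = x + ∑ j, p j • ((inner ℂ (u j) x : ℂ) • u j) := by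
  simp [T, ContinuousLinearMap.sum_apply]

lemma T_comp {m : ℕ} {u : Fin m → X} (hu : Orthonormal ℂ u) (p q : Fin m → ℂ) :
    (T u p).comp (T u q) = T u (fun j => p j + q j + p j * q j) := by
  ext x
  simp only [ContinuousLinearMap.comp_apply, T_apply]
  have key : ∀ j, (inner ℂ (u j) (x + ∑ k, q k • ((inner ℂ (u k) x : ℂ) • u k)) : ℂ)
      = (1 + q j) * inner ℂ (u j) x := by
    intro j
    rw [inner_add_right, inner_sum]
    have : ∀ k, (inner ℂ (u j) (q k • ((inner ℂ (u k) x : ℂ) • u k)) : ℂ)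
        = if j = k then q k * inner ℂ (u k) x else 0 := by
      intro k
      rw [inner_smul_right, inner_smul_right, orthonormal_iff_ite.mp hu j k]
      split <;> simp_all <;> ring
    rw [Finset.sum_congr rfl fun k _ => this k, Finset.sum_ite_eq (Finset.univ) j
      (fun k => q k * (inner ℂ (u k) x : ℂ))]
    simp; ring
  simp only [key]
  rw [add_assoc, ← Finset.sum_add_distrib]
  congr 1
  refine Finset.sum_congr rfl fun j _ => ?_
  rw [smul_smul, smul_smul, smul_smul, ← add_smul]
  ring_nf


lemma hasD {m : ℕ} (u : Fin m → X) (lam : Fin m → ℂ) (hlam : ∀ j, lam j ≠ 0) (z : X) :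
    HasFDerivAt (fun z : X => z - ∑ j : Fin m, (inner ℂ (u j) z : ℂ) • u j
        + ∑ j : Fin m, ((Complex.exp (lam j * (inner ℂ (u j) z : ℂ)) - 1) / lam j) • u j)
      (T u (fun j => Complex.exp (lam j * inner ℂ (u j) z) - 1)) z := by
  have h1 : HasFDerivAt (fun z : X => z) (ContinuousLinearMap.id ℂ X) z := hasFDerivAt_id z
  have h2 : HasFDerivAt (fun z : X => ∑ j : Fin m, (inner ℂ (u j) z : ℂ) • u j)
      (∑ j : Fin m, Mj (u j)) z := HasFDerivAt.fun_sum fun j _ => (Mj (u j)).hasFDerivAt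
  have h3 : ∀ j : Fin m, HasFDerivAt
      (fun z : X => ((Complex.exp (lam j * (inner ℂ (u j) z : ℂ)) - 1) / lam j) • u j)
      (Complex.exp (lam j * inner ℂ (u j) z) • Mj (u j)) z := by
    intro j
    have ha : HasFDerivAt (fun z : X => (inner ℂ (u j) z : ℂ)) (innerSL ℂ (u j)) z :=
      (innerSL ℂ (u j)).hasFDerivAt
    have hb : HasFDerivAt (fun z : X => lam j * (inner ℂ (u j) z : ℂ))
        (lam j • innerSL ℂ (u j)) z := ha.const_mul (lam j)
    have hc := (Complex.hasDerivAt_exp (lam j * inner ℂ (u j) z)).comp_hasFDerivAt z hb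
    have hd := (((hc.sub_const 1).const_mul (lam j)⁻¹).smul_const (u j))
    have heq : (fun z : X => ((Complex.exp (lam j * (inner ℂ (u j) z : ℂ)) - 1) / lam j) • u j)
        = fun z : X => ((lam j)⁻¹ * (Complex.exp (lam j * (inner ℂ (u j) z : ℂ)) - 1)) • u j := by
      funext z; rw [div_eq_inv_mul]
    rw [heq]
    convert hd using 1
    · rfl
    ext x
    simp [Mj]
    have hs : (lam j)⁻¹ * (Complex.exp (lam j * (inner ℂ (u j) z : ℂ)) * (lam j * (inner ℂ (u j) x : ℂ)))
        = Complex.exp (lam j * (inner ℂ (u j) z : ℂ)) * (inner ℂ (u j) x : ℂ) := by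
      calc (lam j)⁻¹ * (Complex.exp (lam j * (inner ℂ (u j) z : ℂ)) * (lam j * (inner ℂ (u j) x : ℂ)))
          = (lam j)⁻¹ * lam j * (Complex.exp (lam j * (inner ℂ (u j) z : ℂ)) * (inner ℂ (u j) x : ℂ)) := by ring
        _ = _ := by rw [inv_mul_cancel₀ (hlam j), one_mul]
    rw [smul_smul, hs]
  have total := (h1.sub h2).add (HasFDerivAt.fun_sum fun j (_ : j ∈ Finset.univ) => h3 j)
  convert total using 1
  · rfl
  ext x
  simp [T, Mj, sub_smul, Finset.sum_sub_distrib, ContinuousLinearMap.sum_apply]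
  abel


noncomputable def E2 {m : ℕ} (u : Fin m → X) (lam : Fin m → ℂ) (z : X) : X →L[ℂ] X →L[ℂ] X :=
  ∑ j, ((lam j * Complex.exp (lam j * (inner ℂ (u j) z : ℂ))) • innerSL ℂ (u j)).smulRight (Mj (u j))

lemma hasE {m : ℕ} (u : Fin m → X) (lam : Fin m → ℂ) (z : X) :
    HasFDerivAt (fun z : X => T u (fun j => Complex.exp (lam j * (inner ℂ (u j) z : ℂ)) - 1))
      (E2 u lam z) z := by
  have h3 : ∀ j : Fin m, HasFDerivAt
      (fun z : X => (Complex.exp (lam j * (inner ℂ (u j) z : ℂ)) - 1) • Mj (u j))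
      (((lam j * Complex.exp (lam j * (inner ℂ (u j) z : ℂ))) • innerSL ℂ (u j)).smulRight (Mj (u j))) z := by
    intro j
    have hb : HasFDerivAt (fun z : X => lam j * (inner ℂ (u j) z : ℂ))
        (lam j • innerSL ℂ (u j)) z := ((innerSL ℂ (u j)).hasFDerivAt).const_mul (lam j)
    have hc := (Complex.hasDerivAt_exp (lam j * (inner ℂ (u j) z : ℂ))).comp_hasFDerivAt z hb
    have hd := (hc.sub_const 1).smul_const (Mj (u j))
    exact hd.congr_fderiv (by rw [smul_smul, mul_comm])
  have htot := ((hasFDerivAt_const (ContinuousLinearMap.id ℂ X) z).add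
    (HasFDerivAt.fun_sum fun j (_ : j ∈ Finset.univ) => h3 j))
  have hfe : (fun z : X => T u (fun j => Complex.exp (lam j * (inner ℂ (u j) z : ℂ)) - 1))
      = fun z : X => ContinuousLinearMap.id ℂ X
        + ∑ j, (Complex.exp (lam j * (inner ℂ (u j) z : ℂ)) - 1) • Mj (u j) := rfl
  rw [hfe]
  rw [zero_add] at htot; exact htot


lemma T_apply_sum {m : ℕ} {u : Fin m → X} (hu : Orthonormal ℂ u) (q c : Fin m → ℂ) :
    T u q (∑ j, c j • u j) = ∑ j, ((1 + q j) * c j) • u j := by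
  rw [T_apply]
  have hk : ∀ k, (inner ℂ (u k) (∑ j, c j • u j) : ℂ) = c k := by
    intro k
    rw [inner_sum]
    simp only [inner_smul_right, orthonormal_iff_ite.mp hu]
    simp
  simp only [hk]
  rw [← Finset.sum_add_distrib]
  refine Finset.sum_congr rfl fun j _ => ?_
  module

lemma T_inv_comp {m : ℕ} {u : Fin m → X} (hu : Orthonormal ℂ u) (w : Fin m → ℂ) :
    (T u (fun j => Complex.exp (w j) - 1)).comp (T u (fun j => Complex.exp (-w j) - 1))
      = ContinuousLinearMap.id ℂ X := by
  rw [T_comp hu]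
  have h0 : (fun j => (Complex.exp (w j) - 1) + (Complex.exp (-w j) - 1)
      + (Complex.exp (w j) - 1) * (Complex.exp (-w j) - 1)) = fun _ => (0 : ℂ) := by
    funext j
    have h : Complex.exp (w j) * Complex.exp (-w j) = 1 := by
      rw [← Complex.exp_add, add_neg_cancel, Complex.exp_zero]
    linear_combination h
  rw [h0]
  ext x
  simp [T]

lemma second_apply {m : ℕ} (u : Fin m → X) (lam : Fin m → ℂ) (hlam : ∀ j, lam j ≠ 0) (z x : X) :
    fderiv ℂ (fderiv ℂ (fun z : X => z - ∑ j : Fin m, (inner ℂ (u j) z : ℂ) • u j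
        + ∑ j : Fin m, ((Complex.exp (lam j * (inner ℂ (u j) z : ℂ)) - 1) / lam j) • u j)) z x x
      = ∑ j, ((lam j * Complex.exp (lam j * (inner ℂ (u j) z : ℂ))
          * ((inner ℂ (u j) x : ℂ) * (inner ℂ (u j) x : ℂ)))) • u j := by
  have hfe : fderiv ℂ (fun z : X => z - ∑ j : Fin m, (inner ℂ (u j) z : ℂ) • u j
        + ∑ j : Fin m, ((Complex.exp (lam j * (inner ℂ (u j) z : ℂ)) - 1) / lam j) • u j)
      = fun z : X => T u (fun j => Complex.exp (lam j * (inner ℂ (u j) z : ℂ)) - 1) :=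
    funext fun z => (hasD u lam hlam z).fderiv
  rw [hfe, (hasE u lam z).fderiv]
  simp [E2, ContinuousLinearMap.sum_apply, Mj, smul_smul, mul_assoc]


lemma g_second {m : ℕ} {u : Fin m → X} (hu : Orthonormal ℂ u) (lam : Fin m → ℂ) (z x : X) :
    T u (fun j => Complex.exp (-(lam j * (inner ℂ (u j) z : ℂ))) - 1)
      (∑ j, ((lam j * Complex.exp (lam j * (inner ℂ (u j) z : ℂ))
          * ((inner ℂ (u j) x : ℂ) * (inner ℂ (u j) x : ℂ)))) • u j)
    = ∑ j, (lam j * ((inner ℂ (u j) x : ℂ) * (inner ℂ (u j) x : ℂ))) • u j := by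
  rw [T_apply_sum hu]
  refine Finset.sum_congr rfl fun j _ => ?_
  congr 1
  have h : Complex.exp (-(lam j * (inner ℂ (u j) z : ℂ))) * Complex.exp (lam j * (inner ℂ (u j) z : ℂ)) = 1 := by
    rw [← Complex.exp_add, neg_add_cancel, Complex.exp_zero]
  linear_combination (lam j * ((inner ℂ (u j) x : ℂ) * (inner ℂ (u j) x : ℂ))) * h

lemma inner_sum_left {m : ℕ} (u : Fin m → X) (c : Fin m → ℂ) (z : X) :
    (inner ℂ (∑ j, c j • u j) z : ℂ) = ∑ j, (starRingEnd ℂ) (c j) * (inner ℂ (u j) z : ℂ) := by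
  rw [sum_inner]
  simp [inner_smul_left]

lemma main_ineq {m : ℕ} {u : Fin m → X} (hu : Orthonormal ℂ u) (lam : Fin m → ℂ)
    {α : ℝ} (hα1 : α < 1) (hle : ∀ j, ‖lam j‖ ≤ 1 - α)
    {z x : X} (hz : ‖z‖ < 1) (hx : x ≠ 0) :
    (∑ j, (starRingEnd ℂ) (lam j * ((inner ℂ (u j) x : ℂ) * (inner ℂ (u j) x : ℂ)))
        * (inner ℂ (u j) z : ℂ)).re < (1 - α) * ‖x‖ ^ 2 := by
  have hxpos : 0 < ‖x‖ ^ 2 := by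
    have := norm_pos_iff.mpr hx
    positivity
  have hzn : 0 ≤ ‖z‖ := norm_nonneg z
  calc (∑ j, (starRingEnd ℂ) (lam j * ((inner ℂ (u j) x : ℂ) * (inner ℂ (u j) x : ℂ)))
        * (inner ℂ (u j) z : ℂ)).re
      ≤ ‖(∑ j, (starRingEnd ℂ) (lam j * ((inner ℂ (u j) x : ℂ) * (inner ℂ (u j) x : ℂ)))
        * (inner ℂ (u j) z : ℂ))‖ := Complex.re_le_norm _
    _ ≤ ∑ j, ‖((starRingEnd ℂ) (lam j * ((inner ℂ (u j) x : ℂ) * (inner ℂ (u j) x : ℂ)))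
        * (inner ℂ (u j) z : ℂ))‖ := norm_sum_le _ _
    _ ≤ ∑ j, (1 - α) * ‖z‖ * ‖(inner ℂ (u j) x : ℂ)‖ ^ 2 := by
        refine Finset.sum_le_sum fun j _ => ?_
        rw [norm_mul, Complex.norm_conj, norm_mul]
        have h1 : ‖(inner ℂ (u j) z : ℂ)‖ ≤ ‖z‖ := by
          have := norm_inner_le_norm (𝕜 := ℂ) (u j) z
          rwa [hu.1 j, one_mul] at this
        have h2 : ‖((inner ℂ (u j) x : ℂ) * (inner ℂ (u j) x : ℂ))‖
            = ‖(inner ℂ (u j) x : ℂ)‖ ^ 2 := by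
          rw [norm_mul]; ring
        rw [h2]
        have h3 := hle j
        have h4 : (0:ℝ) ≤ ‖(inner ℂ (u j) z : ℂ)‖ := norm_nonneg _
        have h5 : (0:ℝ) ≤ ‖(inner ℂ (u j) x : ℂ)‖ ^ 2 := by positivity
        have h7 : ‖lam j‖ * ‖(inner ℂ (u j) z : ℂ)‖ ≤ (1 - α) * ‖z‖ :=
          mul_le_mul h3 h1 h4 (by linarith)
        nlinarith [mul_le_mul_of_nonneg_left h7 h5]
    _ = (1 - α) * ‖z‖ * ∑ j, ‖(inner ℂ (u j) x : ℂ)‖ ^ 2 := by rw [Finset.mul_sum]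
    _ ≤ (1 - α) * ‖z‖ * ‖x‖ ^ 2 := by
        have := hu.sum_inner_products_le x (s := Finset.univ)
        have h6 : (0:ℝ) ≤ (1 - α) * ‖z‖ := by nlinarith
        exact mul_le_mul_of_nonneg_left this h6
    _ < (1 - α) * ‖x‖ ^ 2 := by
        nlinarith [mul_pos (mul_pos (by linarith : (0:ℝ) < 1 - α) hxpos)
          (by linarith : (0:ℝ) < 1 - ‖z‖)]

end S16

/-- f(z) = z − Σ⟨z,u_j⟩u_j + Σ (e^{λ_j⟨z,u_j⟩}−1)/λ_j · u_j is a
biholomorphic convex mapping of order α on B iff |λ_j| ≤ 1−α for all j. -/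
theorem stmt_16 {X : Type*} [NormedAddCommGroup X] [InnerProductSpace ℂ X] [CompleteSpace X]
    (m : ℕ) (hm : 2 ≤ m) (α : ℝ) (hα0 : 0 ≤ α) (hα1 : α < 1)
    (u : Fin m → X) (hu : Orthonormal ℂ u)
    (lam : Fin m → ℂ) (hlam : ∀ j, lam j ≠ 0) :
    IsConvexMappingOfOrder
      (fun z : X => z - ∑ j : Fin m, (inner ℂ (u j) z : ℂ) • u j
        + ∑ j : Fin m,
            ((Complex.exp (lam j * (inner ℂ (u j) z : ℂ)) - 1) / lam j) • u j) α ↔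
      ∀ j, ‖lam j‖ ≤ 1 - α := by
    classical
  set f : X → X := fun z : X => z - ∑ j : Fin m, (inner ℂ (u j) z : ℂ) • u j
        + ∑ j : Fin m, ((Complex.exp (lam j * (inner ℂ (u j) z : ℂ)) - 1) / lam j) • u j
    with hfdef
  have hDf : ∀ z : X, fderiv ℂ f z
      = S16.T u (fun j => Complex.exp (lam j * (inner ℂ (u j) z : ℂ)) - 1) :=
    fun z => (S16.hasD u lam hlam z).fderiv
  have hcomp1 : ∀ z : X, (fderiv ℂ f z).comp
      (S16.T u fun j => Complex.exp (-(lam j * (inner ℂ (u j) z : ℂ))) - 1)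
      = ContinuousLinearMap.id ℂ X := by
    intro z; rw [hDf z]; exact S16.T_inv_comp hu _
  have hcomp2 : ∀ z : X, (S16.T u fun j => Complex.exp (-(lam j * (inner ℂ (u j) z : ℂ))) - 1).comp
      (fderiv ℂ f z) = ContinuousLinearMap.id ℂ X := by
    intro z; rw [hDf z]
    simpa only [neg_neg] using S16.T_inv_comp hu (fun j => -(lam j * (inner ℂ (u j) z : ℂ)))
  have hkey : ∀ (z x : X) (g : X →L[ℂ] X),
      g.comp (fderiv ℂ f z) = ContinuousLinearMap.id ℂ X →
      g (fderiv ℂ (fderiv ℂ f) z x x)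
        = ∑ j, (lam j * ((inner ℂ (u j) x : ℂ) * (inner ℂ (u j) x : ℂ))) • u j := by
    intro z x g hg2
    have hgeq : g = S16.T u (fun j => Complex.exp (-(lam j * (inner ℂ (u j) z : ℂ))) - 1) := by
      calc g = g.comp ((fderiv ℂ f z).comp
            (S16.T u fun j => Complex.exp (-(lam j * (inner ℂ (u j) z : ℂ))) - 1)) := by
              rw [hcomp1 z, ContinuousLinearMap.comp_id]
        _ = (g.comp (fderiv ℂ f z)).comp
            (S16.T u fun j => Complex.exp (-(lam j * (inner ℂ (u j) z : ℂ))) - 1) := by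
              rw [ContinuousLinearMap.comp_assoc]
        _ = _ := by rw [hg2, ContinuousLinearMap.id_comp]
    rw [hgeq, hfdef, S16.second_apply u lam hlam z x, S16.g_second hu lam z x]
  rw [IsConvexMappingOfOrder]
  constructor
  · rintro ⟨-, -, -, -, hcond⟩ j
    have key : ∀ r : ℝ, 0 < r → r < 1 → r * ‖lam j‖ < 1 - α := by
      intro r hr0 hr1
      set L : ℝ := ‖lam j‖ with hLdef
      have hL : 0 < L := norm_pos_iff.mpr (hlam j)
      have hLne : (L : ℂ) ≠ 0 := by exact_mod_cast hL.ne'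
      set c : ℂ := Complex.I * (starRingEnd ℂ) (lam j) / (L : ℂ) with hcdef
      have hcabs : ‖c‖ = 1 := by
        rw [hcdef, norm_div, norm_mul, Complex.norm_I, Complex.norm_conj, one_mul,
          Complex.norm_of_nonneg hL.le, ← hLdef, div_self hL.ne']
      have hcc : (starRingEnd ℂ) c * c = 1 := by
        rw [mul_comm, Complex.mul_conj, Complex.normSq_eq_norm_sq, hcabs]; norm_num
      have huj : (inner ℂ (u j) (u j) : ℂ) = 1 := by
        simpa using orthonormal_iff_ite.mp hu j j
      set x : X := c • u j with hxdef
      set z : X := ((r : ℂ) * Complex.I * c) • u j with hzdef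
      have hnormx : ‖x‖ = 1 := by
        rw [hxdef, norm_smul, hu.1 j, hcabs, mul_one]
      have hnormz : ‖z‖ = r := by
        rw [hzdef, norm_smul, hu.1 j, mul_one, norm_mul, norm_mul, hcabs,
          Complex.norm_I, Complex.norm_of_nonneg hr0.le]
        ring
      have hzball : z ∈ Metric.ball (0:X) 1 := by
        rw [Metric.mem_ball, dist_zero_right, hnormz]; exact hr1
      have hz0 : z ≠ 0 := by
        intro h; rw [h, norm_zero] at hnormz; linarith
      have hx0 : x ≠ 0 := by
        intro h; rw [h, norm_zero] at hnormx; linarith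
      have hinnerxz : (inner ℂ x z : ℂ) = (r:ℂ) * Complex.I := by
        rw [hxdef, hzdef, inner_smul_left, inner_smul_right, huj, mul_one]
        linear_combination ((r:ℂ) * Complex.I) * hcc
      have hre : (inner ℂ x z : ℂ).re = 0 := by rw [hinnerxz]; simp
      have H := hcond z hzball hz0 x hx0 hre
        (S16.T u fun k => Complex.exp (-(lam k * (inner ℂ (u k) z : ℂ))) - 1)
        (hcomp1 z) (hcomp2 z)
      rw [hkey z x _ (hcomp2 z)] at H
      have hinkx : ∀ k, (inner ℂ (u k) x : ℂ) = if k = j then c else 0 := by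
        intro k
        rw [hxdef, inner_smul_right, orthonormal_iff_ite.mp hu k j]
        split <;> simp
      have hsum : (∑ k, (lam k * ((inner ℂ (u k) x : ℂ) * (inner ℂ (u k) x : ℂ))) • u k)
          = (lam j * (c * c)) • u j := by
        rw [Finset.sum_eq_single j]
        · rw [hinkx j, if_pos rfl]
        · intro k _ hk
          rw [hinkx k, if_neg hk]
          simp
        · intro h; exact absurd (Finset.mem_univ j) h
      rw [hsum] at H
      have hml : lam j * (starRingEnd ℂ) (lam j) = ((L:ℂ))^2 := by
        rw [Complex.mul_conj, Complex.normSq_eq_norm_sq, ← hLdef]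
        push_cast
        ring
      have hval : (inner ℂ ((lam j * (c * c)) • u j) z : ℂ) = ((r * L : ℝ) : ℂ) := by
        rw [hzdef, inner_smul_left, inner_smul_right, huj, mul_one]
        have h1 : (starRingEnd ℂ) (lam j * (c*c)) * ((r:ℂ)*Complex.I*c)
            = (r:ℂ)*Complex.I*((starRingEnd ℂ) (lam j) * (starRingEnd ℂ) c) := by
          rw [map_mul, map_mul]
          linear_combination ((r:ℂ)*Complex.I*(starRingEnd ℂ) (lam j) * (starRingEnd ℂ) c) * hcc
        have h2 : (starRingEnd ℂ) c = -(Complex.I * lam j) / (L:ℂ) := by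
          rw [hcdef, map_div₀, map_mul, Complex.conj_I, Complex.conj_conj, Complex.conj_ofReal]
          ring
        rw [h1, h2]
        push_cast
        field_simp
        linear_combination (-(r:ℂ) * lam j * (starRingEnd ℂ) (lam j)) * Complex.I_mul_I
          + (r:ℂ) * hml
      rw [hval, hnormx] at H
      simp only [Complex.ofReal_re, one_pow, mul_one] at H
      linarith
    by_contra hcon
    push_neg at hcon
    have hL : 0 < ‖lam j‖ := norm_pos_iff.mpr (hlam j)
    set L := ‖lam j‖ with hLdef
    have h1 : (0:ℝ) < 1 - α := by linarith
    set r : ℝ := ((1-α)/L + 1)/2 with hrdef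
    have hr0 : 0 < r := by positivity
    have hdiv : (1-α)/L < 1 := (div_lt_one hL).mpr hcon
    have hr1 : r < 1 := by rw [hrdef]; linarith
    have hkeyr := key r hr0 hr1
    have hrL : r * L = ((1-α) + L)/2 := by
      rw [hrdef]; field_simp
    rw [hrL] at hkeyr
    linarith
  · intro hle
    refine ⟨fun z _ => (S16.hasD u lam hlam z).differentiableAt, ?_, ?_,
      fun z _ => ⟨_, hcomp1 z, hcomp2 z⟩, ?_⟩
    · rw [hfdef]; simp
    · rw [hDf 0]
      ext x
      simp [S16.T]
    · intro z hz hz0 x hx hre g hg1 hg2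
      rw [hkey z x g hg2, S16.inner_sum_left]
      have hmain := S16.main_ineq hu lam hα1 hle (mem_ball_zero_iff.mp hz) hx
      nlinarith [hmain]
end

section
/- For a symmetric bounded bilinear operator T on a complex Hilbert space X with values in a Banach space, the operator norm equals the supremum over the diagonal: sup_{‖x‖=1, ‖y‖=1} ‖T(x,y)‖ = sup_{‖x‖=1} ‖T(x,x)‖. -/
/-- For a bounded symmetric bilinear map T on a complex Hilbert space into a
complex Banach space, sup_{‖x‖=1,‖y‖=1} ‖T(x,y)‖ = sup_{‖x‖=1} ‖T(x,x)‖. -/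
theorem stmt_17 {X Y : Type*} [NormedAddCommGroup X] [InnerProductSpace ℂ X] [CompleteSpace X]
    [NormedAddCommGroup Y] [NormedSpace ℂ Y] [CompleteSpace Y]
    (T : X →L[ℂ] X →L[ℂ] Y) (hT : ∀ x y : X, T x y = T y x) :
    (⨆ x : {x : X // ‖x‖ = 1}, ⨆ y : {y : X // ‖y‖ = 1}, ‖T x y‖) =
      ⨆ x : {x : X // ‖x‖ = 1}, ‖T x x‖ := by
  set S := {x : X // ‖x‖ = 1}
  by_cases hS : Nonempty S
  swap
  · rw [not_nonempty_iff] at hS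
    simp [Real.iSup_of_isEmpty]
  set M : ℝ := ⨆ x : S, ‖T x x‖ with hM
  have hbdd : BddAbove (Set.range fun x : S => ‖T x x‖) := by
    refine ⟨‖T‖, ?_⟩
    rintro r ⟨x, rfl⟩
    calc ‖T x x‖ ≤ ‖T x.1‖ * ‖x.1‖ := (T x.1).le_opNorm x.1
      _ ≤ ‖T‖ * ‖x.1‖ * ‖x.1‖ := by
          apply mul_le_mul_of_nonneg_right (T.le_opNorm x.1) (norm_nonneg _)
      _ = ‖T‖ := by rw [x.2]; ring
  have hMnn : 0 ≤ M := le_trans (norm_nonneg _) (le_ciSup hbdd hS.some)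
  -- key bound: ‖T z z‖ ≤ M * ‖z‖^2
  have hdiag : ∀ z : X, ‖T z z‖ ≤ M * ‖z‖ ^ 2 := by
    intro z
    rcases eq_or_ne z 0 with rfl | hz
    · simp
    · have hnz : ‖z‖ ≠ 0 := norm_ne_zero_iff.mpr hz
      have hcnz : (‖z‖ : ℂ) ≠ 0 := by exact_mod_cast hnz
      set u : X := (‖z‖ : ℂ)⁻¹ • z with hu
      have hu1 : ‖u‖ = 1 := by
        rw [hu, norm_smul, norm_inv, Complex.norm_real, norm_norm, inv_mul_cancel₀ hnz]
      have hzu : z = (‖z‖ : ℂ) • u := by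
        rw [hu, smul_smul, mul_inv_cancel₀ hcnz, one_smul]
      have heq : T z z = (‖z‖ : ℂ) ^ 2 • T u u := by
        conv_lhs => rw [hzu]
        simp [map_smul, smul_smul, sq]
        norm_cast
      rw [heq, norm_smul]
      have : ‖T u u‖ ≤ M := le_ciSup hbdd (⟨u, hu1⟩ : S)
      calc ‖(‖z‖ : ℂ) ^ 2‖ * ‖T u u‖ = ‖z‖ ^ 2 * ‖T u u‖ := by
            norm_num [Complex.norm_real]
        _ ≤ ‖z‖ ^ 2 * M := by
            exact mul_le_mul_of_nonneg_left this (by positivity)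
        _ = M * ‖z‖ ^ 2 := mul_comm _ _
  -- polarization bound: for unit x y, ‖T x y‖ ≤ M
  have hbound : ∀ x y : S, ‖T x.1 y.1‖ ≤ M := by
    rintro ⟨x, hx⟩ ⟨y, hy⟩
    have hpol : (4 : ℂ) • T x y = T (x + y) (x + y) - T (x - y) (x - y) := by
      simp only [map_add, map_sub, ContinuousLinearMap.add_apply,
        ContinuousLinearMap.sub_apply]
      rw [hT y x]
      ring_nf
      module
    have h4 : (4 : ℝ) * ‖T x y‖ ≤ 4 * M := by
      have := norm_sub_le (T (x + y) (x + y)) (T (x - y) (x - y))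
      calc (4:ℝ) * ‖T x y‖ = ‖(4 : ℂ) • T x y‖ := by
            rw [norm_smul]; norm_num
        _ = ‖T (x + y) (x + y) - T (x - y) (x - y)‖ := by rw [hpol]
        _ ≤ ‖T (x + y) (x + y)‖ + ‖T (x - y) (x - y)‖ := norm_sub_le _ _
        _ ≤ M * ‖x + y‖ ^ 2 + M * ‖x - y‖ ^ 2 := add_le_add (hdiag _) (hdiag _)
        _ = M * (‖x + y‖ * ‖x + y‖ + ‖x - y‖ * ‖x - y‖) := by ring
        _ = M * (2 * (‖x‖ * ‖x‖ + ‖y‖ * ‖y‖)) := by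
            simp only [← sq]
            rw [parallelogram_law_with_norm ℂ x y]
        _ = 4 * M := by rw [hx, hy]; ring
    linarith
  apply le_antisymm
  · apply ciSup_le
    intro x
    apply ciSup_le
    intro y
    exact hbound x y
  · apply ciSup_le
    intro x
    have h1 : BddAbove (Set.range fun y : S => ‖T x.1 y.1‖) := by
      refine ⟨M, ?_⟩
      rintro r ⟨y, rfl⟩
      exact hbound x y
    have h2 : BddAbove (Set.range fun x : S => ⨆ y : S, ‖T x.1 y.1‖) := by
      refine ⟨M, ?_⟩
      rintro r ⟨z, rfl⟩
      exact ciSup_le (hbound z)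
    calc ‖T x.1 x.1‖ ≤ ⨆ y : S, ‖T x.1 y.1‖ := le_ciSup h1 x
      _ ≤ ⨆ x : S, ⨆ y : S, ‖T x.1 y.1‖ := le_ciSup h2 x
end
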